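/- arXiv:1409.5404 — 11 statements merged into one kernel-verified Lean document; each statement's English description precedes it below -/
import Mathlib

section
/- Let p = 3, V = (ZMod 3) × (ZMod 3), V₀ its set of nonzero elements, and let φ : ℤ[V₀] → ℤ[V₀] be the additive map sending the generator at v to the sum of the generators at all u ∈ V₀ with ω(v,u) = 1. Then φ is injective, the range of φ is contained in K = ker s, and the range of φ has index 3 as a subgroup of K. -/
open Finset

namespace Stmt5Aux

abbrev V := ZMod 3 × ZMod 3
abbrev T := {v : V // v ≠ 0}

def a (u v : T) : ℤ :=
  (if (v : V).1 * (u : V).2 - (v : V).2 * (u : V).1 = 2 then 1 else 0)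
    - (if (v : V).1 * (u : V).2 - (v : V).2 * (u : V).1 = 0 then 1 else 0)

def c (v : T) : ZMod 3 :=
  if (v : V).1 = 1 then (v : V).2
  else if (v : V).1 = 2 then (v : V).2 + 1
  else 2 * (v : V).2 ^ 2 + (v : V).2

lemma L1 : ∀ v : T, (∑ u ∈ Finset.univ.filter (fun u : T =>
    (v : V).1 * (u : V).2 - (v : V).2 * (u : V).1 = 1), (u : V)) = 0 := by decide

lemma L3 : ∀ v : T, (∑ u ∈ Finset.univ.filter (fun u : T =>
    (v : V).1 * (u : V).2 - (v : V).2 * (u : V).1 = 1), c u) = 0 := by decide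

lemma coef1 : ∀ v w : T, (∑ u ∈ Finset.univ.filter (fun u : T =>
    (v : V).1 * (u : V).2 - (v : V).2 * (u : V).1 = 1), a w u) = if v = w then 3 else 0 := by
  decide

lemma coef2 : ∀ v w : T, (∑ x : T, a x v * ∑ x1 : T,
    if (x : V).1 * (x1 : V).2 - (x : V).2 * (x1 : V).1 = 1
      then (if x1 = w then (1:ℤ) else 0) else 0) = if v = w then 3 else 0 := by decide

lemma L4 : ∀ u v : T, ((a u v : ℤ) : ZMod 3)
    = ((u : V).2 + 2) * (v : V).1 + (2 * (u : V).1 + 2) * (v : V).2 + c v := by decide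

noncomputable def φ₀ : (T →₀ ℤ) →ₗ[ℤ] (T →₀ ℤ) :=
  Finsupp.linearCombination ℤ (fun v : T =>
    ∑ u ∈ Finset.univ.filter (fun u : T =>
        (v : V).1 * (u : V).2 - (v : V).2 * (u : V).1 = 1),
      Finsupp.single u (1 : ℤ))

noncomputable def s₀ : (T →₀ ℤ) →ₗ[ℤ] V :=
  Finsupp.linearCombination ℤ (fun v : T => (v : V))

noncomputable def ψ : (T →₀ ℤ) →ₗ[ℤ] (T →₀ ℤ) :=
  Finsupp.linearCombination ℤ (fun v : T => ∑ u : T, Finsupp.single u (a u v))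

noncomputable def g : (T →₀ ℤ) →ₗ[ℤ] ZMod 3 := Finsupp.linearCombination ℤ c

lemma comp1 : ψ.comp φ₀ = (3 : ℤ) • LinearMap.id := by
  ext v w
  simp only [LinearMap.comp_apply, Finsupp.lsingle_apply, φ₀, ψ,
    Finsupp.linearCombination_single, one_smul, map_sum, Finsupp.finset_sum_apply,
    LinearMap.smul_apply, LinearMap.id_apply, Finsupp.smul_apply, Finsupp.single_apply,
    Finset.sum_ite_eq', Finset.mem_univ, if_true]
  rw [coef1 v w]
  split <;> simp

lemma comp2 : φ₀.comp ψ = (3 : ℤ) • LinearMap.id := by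
  ext v w
  simp only [LinearMap.comp_apply, Finsupp.lsingle_apply, φ₀, ψ,
    Finsupp.linearCombination_single, one_smul, map_sum, map_smul,
    Finsupp.finset_sum_apply, Finset.sum_apply', Finsupp.smul_apply,
    Finsupp.single_apply, LinearMap.smul_apply, LinearMap.id_apply, smul_eq_mul, mul_one,
    Finset.sum_ite_eq', Finset.mem_univ, if_true, Finset.sum_filter,
    apply_ite (fun f : T →₀ ℤ => f w), Finsupp.coe_zero, Pi.zero_apply]
  rw [coef2 v w]
  split <;> simp

lemma sφ : s₀.comp φ₀ = 0 := by
  apply Finsupp.lhom_ext'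
  intro v
  apply LinearMap.ext_ring
  simp only [LinearMap.comp_apply, Finsupp.lsingle_apply, φ₀,
    Finsupp.linearCombination_single, one_smul, map_sum, LinearMap.zero_comp,
    LinearMap.zero_apply, s₀]
  exact L1 v

lemma gφ : g.comp φ₀ = 0 := by
  apply Finsupp.lhom_ext'
  intro v
  apply LinearMap.ext_ring
  simp only [LinearMap.comp_apply, Finsupp.lsingle_apply, φ₀,
    Finsupp.linearCombination_single, one_smul, map_sum, LinearMap.zero_comp,
    LinearMap.zero_apply, g]
  exact L3 v

lemma psi_apply (x : T →₀ ℤ) (u : T) : ψ x u = ∑ v ∈ x.support, x v * a u v := by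
  rw [ψ, Finsupp.linearCombination_apply, Finsupp.sum_apply]
  refine Finset.sum_congr rfl fun v _ => ?_
  simp [Finsupp.single_apply, Finset.sum_ite_eq', Finsupp.finset_sum_apply]

lemma hard (x : T →₀ ℤ) (hx : s₀ x = 0) (hg : g x = 0) (u : T) :
    ((ψ x u : ℤ) : ZMod 3) = 0 := by
  have h1 : (∑ v ∈ x.support, ((x v : ZMod 3) * (v : V).1)) = 0 := by
    have := congrArg Prod.fst hx
    rw [s₀, Finsupp.linearCombination_apply, Finsupp.sum, Prod.fst_sum] at this
    simpa [zsmul_eq_mul] using this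
  have h2 : (∑ v ∈ x.support, ((x v : ZMod 3) * (v : V).2)) = 0 := by
    have := congrArg Prod.snd hx
    rw [s₀, Finsupp.linearCombination_apply, Finsupp.sum, Prod.snd_sum] at this
    simpa [zsmul_eq_mul] using this
  have h3 : (∑ v ∈ x.support, ((x v : ZMod 3) * c v)) = 0 := by
    rw [g, Finsupp.linearCombination_apply, Finsupp.sum] at hg
    simpa [zsmul_eq_mul] using hg
  rw [psi_apply]
  push_cast
  calc (∑ v ∈ x.support, ((x v : ZMod 3) * ((a u v : ℤ) : ZMod 3)))
      = ∑ v ∈ x.support, ((x v : ZMod 3) *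
          (((u : V).2 + 2) * (v : V).1 + (2 * (u : V).1 + 2) * (v : V).2 + c v)) := by
        exact Finset.sum_congr rfl fun v _ => by rw [L4 u v]
    _ = ((u : V).2 + 2) * (∑ v ∈ x.support, ((x v : ZMod 3) * (v : V).1))
        + (2 * (u : V).1 + 2) * (∑ v ∈ x.support, ((x v : ZMod 3) * (v : V).2))
        + (∑ v ∈ x.support, ((x v : ZMod 3) * c v)) := by
        rw [Finset.mul_sum, Finset.mul_sum, ← Finset.sum_add_distrib, ← Finset.sum_add_distrib]
        exact Finset.sum_congr rfl fun v _ => by ring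
    _ = 0 := by rw [h1, h2, h3]; ring

end Stmt5Aux

open Stmt5Aux

/-- For `p = 3`, the map `φ : ℤ[V₀] → ℤ[V₀]` sending the generator at `v` to the sum of
the generators at all `u` with `ω(v,u) = 1` is injective, its range is contained in
`K = ker s` (where `s` is the summation map), and its range has index `3` in `K`. -/
theorem stmt5
    (s : ({v : ZMod 3 × ZMod 3 // v ≠ 0} →₀ ℤ) →ₗ[ℤ] ZMod 3 × ZMod 3)
    (hs : s = Finsupp.linearCombination ℤ
      (fun v : {v : ZMod 3 × ZMod 3 // v ≠ 0} => (v : ZMod 3 × ZMod 3)))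
    (φ : ({v : ZMod 3 × ZMod 3 // v ≠ 0} →₀ ℤ) →ₗ[ℤ] ({v : ZMod 3 × ZMod 3 // v ≠ 0} →₀ ℤ))
    (hφ : φ = Finsupp.linearCombination ℤ
      (fun v : {v : ZMod 3 × ZMod 3 // v ≠ 0} =>
        ∑ u ∈ Finset.univ.filter (fun u : {v : ZMod 3 × ZMod 3 // v ≠ 0} =>
            (v : ZMod 3 × ZMod 3).1 * (u : ZMod 3 × ZMod 3).2
              - (v : ZMod 3 × ZMod 3).2 * (u : ZMod 3 × ZMod 3).1 = 1),
          Finsupp.single u (1 : ℤ))) :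
    Function.Injective φ ∧
    LinearMap.range φ ≤ LinearMap.ker s ∧
    ((LinearMap.range φ).toAddSubgroup.addSubgroupOf
        (LinearMap.ker s).toAddSubgroup).index = 3 := by
  have hφ0 : φ = φ₀ := by rw [hφ]; rfl
  have hs0 : s = s₀ := by rw [hs]; rfl
  subst hφ0 hs0
  have hinj : Function.Injective φ₀ := by
    intro x y hxy
    have h3 : (3:ℤ) • x = (3:ℤ) • y := by
      have h := congrArg ψ hxy
      rwa [← LinearMap.comp_apply, ← LinearMap.comp_apply, comp1, LinearMap.smul_apply,
        LinearMap.smul_apply, LinearMap.id_apply, LinearMap.id_apply] at h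
    exact smul_right_injective _ (by norm_num : (3:ℤ) ≠ 0) h3
  have hle : LinearMap.range φ₀ ≤ LinearMap.ker s₀ := by
    rintro _ ⟨y, rfl⟩
    rw [LinearMap.mem_ker, ← LinearMap.comp_apply, sφ, LinearMap.zero_apply]
  refine ⟨hinj, hle, ?_⟩
  set K : AddSubgroup (T →₀ ℤ) := (LinearMap.ker s₀).toAddSubgroup with hK
  let f : K →+ ZMod 3 := g.toAddMonoidHom.comp K.subtype
  have hker : f.ker = (LinearMap.range φ₀).toAddSubgroup.addSubgroupOf K := by
    ext ⟨x, hx⟩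
    simp only [AddMonoidHom.mem_ker, AddSubgroup.mem_addSubgroupOf, f,
      AddMonoidHom.comp_apply, AddSubgroup.coe_subtype, LinearMap.toAddMonoidHom_coe,
      Submodule.mem_toAddSubgroup, LinearMap.mem_range]
    constructor
    · intro hgx
      have hx' : s₀ x = 0 := by
        have := hx
        rw [hK, Submodule.mem_toAddSubgroup, LinearMap.mem_ker] at this
        exact this
      have hdvd : ∀ u, (3:ℤ) ∣ ψ x u := fun u => by
        have h := hard x hx' hgx u
        rwa [ZMod.intCast_zmod_eq_zero_iff_dvd] at h
      refine ⟨Finsupp.mapRange (· / 3) (by simp) (ψ x), ?_⟩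
      have hy : (3:ℤ) • Finsupp.mapRange (· / 3 : ℤ → ℤ) (by simp) (ψ x) = ψ x := by
        ext u
        simp only [Finsupp.smul_apply, Finsupp.mapRange_apply, smul_eq_mul]
        exact Int.mul_ediv_cancel' (hdvd u)
      have h1 : φ₀ (ψ x) = (3:ℤ) • x := by
        rw [← LinearMap.comp_apply, comp2, LinearMap.smul_apply, LinearMap.id_apply]
      have h2 : (3:ℤ) • φ₀ (Finsupp.mapRange (· / 3 : ℤ → ℤ) (by simp) (ψ x))
          = (3:ℤ) • x := by
        rw [← map_smul, hy, h1]
      exact smul_right_injective _ (by norm_num : (3:ℤ) ≠ 0) h2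
    · rintro ⟨y, rfl⟩
      rw [← LinearMap.comp_apply, gφ, LinearMap.zero_apply]
  have hkmem : (Finsupp.single (⟨((1:ZMod 3),(0:ZMod 3)), by decide⟩ : T) (1:ℤ)
      + Finsupp.single ⟨((0:ZMod 3),(1:ZMod 3)), by decide⟩ 1
      - Finsupp.single ⟨((1:ZMod 3),(1:ZMod 3)), by decide⟩ 1) ∈ K := by
    rw [hK, Submodule.mem_toAddSubgroup, LinearMap.mem_ker]
    rw [map_sub, map_add]
    simp only [s₀, Finsupp.linearCombination_single, one_smul]
    decide
  set k : K := ⟨_, hkmem⟩ with hk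
  have hfk : f k = 2 := by
    have hfk0 : f k = g ((Finsupp.single (⟨((1:ZMod 3),(0:ZMod 3)), by decide⟩ : T) (1:ℤ)
        + Finsupp.single ⟨((0:ZMod 3),(1:ZMod 3)), by decide⟩ 1)
        - Finsupp.single ⟨((1:ZMod 3),(1:ZMod 3)), by decide⟩ 1) := rfl
    rw [hfk0, map_sub, map_add]
    simp only [g, Finsupp.linearCombination_single, one_smul]
    decide
  have hsurj : Function.Surjective f := by
    have hz : ∀ z : ZMod 3, z = 0 ∨ z = 2 ∨ z = 2 + 2 := by decide
    intro z
    rcases hz z with rfl | rfl | rfl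
    · exact ⟨0, map_zero f⟩
    · exact ⟨k, hfk⟩
    · exact ⟨k + k, by rw [map_add, hfk]⟩
  rw [← hker, AddSubgroup.index_ker, AddMonoidHom.range_eq_top.mpr hsurj]
  rw [Nat.card_congr AddSubgroup.topEquiv.toEquiv, Nat.card_zmod]
end

section
/- Let p = 3, V = (ZMod 3) × (ZMod 3), V₀ its set of nonzero elements. Let φ : ℤ[V₀] → ℤ[V₀] be the additive map sending the generator at v to the sum of the generators at all u ∈ V₀ with ω(v,u) = 1, let s : ℤ[V₀] → V be the additive map sending the generator at v to v, and let π : ℤ[V₀] → ℤ[P(V)] be the map induced by sending each nonzero vector to the line it spans. Then the image under φ of the kernel of π is exactly (ker s) ∩ (ker π); in particular φ restricts to a bijection from ker π onto (ker s) ∩ (ker π). -/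
open Finset

abbrev T3 := {v : ZMod 3 × ZMod 3 // v ≠ 0}

def tneg (v : T3) : T3 := ⟨-v.1, neg_ne_zero.mpr v.2⟩

def e1 : T3 := ⟨(1,0), by decide⟩
def e2 : T3 := ⟨(0,1), by decide⟩
def e3 : T3 := ⟨(1,1), by decide⟩
def e4 : T3 := ⟨(1,2), by decide⟩

lemma univ_T3 : (univ : Finset T3) =
    {e1, e2, e3, e4, tneg e1, tneg e2, tneg e3, tneg e4} := by decide

lemma sum_T3 {M : Type*} [AddCommMonoid M] (f : T3 → M) :
    ∑ v, f v = f e1 + (f e2 + (f e3 + (f e4 +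
      (f (tneg e1) + (f (tneg e2) + (f (tneg e3) + f (tneg e4))))))) := by
  rw [univ_T3]
  rw [Finset.sum_insert (by decide), Finset.sum_insert (by decide),
    Finset.sum_insert (by decide), Finset.sum_insert (by decide),
    Finset.sum_insert (by decide), Finset.sum_insert (by decide),
    Finset.sum_insert (by decide), Finset.sum_singleton]

lemma units_zmod3 (u : (ZMod 3)ˣ) : (u : ZMod 3) = 1 ∨ (u : ZMod 3) = -1 := by revert u; decide

lemma mk_eq_iff (a b : T3) :
    Projectivization.mk (ZMod 3) (a : ZMod 3 × ZMod 3) a.prop =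
      Projectivization.mk (ZMod 3) (b : ZMod 3 × ZMod 3) b.prop ↔ (a = b ∨ a = tneg b) := by
  rw [Projectivization.mk_eq_mk_iff]
  constructor
  · rintro ⟨u, hu⟩
    rcases units_zmod3 u with h | h <;> rw [Units.smul_def, h] at hu
    · left; exact Subtype.ext (by simpa using hu.symm)
    · right; exact Subtype.ext (by simp [tneg, ← hu])
  · rintro (rfl | rfl)
    · exact ⟨1, by simp⟩
    · exact ⟨-1, by simp [tneg, Units.smul_def]⟩

noncomputable def πm : (T3 →₀ ℤ) →ₗ[ℤ] (Projectivization (ZMod 3) (ZMod 3 × ZMod 3) →₀ ℤ) :=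
  Finsupp.lmapDomain ℤ ℤ
    (fun v : T3 => Projectivization.mk (ZMod 3) (v : ZMod 3 × ZMod 3) v.prop)

lemma tneg_ne (b : T3) : b ≠ tneg b := by revert b; decide

lemma pi_apply (x : T3 →₀ ℤ) (b : T3) :
    πm x (Projectivization.mk (ZMod 3) (b : ZMod 3 × ZMod 3) b.prop) = x b + x (tneg b) := by
  classical
  rw [πm, Finsupp.lmapDomain_apply, Finsupp.mapDomain, Finsupp.sum_apply,
    Finsupp.sum_fintype _ _ (by simp)]
  have : ∀ v : T3, Finsupp.single (Projectivization.mk (ZMod 3) (v : ZMod 3 × ZMod 3) v.prop)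
      (x v) (Projectivization.mk (ZMod 3) (b : ZMod 3 × ZMod 3) b.prop)
      = (if v = b then x v else 0) + (if v = tneg b then x v else 0) := by
    intro v
    rw [Finsupp.single_apply]
    by_cases h1 : v = b <;> by_cases h2 : v = tneg b
    · exact absurd (h1 ▸ h2) (tneg_ne b)
    · simp [h1, h2, mk_eq_iff, tneg_ne b, (tneg_ne b).symm]
    · simp [h1, h2, mk_eq_iff, tneg_ne b, (tneg_ne b).symm]
    · simp [h1, h2, mk_eq_iff]
  rw [Finset.sum_congr rfl (fun v _ => this v), Finset.sum_add_distrib,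
    Finset.sum_ite_eq' univ b (fun v => x v), Finset.sum_ite_eq' univ (tneg b) (fun v => x v)]
  simp

lemma ker_pi (x : T3 →₀ ℤ) : πm x = 0 ↔ ∀ b : T3, x b + x (tneg b) = 0 := by
  constructor
  · intro h b
    rw [← pi_apply, h]; rfl
  · intro h
    ext ℓ
    have hrep := Projectivization.mk_rep ℓ
    set b : T3 := ⟨ℓ.rep, Projectivization.rep_nonzero ℓ⟩ with hb
    have : ℓ = Projectivization.mk (ZMod 3) (b : ZMod 3 × ZMod 3) b.prop := hrep.symm
    rw [this, pi_apply, h b]; rfl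

def ωK (v u : T3) : ℤ :=
  if (v : ZMod 3 × ZMod 3).1 * (u : ZMod 3 × ZMod 3).2
      - (v : ZMod 3 × ZMod 3).2 * (u : ZMod 3 × ZMod 3).1 = 1 then 1 else 0

noncomputable def φm : (T3 →₀ ℤ) →ₗ[ℤ] (T3 →₀ ℤ) :=
  Finsupp.linearCombination ℤ
    (fun v : T3 => ∑ u ∈ Finset.univ.filter (fun u : T3 =>
        (v : ZMod 3 × ZMod 3).1 * (u : ZMod 3 × ZMod 3).2
          - (v : ZMod 3 × ZMod 3).2 * (u : ZMod 3 × ZMod 3).1 = 1),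
      Finsupp.single u (1 : ℤ))

noncomputable def sm : (T3 →₀ ℤ) →ₗ[ℤ] ZMod 3 × ZMod 3 :=
  Finsupp.linearCombination ℤ (fun v : T3 => (v : ZMod 3 × ZMod 3))

lemma s_apply (x : T3 →₀ ℤ) : sm x = ∑ v : T3, x v • (v : ZMod 3 × ZMod 3) := by
  rw [sm, Finsupp.linearCombination_apply, Finsupp.sum_fintype _ _ (by simp)]

lemma phi_apply (x : T3 →₀ ℤ) (u : T3) : φm x u = ∑ v : T3, x v * ωK v u := by
  classical
  rw [φm, Finsupp.linearCombination_apply, Finsupp.sum_fintype _ _ (by simp),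
    Finsupp.finset_sum_apply]
  refine Finset.sum_congr rfl (fun v _ => ?_)
  rw [Finsupp.smul_apply, Finsupp.finset_sum_apply]
  rw [Finset.sum_congr rfl (fun w _ => Finsupp.single_apply (a := w) (b := (1:ℤ)))]
  rw [Finset.sum_ite_eq' _ u (fun _ => (1:ℤ))]
  simp [ωK, smul_eq_mul, Finset.mem_filter]

lemma omega_sum_zero : ∀ v : T3, ∑ u : T3, ωK v u • (u : ZMod 3 × ZMod 3) = 0 := by decide

-- Claim B
lemma s_phi (x : T3 →₀ ℤ) : sm (φm x) = 0 := by
  rw [s_apply]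
  have : ∀ u : T3, (φm x) u • (u : ZMod 3 × ZMod 3)
      = ∑ v : T3, x v • (ωK v u • (u : ZMod 3 × ZMod 3)) := by
    intro u
    rw [phi_apply, Finset.sum_smul]
    exact Finset.sum_congr rfl (fun v _ => mul_smul (x v) (ωK v u) _)
  rw [Finset.sum_congr rfl (fun u _ => this u), Finset.sum_comm]
  have : ∀ v : T3, ∑ u : T3, x v • (ωK v u • (u : ZMod 3 × ZMod 3)) = 0 := by
    intro v
    rw [← Finset.smul_sum, omega_sum_zero v, smul_zero]
  rw [Finset.sum_congr rfl (fun v _ => this v), Finset.sum_const_zero]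

lemma tneg_tneg : ∀ v : T3, tneg (tneg v) = v := by decide

lemma omega_pair : ∀ v b : T3,
    ωK (tneg v) b + ωK (tneg v) (tneg b) = ωK v b + ωK v (tneg b) := by decide

-- Claim A
lemma phi_ker_pi {x : T3 →₀ ℤ} (hx : ∀ b : T3, x b + x (tneg b) = 0) (b : T3) :
    φm x b + φm x (tneg b) = 0 := by
  rw [phi_apply, phi_apply, ← Finset.sum_add_distrib]
  have h1 : ∀ v : T3, x v * ωK v b + x v * ωK v (tneg b)
      = x v * (ωK v b + ωK v (tneg b)) := fun v => (mul_add _ _ _).symm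
  rw [Finset.sum_congr rfl (fun v _ => h1 v)]
  set S := ∑ v : T3, x v * (ωK v b + ωK v (tneg b)) with hS
  have hbij : Function.Bijective tneg :=
    Function.Involutive.bijective (fun v => tneg_tneg v)
  have h2 : S = ∑ v : T3, x (tneg v) * (ωK (tneg v) b + ωK (tneg v) (tneg b)) :=
    (Fintype.sum_bijective tneg hbij _ _ (fun v => rfl)).symm
  have h3 : S = -S := by
    calc S = ∑ v : T3, x (tneg v) * (ωK (tneg v) b + ωK (tneg v) (tneg b)) := h2
    _ = ∑ v : T3, -(x v * (ωK v b + ωK v (tneg b))) := by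
        refine Finset.sum_congr rfl (fun v _ => ?_)
        have hv : x (tneg v) = -x v := by linarith [hx v]
        rw [hv, omega_pair v b]; ring
    _ = -S := by rw [hS, Finset.sum_neg_distrib]
  linarith

lemma wk1 : ωK (e1) (e1) = 0 := by decide
lemma wk2 : ωK (e1) (e2) = 1 := by decide
lemma wk3 : ωK (e1) (e3) = 1 := by decide
lemma wk4 : ωK (e1) (e4) = 0 := by decide
lemma wk5 : ωK (e1) (tneg e1) = 0 := by decide
lemma wk6 : ωK (e1) (tneg e2) = 0 := by decide
lemma wk7 : ωK (e1) (tneg e3) = 0 := by decide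
lemma wk8 : ωK (e1) (tneg e4) = 1 := by decide
lemma wk9 : ωK (e2) (e1) = 0 := by decide
lemma wk10 : ωK (e2) (e2) = 0 := by decide
lemma wk11 : ωK (e2) (e3) = 0 := by decide
lemma wk12 : ωK (e2) (e4) = 0 := by decide
lemma wk13 : ωK (e2) (tneg e1) = 1 := by decide
lemma wk14 : ωK (e2) (tneg e2) = 0 := by decide
lemma wk15 : ωK (e2) (tneg e3) = 1 := by decide
lemma wk16 : ωK (e2) (tneg e4) = 1 := by decide
lemma wk17 : ωK (e3) (e1) = 0 := by decide
lemma wk18 : ωK (e3) (e2) = 1 := by decide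
lemma wk19 : ωK (e3) (e3) = 0 := by decide
lemma wk20 : ωK (e3) (e4) = 1 := by decide
lemma wk21 : ωK (e3) (tneg e1) = 1 := by decide
lemma wk22 : ωK (e3) (tneg e2) = 0 := by decide
lemma wk23 : ωK (e3) (tneg e3) = 0 := by decide
lemma wk24 : ωK (e3) (tneg e4) = 0 := by decide
lemma wk25 : ωK (e4) (e1) = 1 := by decide
lemma wk26 : ωK (e4) (e2) = 1 := by decide
lemma wk27 : ωK (e4) (e3) = 0 := by decide
lemma wk28 : ωK (e4) (e4) = 0 := by decide
lemma wk29 : ωK (e4) (tneg e1) = 0 := by decide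
lemma wk30 : ωK (e4) (tneg e2) = 0 := by decide
lemma wk31 : ωK (e4) (tneg e3) = 1 := by decide
lemma wk32 : ωK (e4) (tneg e4) = 0 := by decide
lemma wk33 : ωK (tneg e1) (e1) = 0 := by decide
lemma wk34 : ωK (tneg e1) (e2) = 0 := by decide
lemma wk35 : ωK (tneg e1) (e3) = 0 := by decide
lemma wk36 : ωK (tneg e1) (e4) = 1 := by decide
lemma wk37 : ωK (tneg e1) (tneg e1) = 0 := by decide
lemma wk38 : ωK (tneg e1) (tneg e2) = 1 := by decide
lemma wk39 : ωK (tneg e1) (tneg e3) = 1 := by decide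
lemma wk40 : ωK (tneg e1) (tneg e4) = 0 := by decide
lemma wk41 : ωK (tneg e2) (e1) = 1 := by decide
lemma wk42 : ωK (tneg e2) (e2) = 0 := by decide
lemma wk43 : ωK (tneg e2) (e3) = 1 := by decide
lemma wk44 : ωK (tneg e2) (e4) = 1 := by decide
lemma wk45 : ωK (tneg e2) (tneg e1) = 0 := by decide
lemma wk46 : ωK (tneg e2) (tneg e2) = 0 := by decide
lemma wk47 : ωK (tneg e2) (tneg e3) = 0 := by decide
lemma wk48 : ωK (tneg e2) (tneg e4) = 0 := by decide
lemma wk49 : ωK (tneg e3) (e1) = 1 := by decide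
lemma wk50 : ωK (tneg e3) (e2) = 0 := by decide
lemma wk51 : ωK (tneg e3) (e3) = 0 := by decide
lemma wk52 : ωK (tneg e3) (e4) = 0 := by decide
lemma wk53 : ωK (tneg e3) (tneg e1) = 0 := by decide
lemma wk54 : ωK (tneg e3) (tneg e2) = 1 := by decide
lemma wk55 : ωK (tneg e3) (tneg e3) = 0 := by decide
lemma wk56 : ωK (tneg e3) (tneg e4) = 1 := by decide
lemma wk57 : ωK (tneg e4) (e1) = 0 := by decide
lemma wk58 : ωK (tneg e4) (e2) = 0 := by decide
lemma wk59 : ωK (tneg e4) (e3) = 1 := by decide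
lemma wk60 : ωK (tneg e4) (e4) = 0 := by decide
lemma wk61 : ωK (tneg e4) (tneg e1) = 1 := by decide
lemma wk62 : ωK (tneg e4) (tneg e2) = 1 := by decide
lemma wk63 : ωK (tneg e4) (tneg e3) = 0 := by decide
lemma wk64 : ωK (tneg e4) (tneg e4) = 0 := by decide

lemma all_T3 : ∀ a : T3, a = e1 ∨ a = e2 ∨ a = e3 ∨ a = e4 ∨
    a = tneg e1 ∨ a = tneg e2 ∨ a = tneg e3 ∨ a = tneg e4 := by decide

-- Claim C
lemma phi_inj {x : T3 →₀ ℤ} (hx : ∀ b : T3, x b + x (tneg b) = 0) (h0 : φm x = 0) :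
    x = 0 := by
  have key : ∀ u : T3, ∑ v : T3, x v * ωK v u = 0 := by
    intro u; rw [← phi_apply, h0]; rfl
  have h1 := key e1
  have h2 := key e2
  have h3 := key e3
  have h4 := key e4
  rw [sum_T3] at h1 h2 h3 h4
  have n1 : x (tneg e1) = -x e1 := by linarith [hx e1]
  have n2 : x (tneg e2) = -x e2 := by linarith [hx e2]
  have n3 : x (tneg e3) = -x e3 := by linarith [hx e3]
  have n4 : x (tneg e4) = -x e4 := by linarith [hx e4]
  rw [n1, n2, n3, n4] at h1 h2 h3 h4
  simp only [wk1, wk2, wk3, wk4, wk5, wk6, wk7, wk8, wk9, wk10, wk11, wk12, wk13, wk14, wk15, wk16, wk17, wk18, wk19, wk20, wk21, wk22, wk23, wk24, wk25, wk26, wk27, wk28, wk29, wk30, wk31, wk32, wk33, wk34, wk35, wk36, wk37, wk38, wk39, wk40, wk41, wk42, wk43, wk44, wk45, wk46, wk47, wk48, wk49, wk50, wk51, wk52, wk53, wk54, wk55, wk56, wk57, wk58, wk59, wk60, wk61, wk62, wk63, wk64] at h1 h2 h3 h4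
  ext a
  rcases all_T3 a with rfl | rfl | rfl | rfl | rfl | rfl | rfl | rfl <;>
    simp only [Finsupp.coe_zero, Pi.zero_apply] <;> omega
lemma ne_p1_p2 : (e1 : T3) ≠ (e2) := by decide
lemma ne_p1_p3 : (e1 : T3) ≠ (e3) := by decide
lemma ne_p1_p4 : (e1 : T3) ≠ (e4) := by decide
lemma ne_p1_q1 : (e1 : T3) ≠ (tneg e1) := by decide
lemma ne_p1_q2 : (e1 : T3) ≠ (tneg e2) := by decide
lemma ne_p1_q3 : (e1 : T3) ≠ (tneg e3) := by decide
lemma ne_p1_q4 : (e1 : T3) ≠ (tneg e4) := by decide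
lemma ne_p2_p1 : (e2 : T3) ≠ (e1) := by decide
lemma ne_p2_p3 : (e2 : T3) ≠ (e3) := by decide
lemma ne_p2_p4 : (e2 : T3) ≠ (e4) := by decide
lemma ne_p2_q1 : (e2 : T3) ≠ (tneg e1) := by decide
lemma ne_p2_q2 : (e2 : T3) ≠ (tneg e2) := by decide
lemma ne_p2_q3 : (e2 : T3) ≠ (tneg e3) := by decide
lemma ne_p2_q4 : (e2 : T3) ≠ (tneg e4) := by decide
lemma ne_p3_p1 : (e3 : T3) ≠ (e1) := by decide
lemma ne_p3_p2 : (e3 : T3) ≠ (e2) := by decide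
lemma ne_p3_p4 : (e3 : T3) ≠ (e4) := by decide
lemma ne_p3_q1 : (e3 : T3) ≠ (tneg e1) := by decide
lemma ne_p3_q2 : (e3 : T3) ≠ (tneg e2) := by decide
lemma ne_p3_q3 : (e3 : T3) ≠ (tneg e3) := by decide
lemma ne_p3_q4 : (e3 : T3) ≠ (tneg e4) := by decide
lemma ne_p4_p1 : (e4 : T3) ≠ (e1) := by decide
lemma ne_p4_p2 : (e4 : T3) ≠ (e2) := by decide
lemma ne_p4_p3 : (e4 : T3) ≠ (e3) := by decide
lemma ne_p4_q1 : (e4 : T3) ≠ (tneg e1) := by decide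
lemma ne_p4_q2 : (e4 : T3) ≠ (tneg e2) := by decide
lemma ne_p4_q3 : (e4 : T3) ≠ (tneg e3) := by decide
lemma ne_p4_q4 : (e4 : T3) ≠ (tneg e4) := by decide
lemma ne_q1_p1 : (tneg e1 : T3) ≠ (e1) := by decide
lemma ne_q1_p2 : (tneg e1 : T3) ≠ (e2) := by decide
lemma ne_q1_p3 : (tneg e1 : T3) ≠ (e3) := by decide
lemma ne_q1_p4 : (tneg e1 : T3) ≠ (e4) := by decide
lemma ne_q1_q2 : (tneg e1 : T3) ≠ (tneg e2) := by decide
lemma ne_q1_q3 : (tneg e1 : T3) ≠ (tneg e3) := by decide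
lemma ne_q1_q4 : (tneg e1 : T3) ≠ (tneg e4) := by decide
lemma ne_q2_p1 : (tneg e2 : T3) ≠ (e1) := by decide
lemma ne_q2_p2 : (tneg e2 : T3) ≠ (e2) := by decide
lemma ne_q2_p3 : (tneg e2 : T3) ≠ (e3) := by decide
lemma ne_q2_p4 : (tneg e2 : T3) ≠ (e4) := by decide
lemma ne_q2_q1 : (tneg e2 : T3) ≠ (tneg e1) := by decide
lemma ne_q2_q3 : (tneg e2 : T3) ≠ (tneg e3) := by decide
lemma ne_q2_q4 : (tneg e2 : T3) ≠ (tneg e4) := by decide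
lemma ne_q3_p1 : (tneg e3 : T3) ≠ (e1) := by decide
lemma ne_q3_p2 : (tneg e3 : T3) ≠ (e2) := by decide
lemma ne_q3_p3 : (tneg e3 : T3) ≠ (e3) := by decide
lemma ne_q3_p4 : (tneg e3 : T3) ≠ (e4) := by decide
lemma ne_q3_q1 : (tneg e3 : T3) ≠ (tneg e1) := by decide
lemma ne_q3_q2 : (tneg e3 : T3) ≠ (tneg e2) := by decide
lemma ne_q3_q4 : (tneg e3 : T3) ≠ (tneg e4) := by decide
lemma ne_q4_p1 : (tneg e4 : T3) ≠ (e1) := by decide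
lemma ne_q4_p2 : (tneg e4 : T3) ≠ (e2) := by decide
lemma ne_q4_p3 : (tneg e4 : T3) ≠ (e3) := by decide
lemma ne_q4_p4 : (tneg e4 : T3) ≠ (e4) := by decide
lemma ne_q4_q1 : (tneg e4 : T3) ≠ (tneg e1) := by decide
lemma ne_q4_q2 : (tneg e4 : T3) ≠ (tneg e2) := by decide
lemma ne_q4_q3 : (tneg e4 : T3) ≠ (tneg e3) := by decide

noncomputable def yfun (b1 b2 b3 b4 : ℤ) : T3 →₀ ℤ :=
  Finsupp.equivFunOnFinite.symm (fun a =>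
    if a = e1 then b1 else if a = e2 then b2 else if a = e3 then b3 else if a = e4 then b4
    else if a = tneg e1 then -b1 else if a = tneg e2 then -b2
    else if a = tneg e3 then -b3 else -b4)

lemma yfun_p1 (b1 b2 b3 b4 : ℤ) : yfun b1 b2 b3 b4 (e1) = b1 := by
  simp [yfun, Finsupp.equivFunOnFinite_symm_apply_apply]

lemma yfun_p2 (b1 b2 b3 b4 : ℤ) : yfun b1 b2 b3 b4 (e2) = b2 := by
  simp [yfun, Finsupp.equivFunOnFinite_symm_apply_apply, ne_p2_p1]

lemma yfun_p3 (b1 b2 b3 b4 : ℤ) : yfun b1 b2 b3 b4 (e3) = b3 := by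
  simp [yfun, Finsupp.equivFunOnFinite_symm_apply_apply, ne_p3_p1, ne_p3_p2]

lemma yfun_p4 (b1 b2 b3 b4 : ℤ) : yfun b1 b2 b3 b4 (e4) = b4 := by
  simp [yfun, Finsupp.equivFunOnFinite_symm_apply_apply, ne_p4_p1, ne_p4_p2, ne_p4_p3]

lemma yfun_q1 (b1 b2 b3 b4 : ℤ) : yfun b1 b2 b3 b4 (tneg e1) = -b1 := by
  simp [yfun, Finsupp.equivFunOnFinite_symm_apply_apply, ne_q1_p1, ne_q1_p2, ne_q1_p3, ne_q1_p4]

lemma yfun_q2 (b1 b2 b3 b4 : ℤ) : yfun b1 b2 b3 b4 (tneg e2) = -b2 := by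
  simp [yfun, Finsupp.equivFunOnFinite_symm_apply_apply, ne_q2_p1, ne_q2_p2, ne_q2_p3, ne_q2_p4, ne_q2_q1]

lemma yfun_q3 (b1 b2 b3 b4 : ℤ) : yfun b1 b2 b3 b4 (tneg e3) = -b3 := by
  simp [yfun, Finsupp.equivFunOnFinite_symm_apply_apply, ne_q3_p1, ne_q3_p2, ne_q3_p3, ne_q3_p4, ne_q3_q1, ne_q3_q2]

lemma yfun_q4 (b1 b2 b3 b4 : ℤ) : yfun b1 b2 b3 b4 (tneg e4) = -b4 := by
  simp [yfun, Finsupp.equivFunOnFinite_symm_apply_apply, ne_q4_p1, ne_q4_p2, ne_q4_p3, ne_q4_p4, ne_q4_q1, ne_q4_q2, ne_q4_q3]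

lemma tneg_vals :
    ((tneg e1 : T3) : ZMod 3 × ZMod 3) = (2,0) ∧ ((tneg e2 : T3) : ZMod 3 × ZMod 3) = (0,2) ∧
    ((tneg e3 : T3) : ZMod 3 × ZMod 3) = (2,2) ∧ ((tneg e4 : T3) : ZMod 3 × ZMod 3) = (2,1) := by
  decide

-- Claim D
lemma phi_surj {x : T3 →₀ ℤ} (hx : ∀ b : T3, x b + x (tneg b) = 0) (hs0 : sm x = 0) :
    ∃ y : T3 →₀ ℤ, (∀ b : T3, y b + y (tneg b) = 0) ∧ φm y = x := by
  have n1 : x (tneg e1) = -x e1 := by linarith [hx e1]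
  have n2 : x (tneg e2) = -x e2 := by linarith [hx e2]
  have n3 : x (tneg e3) = -x e3 := by linarith [hx e3]
  have n4 : x (tneg e4) = -x e4 := by linarith [hx e4]
  have hsum : ∑ v : T3, x v • (v : ZMod 3 × ZMod 3) = 0 := by rw [← s_apply]; exact hs0
  rw [sum_T3, n1, n2, n3, n4,
    show ((e1 : T3) : ZMod 3 × ZMod 3) = (1,0) from rfl,
    show ((e2 : T3) : ZMod 3 × ZMod 3) = (0,1) from rfl,
    show ((e3 : T3) : ZMod 3 × ZMod 3) = (1,1) from rfl,
    show ((e4 : T3) : ZMod 3 × ZMod 3) = (1,2) from rfl,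
    tneg_vals.1, tneg_vals.2.1, tneg_vals.2.2.1, tneg_vals.2.2.2] at hsum
  have hfst := congrArg Prod.fst hsum
  have hsnd := congrArg Prod.snd hsum
  simp [Prod.smul_mk] at hfst hsnd
  obtain ⟨t1, ht1⟩ : (3:ℤ) ∣ (x e1 + x e3 + x e4) := by
    have h2 := (ZMod.intCast_zmod_eq_zero_iff_dvd (x e1 + x e3 + x e4) 3).mp
      (by push_cast; linear_combination -hfst)
    exact_mod_cast h2
  obtain ⟨t2, ht2⟩ : (3:ℤ) ∣ (x e2 + x e3 - x e4) := by
    have h2 := (ZMod.intCast_zmod_eq_zero_iff_dvd (x e2 + x e3 - x e4) 3).mp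
      (by push_cast; linear_combination -hsnd)
    exact_mod_cast h2
  refine ⟨yfun t2 (-t1) (-t1 + t2 + x e4) (t1 + t2 - x e3), ?_, ?_⟩
  · intro b
    rcases all_T3 b with rfl | rfl | rfl | rfl | rfl | rfl | rfl | rfl <;>
      simp only [tneg_tneg, yfun_p1, yfun_p2, yfun_p3, yfun_p4,
        yfun_q1, yfun_q2, yfun_q3, yfun_q4] <;> ring
  · ext a
    rw [phi_apply, sum_T3]
    simp only [yfun_p1, yfun_p2, yfun_p3, yfun_p4, yfun_q1, yfun_q2, yfun_q3, yfun_q4]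
    rcases all_T3 a with rfl | rfl | rfl | rfl | rfl | rfl | rfl | rfl <;>
      simp only [wk1, wk2, wk3, wk4, wk5, wk6, wk7, wk8, wk9, wk10, wk11, wk12, wk13, wk14,
        wk15, wk16, wk17, wk18, wk19, wk20, wk21, wk22, wk23, wk24, wk25, wk26, wk27, wk28,
        wk29, wk30, wk31, wk32, wk33, wk34, wk35, wk36, wk37, wk38, wk39, wk40, wk41, wk42,
        wk43, wk44, wk45, wk46, wk47, wk48, wk49, wk50, wk51, wk52, wk53, wk54, wk55, wk56,
        wk57, wk58, wk59, wk60, wk61, wk62, wk63, wk64, n1, n2, n3, n4] <;>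
      omega

/-- For `p = 3`: the image under `φ` of `ker π` equals `ker s ∩ ker π`; in particular
`φ` restricts to a bijection from `ker π` onto `ker s ∩ ker π`. -/
theorem stmt6
    (s : ({v : ZMod 3 × ZMod 3 // v ≠ 0} →₀ ℤ) →ₗ[ℤ] ZMod 3 × ZMod 3)
    (hs : s = Finsupp.linearCombination ℤ
      (fun v : {v : ZMod 3 × ZMod 3 // v ≠ 0} => (v : ZMod 3 × ZMod 3)))
    (π : ({v : ZMod 3 × ZMod 3 // v ≠ 0} →₀ ℤ) →ₗ[ℤ]
      (Projectivization (ZMod 3) (ZMod 3 × ZMod 3) →₀ ℤ))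
    (hπ : π = Finsupp.lmapDomain ℤ ℤ
      (fun v : {v : ZMod 3 × ZMod 3 // v ≠ 0} =>
        Projectivization.mk (ZMod 3) (v : ZMod 3 × ZMod 3) v.prop))
    (φ : ({v : ZMod 3 × ZMod 3 // v ≠ 0} →₀ ℤ) →ₗ[ℤ] ({v : ZMod 3 × ZMod 3 // v ≠ 0} →₀ ℤ))
    (hφ : φ = Finsupp.linearCombination ℤ
      (fun v : {v : ZMod 3 × ZMod 3 // v ≠ 0} =>
        ∑ u ∈ Finset.univ.filter (fun u : {v : ZMod 3 × ZMod 3 // v ≠ 0} =>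
            (v : ZMod 3 × ZMod 3).1 * (u : ZMod 3 × ZMod 3).2
              - (v : ZMod 3 × ZMod 3).2 * (u : ZMod 3 × ZMod 3).1 = 1),
          Finsupp.single u (1 : ℤ))) :
    φ '' (LinearMap.ker π : Set _) =
      (LinearMap.ker s : Set _) ∩ (LinearMap.ker π : Set _) ∧
    Set.BijOn φ (LinearMap.ker π : Set _)
      ((LinearMap.ker s : Set _) ∩ (LinearMap.ker π : Set _)) := by
  have hπ' : π = πm := hπ
  have hs' : s = sm := hs
  have hφ' : φ = φm := hφ
  subst hπ' hs' hφ'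
  have himg : (⇑φm) '' (LinearMap.ker πm : Set _) =
      (LinearMap.ker sm : Set _) ∩ (LinearMap.ker πm : Set _) := by
    ext x
    simp only [Set.mem_image, Set.mem_inter_iff, SetLike.mem_coe, LinearMap.mem_ker]
    constructor
    · rintro ⟨y, hy, rfl⟩
      have hy' := (ker_pi y).mp hy
      exact ⟨s_phi y, (ker_pi _).mpr (phi_ker_pi hy')⟩
    · rintro ⟨hxs, hxπ⟩
      obtain ⟨y, hy, hyx⟩ := phi_surj ((ker_pi x).mp hxπ) hxs
      exact ⟨y, (ker_pi y).mpr hy, hyx⟩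
  refine ⟨himg, ?_, ?_, ?_⟩
  · intro x hx
    rw [← himg]; exact Set.mem_image_of_mem _ hx
  · intro a ha b hb hab
    have h1 := (ker_pi a).mp (LinearMap.mem_ker.mp ha)
    have h2 := (ker_pi b).mp (LinearMap.mem_ker.mp hb)
    have hz : φm (a - b) = 0 := by rw [map_sub, hab, sub_self]
    have hk : ∀ u : T3, (a - b) u + (a - b) (tneg u) = 0 := by
      intro u
      simp only [Finsupp.sub_apply]
      linarith [h1 u, h2 u]
    have h0 := phi_inj hk hz
    exact sub_eq_zero.mp h0
  · rw [Set.SurjOn, ← himg]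
end

section
/- Let G be a finite group acting transitively on a nonempty finite type E with cardinality w. For every natural number n, the number of multisets over E of cardinality n that are fixed by the action of every element of G equals 1 if w divides n, and 0 otherwise. -/
lemma fixed_count_const {G E : Type*} [Group G] [Fintype E] [DecidableEq E] [MulAction G E]
    (htrans : ∀ x y : E, ∃ g : G, g • x = y) (m : Multiset E)
    (hfix : ∀ g : G, m.map (fun x => g • x) = m) (x y : E) :
    m.count x = m.count y := by
  obtain ⟨g, hg⟩ := htrans x y
  have : m.count y = (m.map (fun x => g • x)).count y := by rw [hfix g]
  rw [this, ← hg, Multiset.count_map_eq_count' _ _ (MulAction.injective g)]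

lemma fixed_eq_nsmul_univ {G E : Type*} [Group G] [Fintype E] [DecidableEq E] [Nonempty E] [MulAction G E]
    (htrans : ∀ x y : E, ∃ g : G, g • x = y) (m : Multiset E)
    (hfix : ∀ g : G, m.map (fun x => g • x) = m) :
    m = (m.count (Classical.arbitrary E)) • (Finset.univ : Finset E).val := by
  ext a
  rw [Multiset.count_nsmul]
  have : (Finset.univ : Finset E).val.count a = 1 :=
    Multiset.count_eq_one_of_mem Finset.univ.nodup (Finset.mem_univ a)
  rw [this, mul_one, fixed_count_const htrans m hfix a (Classical.arbitrary E)]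

/-- If a finite group `G` acts transitively on a nonempty finite type `E` of cardinality
`w`, then for every `n` the number of `G`-fixed multisets over `E` of cardinality `n`
is `1` if `w ∣ n` and `0` otherwise. -/
theorem stmt7 {G E : Type*} [Group G] [Fintype G] [Fintype E] [Nonempty E]
    [MulAction G E] (htrans : ∀ x y : E, ∃ g : G, g • x = y) (n : ℕ) :
    Nat.card {m : Multiset E // Multiset.card m = n ∧
        ∀ g : G, m.map (fun x => g • x) = m}
      = if Fintype.card E ∣ n then 1 else 0 := by
  haveI := Classical.decEq E
  split_ifs with hdvd
  · obtain ⟨k, hk⟩ := hdvd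
    have hpos : 0 < Fintype.card E := Fintype.card_pos
    refine Nat.card_eq_one_iff_unique.mpr ⟨⟨?_⟩, ⟨⟨k • (Finset.univ : Finset E).val, ?_, ?_⟩⟩⟩
    · rintro ⟨m, hm, hfix⟩ ⟨m', hm', hfix'⟩
      have e1 := fixed_eq_nsmul_univ htrans m hfix
      have e2 := fixed_eq_nsmul_univ htrans m' hfix'
      have hc : Multiset.card ((Finset.univ : Finset E).val) = Fintype.card E := rfl
      have c1 : m.count (Classical.arbitrary E) * Fintype.card E = n := by
        have := congrArg Multiset.card e1
        rw [hm, Multiset.card_nsmul, hc] at this; exact this.symm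
      have c2 : m'.count (Classical.arbitrary E) * Fintype.card E = n := by
        have := congrArg Multiset.card e2
        rw [hm', Multiset.card_nsmul, hc] at this; exact this.symm
      have : m.count (Classical.arbitrary E) = m'.count (Classical.arbitrary E) :=
        Nat.eq_of_mul_eq_mul_right hpos (c1.trans c2.symm)
      rw [this] at e1
      exact Subtype.ext (e1.trans e2.symm)
    · rw [Multiset.card_nsmul, hk, mul_comm]
      rfl
    · intro g
      rw [Multiset.map_nsmul]
      congr 1
      have : ((Finset.univ : Finset E).val.map fun x => g • x)
          = (Finset.univ.image fun x => g • x).val := by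
        rw [Finset.image_val, Multiset.dedup_eq_self.mpr]
        exact (Finset.univ.nodup.map (MulAction.injective g))
      rw [this]
      congr 1
      exact Finset.image_univ_of_surjective (MulAction.surjective g)
  · have : IsEmpty {m : Multiset E // Multiset.card m = n ∧
        ∀ g : G, m.map (fun x => g • x) = m} := by
      constructor
      rintro ⟨m, hm, hfix⟩
      apply hdvd
      have := congrArg Multiset.card (fixed_eq_nsmul_univ htrans m hfix)
      rw [hm, Multiset.card_nsmul] at this
      exact ⟨_, this.trans (mul_comm _ _)⟩
    exact Nat.card_of_isEmpty
end

section
/- Let G be a finite group acting on a finite type E, and let n be a natural number. The number of multisets over E of cardinality n that are fixed by the action of every element of G equals the number of functions c from the set of G-orbits of E to ℕ such that the sum over all orbits O of c(O)·|O| equals n. Equivalently, if the orbits have cardinalities w₁, …, w_r, the number of G-fixed multisets of cardinality n equals the number of r-tuples (k₁, …, k_r) of natural numbers with k₁w₁ + ⋯ + k_rw_r = n. -/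
open Multiset MulAction Finset

private lemma stmt8_count_inv {G E : Type*} [Group G] [Fintype G] [Fintype E] [MulAction G E]
    [DecidableEq E] {m : Multiset E}
    (hm : ∀ g : G, m.map (fun x => g • x) = m) {x y : E}
    (h : Quotient.mk (MulAction.orbitRel G E) x = Quotient.mk (MulAction.orbitRel G E) y) :
    m.count x = m.count y := by
  obtain ⟨g, rfl⟩ : ∃ g : G, g • y = x := Quotient.eq.mp h
  conv_lhs => rw [← hm g]
  exact Multiset.count_map_eq_count' _ m (MulAction.injective g) y

/-- For a finite group `G` acting on a finite type `E`, the number of `G`-fixed multisets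
over `E` of cardinality `n` equals the number of functions `c` from the set of `G`-orbits
to `ℕ` with `∑ O, c O * |O| = n`. -/
theorem stmt8 {G E : Type*} [Group G] [Fintype G] [Fintype E] [MulAction G E]
    [Fintype (Quotient (MulAction.orbitRel G E))] (n : ℕ) :
    Nat.card {m : Multiset E // Multiset.card m = n ∧
        ∀ g : G, m.map (fun x => g • x) = m}
      = Nat.card {c : Quotient (MulAction.orbitRel G E) → ℕ //
          ∑ O : Quotient (MulAction.orbitRel G E),
            c O * Nat.card {x : E // Quotient.mk (MulAction.orbitRel G E) x = O} = n} := by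
  classical
  have hfib : ∀ O : Quotient (MulAction.orbitRel G E),
      Nat.card {x : E // Quotient.mk (MulAction.orbitRel G E) x = O}
        = (Finset.univ.filter
            (fun x : E => Quotient.mk (MulAction.orbitRel G E) x = O)).card := by
    intro O
    rw [Nat.card_eq_fintype_card, Fintype.card_subtype]
  have hcount : ∀ (c : Quotient (MulAction.orbitRel G E) → ℕ) (y : E),
      (∑ x : E, c (Quotient.mk (MulAction.orbitRel G E) x) • ({x} : Multiset E)).count y
        = c (Quotient.mk (MulAction.orbitRel G E) y) := by
    intro c y
    rw [Multiset.count_sum']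
    simp only [Multiset.count_nsmul, Multiset.count_singleton]
    rw [Finset.sum_eq_single y]
    · simp
    · intro b _ hb; simp [Ne.symm hb]
    · simp
  apply Nat.card_congr
  refine
    { toFun := fun m => ⟨fun O => m.1.count O.out, ?_⟩
      invFun := fun c =>
        ⟨∑ x : E, c.1 (Quotient.mk (MulAction.orbitRel G E) x) • ({x} : Multiset E), ?_, ?_⟩
      left_inv := ?_
      right_inv := ?_ }
  · obtain ⟨m, hcard, hfix⟩ := m
    simp only
    have key : ∀ O : Quotient (MulAction.orbitRel G E),
        m.count O.out * Nat.card {x : E // Quotient.mk (MulAction.orbitRel G E) x = O}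
          = ∑ x ∈ Finset.univ.filter
              (fun x : E => Quotient.mk (MulAction.orbitRel G E) x = O), m.count x := by
      intro O
      rw [hfib, Finset.sum_congr rfl (fun x hx => ?_), Finset.sum_const, smul_eq_mul, mul_comm]
      exact stmt8_count_inv hfix ((Finset.mem_filter.mp hx).2.trans O.out_eq.symm)
    rw [Finset.sum_congr rfl (fun O _ => key O), Finset.sum_fiberwise, ← hcard]
    exact Multiset.sum_count_eq_card (fun x _ => Finset.mem_univ x)
  · obtain ⟨c, hc⟩ := c
    simp only
    rw [Multiset.card_sum]
    simp only [Multiset.card_nsmul, Multiset.card_singleton, mul_one]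
    rw [← hc, ← Finset.sum_fiberwise Finset.univ
      (fun x : E => Quotient.mk (MulAction.orbitRel G E) x)
      (fun x => c (Quotient.mk (MulAction.orbitRel G E) x))]
    refine Finset.sum_congr rfl fun O _ => ?_
    rw [hfib, Finset.sum_congr rfl (fun x hx => by rw [(Finset.mem_filter.mp hx).2]),
      Finset.sum_const, smul_eq_mul, mul_comm]
  · obtain ⟨c, hc⟩ := c
    intro g
    apply Multiset.ext.mpr
    intro y
    have h1 : (g • (g⁻¹ • y) : E) = y := smul_inv_smul g y
    calc ((∑ x : E, c (Quotient.mk (MulAction.orbitRel G E) x) • ({x} : Multiset E)).map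
            (fun x => g • x)).count y
        = ((∑ x : E, c (Quotient.mk (MulAction.orbitRel G E) x) • ({x} : Multiset E)).map
            (fun x => g • x)).count (g • (g⁻¹ • y)) := by rw [h1]
      _ = (∑ x : E, c (Quotient.mk (MulAction.orbitRel G E) x) • ({x} : Multiset E)).count
            (g⁻¹ • y) := Multiset.count_map_eq_count' _ _ (MulAction.injective g) _
      _ = c (Quotient.mk (MulAction.orbitRel G E) (g⁻¹ • y)) := hcount c _
      _ = c (Quotient.mk (MulAction.orbitRel G E) y) := by
          congr 1
          exact Quotient.sound ⟨g⁻¹, rfl⟩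
      _ = (∑ x : E, c (Quotient.mk (MulAction.orbitRel G E) x) •
            ({x} : Multiset E)).count y := (hcount c y).symm
  · rintro ⟨m, hcard, hfix⟩
    apply Subtype.ext
    simp only
    apply Multiset.ext.mpr
    intro y
    rw [hcount (fun O => m.count O.out) y]
    exact stmt8_count_inv hfix (Quotient.out_eq _)
  · rintro ⟨c, hc⟩
    apply Subtype.ext
    funext O
    simp only
    rw [hcount, Quotient.out_eq]
end

section
/- For every natural number n and every rational number q ≥ 2, the following identity holds in ℚ: q^(n²) / ∏_{i=0}^{n−1} (qⁿ − q^i) = ∑_{i=0}^{n} q^(i(i−1)) / ∏_{j=0}^{i−1} (q^i − q^j), where empty products equal 1. -/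
open Finset

lemma stmt9_prod_pos (q : ℚ) (hq : 2 ≤ q) (m : ℕ) :
    0 < ∏ i ∈ Finset.range m, (q ^ m - q ^ i) := by
  apply Finset.prod_pos
  intro i hi
  have : q ^ i < q ^ m := pow_lt_pow_right₀ (by linarith) (Finset.mem_range.1 hi)
  linarith

/-- For every `n : ℕ` and rational `q ≥ 2`,
`q^(n²) / ∏_{i<n} (qⁿ − q^i) = ∑_{i≤n} q^(i(i−1)) / ∏_{j<i} (q^i − q^j)`. -/
theorem stmt9 (n : ℕ) (q : ℚ) (hq : 2 ≤ q) :
    q ^ (n ^ 2) / ∏ i ∈ Finset.range n, (q ^ n - q ^ i)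
      = ∑ i ∈ Finset.range (n + 1),
          q ^ (i * (i - 1)) / ∏ j ∈ Finset.range i, (q ^ i - q ^ j) := by
  induction n with
  | zero => simp
  | succ n ih =>
    have hq1 : (1:ℚ) < q := by linarith
    have hq0 : q ≠ 0 := by linarith
    have hPn : (∏ i ∈ Finset.range n, (q ^ n - q ^ i)) ≠ 0 :=
      (stmt9_prod_pos q hq n).ne'
    have hpow : (1:ℚ) < q ^ (n+1) := one_lt_pow₀ hq1 (Nat.succ_ne_zero n)
    have hq1' : q ^ (n+1) - 1 ≠ 0 := by linarith
    have hprod : ∏ j ∈ Finset.range (n+1), (q ^ (n+1) - q ^ j)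
        = (q ^ (n+1) - 1) * (q ^ n * ∏ j ∈ Finset.range n, (q ^ n - q ^ j)) := by
      rw [Finset.prod_range_succ']
      have h1 : ∀ j ∈ Finset.range n, q ^ (n+1) - q ^ (j+1) = q * (q ^ n - q ^ j) := by
        intro j _; ring
      rw [Finset.prod_congr rfl h1, Finset.prod_mul_distrib, Finset.prod_const,
        Finset.card_range, pow_zero]
      ring
    rw [Finset.sum_range_succ, ← ih, hprod]
    simp only [Nat.add_sub_cancel]
    field_simp
    ring
end

section
/- Let k be a field in which 6 is invertible and let f = X₀X₁X₂ ∈ k[X₀,X₁,X₂]. Then the stabilizer up to scalar S_f = {g ∈ GL₃(k) : ∃ c ∈ kˣ, f·g = c·f} equals the subgroup of monomial matrices in GL₃(k), i.e., the invertible matrices having exactly one nonzero entry in each row and each column. -/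
open MvPolynomial

private lemma primeX' (k : Type*) [Field k] (j : Fin 3) :
    Prime (X j : MvPolynomial (Fin 3) k) := by
  let e : MvPolynomial (Fin 3) k ≃ₐ[k] Polynomial (MvPolynomial (Fin 2) k) :=
    (renameEquiv k (Equiv.swap j 0)).trans (finSuccEquiv k 2)
  have he : e (X j) = Polynomial.X := by
    simp [e, renameEquiv_apply, rename_X, Equiv.swap_apply_left, finSuccEquiv_X_zero]
  rw [← MulEquiv.prime_iff e.toRingEquiv.toMulEquiv]
  show Prime (e (X j))
  rw [he]
  exact Polynomial.prime_X

private lemma coeffz' {k : Type*} [Field k] {p : MvPolynomial (Fin 3) k}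
    {j l : Fin 3} (hjl : l ≠ j) (h : X j ∣ p) : coeff (Finsupp.single l 1) p = 0 := by
  obtain ⟨q, rfl⟩ := h
  rw [mul_comm, coeff_mul_X']
  simp [Finsupp.single_apply, hjl, hjl.symm, Finsupp.mem_support_iff]

private lemma coeffL' {k : Type*} [Field k] (M : Matrix (Fin 3) (Fin 3) k) (i l : Fin 3) :
    coeff (Finsupp.single l 1) (∑ j : Fin 3, C (M i j) * X j) = M i l := by
  fin_cases l <;>
    simp [Fin.sum_univ_three, coeff_C_mul, coeff_X', Finsupp.single_eq_single_iff]

/-- Over a field `k` with `6` invertible, the stabilizer up to scalar of the cubic form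
`X₀X₁X₂` under the substitution action of `GL₃(k)` is exactly the subgroup of monomial
matrices (exactly one nonzero entry in each row and each column). -/
theorem stmt10 (k : Type*) [Field k] (h6 : IsUnit (6 : k)) :
    {g : GL (Fin 3) k | ∃ c : kˣ,
        aeval (fun i => ∑ j : Fin 3, C ((g : Matrix (Fin 3) (Fin 3) k) i j) * X j)
            (X 0 * X 1 * X 2 : MvPolynomial (Fin 3) k)
          = (c : k) • (X 0 * X 1 * X 2 : MvPolynomial (Fin 3) k)}
    = {g : GL (Fin 3) k |
        (∀ i, ∃! j, (g : Matrix (Fin 3) (Fin 3) k) i j ≠ 0) ∧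
        (∀ j, ∃! i, (g : Matrix (Fin 3) (Fin 3) k) i j ≠ 0)} := by
  ext g
  simp only [Set.mem_setOf_eq]
  set M : Matrix (Fin 3) (Fin 3) k := (g : Matrix (Fin 3) (Fin 3) k) with hMdef
  set L : Fin 3 → MvPolynomial (Fin 3) k := fun i => ∑ j : Fin 3, C (M i j) * X j with hLdef
  -- rows of M are nonzero
  have hrownz : ∀ i : Fin 3, ∃ l, M i l ≠ 0 := by
    intro i
    by_contra hcon
    push_neg at hcon
    have hginv : M * (g⁻¹ : GL (Fin 3) k) = 1 := g.mul_inv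
    have h11 := congrArg (fun A : Matrix (Fin 3) (Fin 3) k => A i i) hginv
    simp [Matrix.mul_apply, hcon, Matrix.one_apply] at h11
  constructor
  · rintro ⟨c, hc⟩
    rw [map_mul, map_mul, aeval_X, aeval_X, aeval_X] at hc
    have hc' : L 0 * L 1 * L 2 = (c : k) • (X 0 * X 1 * X 2 : MvPolynomial (Fin 3) k) := hc
    have hXdvd : ∀ j : Fin 3, ∃ i : Fin 3, X j ∣ L i := by
      intro j
      have h1 : (X j : MvPolynomial (Fin 3) k) ∣ X 0 * X 1 * X 2 := by
        fin_cases j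
        · show (X 0 : MvPolynomial (Fin 3) k) ∣ X 0 * X 1 * X 2
          exact ⟨X 1 * X 2, by ring⟩
        · show (X 1 : MvPolynomial (Fin 3) k) ∣ X 0 * X 1 * X 2
          exact ⟨X 0 * X 2, by ring⟩
        · show (X 2 : MvPolynomial (Fin 3) k) ∣ X 0 * X 1 * X 2
          exact ⟨X 0 * X 1, by ring⟩
      have h2 : (X j : MvPolynomial (Fin 3) k) ∣ L 0 * L 1 * L 2 := by
        rw [hc', smul_eq_C_mul]
        exact h1.mul_left _
      rcases (primeX' k j).dvd_mul.mp h2 with h | h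
      · rcases (primeX' k j).dvd_mul.mp h with h | h
        · exact ⟨0, h⟩
        · exact ⟨1, h⟩
      · exact ⟨2, h⟩
    choose t ht using hXdvd
    have htz : ∀ j l, l ≠ j → M (t j) l = 0 := by
      intro j l hl
      have := coeffz' hl (ht j)
      rwa [hLdef, coeffL'] at this
    have htnz : ∀ j, M (t j) j ≠ 0 := by
      intro j hj
      obtain ⟨l, hl⟩ := hrownz (t j)
      rcases eq_or_ne l j with rfl | hne
      · exact hl hj
      · exact hl (htz j l hne)
    have tinj : Function.Injective t := by
      intro j j' hjj'
      by_contra hne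
      exact htnz j (hjj' ▸ htz j' j hne)
    have tsurj : Function.Surjective t := Finite.injective_iff_surjective.mp tinj
    constructor
    · intro i
      obtain ⟨j, rfl⟩ := tsurj i
      exact ⟨j, htnz j, fun l hl => by
        by_contra hne
        exact hl (htz j l hne)⟩
    · intro j
      refine ⟨t j, htnz j, fun i hi => ?_⟩
      obtain ⟨j', rfl⟩ := tsurj i
      rcases eq_or_ne j j' with rfl | hne
      · rfl
      · exact absurd (htz j' j hne) hi
  · rintro ⟨hrow, hcol⟩
    choose σ hσ hσu using hrow
    have hMz : ∀ i j, j ≠ σ i → M i j = 0 := by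
      intro i j hj
      by_contra h
      exact hj (hσu i j h)
    have σinj : Function.Injective σ := by
      intro i i' h
      obtain ⟨i'', -, hu⟩ := hcol (σ i)
      rw [hu i (hσ i), hu i' (h ▸ hσ i')]
    have σbij : Function.Bijective σ := Finite.injective_iff_bijective.mp σinj
    have hLi : ∀ i, L i = C (M i (σ i)) * X (σ i) := by
      intro i
      rw [hLdef]
      refine Finset.sum_eq_single (σ i) (fun j _ hj => ?_) (by simp)
      rw [hMz i j hj, map_zero, zero_mul]
    have hXprod : (X (σ 0) * X (σ 1) * X (σ 2) : MvPolynomial (Fin 3) k)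
        = X 0 * X 1 * X 2 := by
      have := Equiv.prod_comp (Equiv.ofBijective σ σbij)
        (fun i => (X i : MvPolynomial (Fin 3) k))
      simpa [Fin.prod_univ_three, Equiv.ofBijective_apply] using this
    have hd : M 0 (σ 0) * M 1 (σ 1) * M 2 (σ 2) ≠ 0 :=
      mul_ne_zero (mul_ne_zero (hσ 0) (hσ 1)) (hσ 2)
    refine ⟨Units.mk0 _ hd, ?_⟩
    rw [map_mul, map_mul, aeval_X, aeval_X, aeval_X]
    show L 0 * L 1 * L 2 = _
    rw [hLi 0, hLi 1, hLi 2, Units.val_mk0, smul_eq_C_mul, ← hXprod, map_mul, map_mul]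
    ring
end

section
/- Let k be a field in which 6 is invertible and let f = X₀²X₂ + X₁³ ∈ k[X₀,X₁,X₂]. Then the stabilizer up to scalar S_f = {g ∈ GL₃(k) : ∃ c ∈ kˣ, f·g = c·f} consists exactly of the invertible diagonal matrices diag(a,b,c) with a²c = b³; moreover the quotient group S_f/Z by the subgroup Z of invertible scalar matrices is isomorphic to the multiplicative group kˣ (via t ↦ diag(t³, t², 1) modulo scalars). -/
open MvPolynomial

set_option maxHeartbeats 4000000 in
lemma stmt11_aux {k : Type*} [Field k] (h2 : (2:k) ≠ 0) (h3 : (3:k) ≠ 0)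
    (M N : Matrix (Fin 3) (Fin 3) k) (hMN : M * N = 1) (cc : k) (hcc : cc ≠ 0)
    (hc : (C (M 0 0) * X 0 + C (M 0 1) * X 1 + C (M 0 2) * X 2 : MvPolynomial (Fin 3) k) ^ 2
            * (C (M 2 0) * X 0 + C (M 2 1) * X 1 + C (M 2 2) * X 2)
          + (C (M 1 0) * X 0 + C (M 1 1) * X 1 + C (M 1 2) * X 2) ^ 3
        = C cc * (X 0 ^ 2 * X 2 + X 1 ^ 3)) :
    (∀ i j, i ≠ j → M i j = 0) ∧ M 0 0 ^ 2 * M 2 2 = M 1 1 ^ 3 ∧ M 1 1 ^ 3 = cc := by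
  have h6' : (6:k) ≠ 0 := by
    intro h
    exact h2 (by
      have : (2:k) * 3 = 0 := by rw [show (2:k)*3 = 6 by norm_num, h]
      rcases mul_eq_zero.mp this with h' | h'
      · exact h'
      · exact absurd h' h3)
  have cancel : ∀ x y : k, x * y = 0 → y ≠ 0 → x = 0 := by
    intro x y h hy
    rcases mul_eq_zero.mp h with h | h
    · exact h
    · exact absurd h hy
  have hdet : IsUnit M.det := Matrix.isUnit_det_of_right_inverse hMN
  have e1 := congrArg (eval (fun _ => (0:k))) (congrArg (pderiv 2) (congrArg (pderiv 2) (congrArg (pderiv 2) hc)))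
  have e2 := congrArg (eval (fun _ => (0:k))) (congrArg (pderiv 0) (congrArg (pderiv 2) (congrArg (pderiv 2) hc)))
  have e3 := congrArg (eval (fun _ => (0:k))) (congrArg (pderiv 1) (congrArg (pderiv 2) (congrArg (pderiv 2) hc)))
  simp [pderiv_mul, pderiv_pow, map_ofNat] at e1 e2 e3
  have hv : Matrix.vecMul ![4 * M 0 2 * M 2 2, 6 * M 1 2 ^ 2, 2 * M 0 2 ^ 2] M = 0 := by
    funext j
    fin_cases j <;>
      simp [Matrix.vecMul, dotProduct, Fin.sum_univ_three]
    · linear_combination e2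
    · linear_combination e3
    · linear_combination e1
  have hv1 : Matrix.vecMul ![4 * M 0 2 * M 2 2, 6 * M 1 2 ^ 2, 2 * M 0 2 ^ 2] (M * N) = 0 := by
    rw [← Matrix.vecMul_vecMul, hv, Matrix.zero_vecMul]
  rw [hMN, Matrix.vecMul_one] at hv1
  have ha2 : M 0 2 = 0 := by
    have h' := congrFun hv1 2
    simp at h'
    exact h'.resolve_left h2
  have hb2 : M 1 2 = 0 := by
    have h' := congrFun hv1 1
    simp at h'
    exact h'.resolve_left h6'
  rw [ha2, hb2] at hc
  simp only [map_zero, zero_mul, add_zero] at hc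
  have f1 := congrArg (eval (fun _ => (0:k))) (congrArg (pderiv 2) (congrArg (pderiv 0) (congrArg (pderiv 0) hc)))
  have f2 := congrArg (eval (fun _ => (0:k))) (congrArg (pderiv 2) (congrArg (pderiv 1) (congrArg (pderiv 1) hc)))
  have f3 := congrArg (eval (fun _ => (0:k))) (congrArg (pderiv 1) (congrArg (pderiv 1) (congrArg (pderiv 1) hc)))
  have f4 := congrArg (eval (fun _ => (0:k))) (congrArg (pderiv 0) (congrArg (pderiv 1) (congrArg (pderiv 1) hc)))
  have f5 := congrArg (eval (fun _ => (0:k))) (congrArg (pderiv 0) (congrArg (pderiv 0) (congrArg (pderiv 0) hc)))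
  have f6 := congrArg (eval (fun _ => (0:k))) (congrArg (pderiv 1) (congrArg (pderiv 0) (congrArg (pderiv 0) hc)))
  simp [pderiv_mul, pderiv_pow, map_ofNat] at f1 f2 f3 f4 f5 f6
  have hdet' : M 0 0 * M 1 1 * M 2 2 - M 0 1 * M 1 0 * M 2 2 ≠ 0 := by
    rw [Matrix.det_fin_three, ha2, hb2] at hdet
    intro h
    exact hdet.ne_zero (by linear_combination h)
  have hc2 : M 2 2 ≠ 0 := fun h => hdet' (by rw [h]; ring)
  have ha1 : M 0 1 = 0 := by
    rcases f2 with (h | h) | h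
    · exact absurd h h2
    · exact h
    · exact absurd h hc2
  have hq : M 0 0 ^ 2 * M 2 2 = cc := by
    have h' : (M 0 0 ^ 2 * M 2 2 - cc) * 2 = 0 := by linear_combination f1
    exact sub_eq_zero.mp (cancel _ _ h' h2)
  have ha0 : M 0 0 ≠ 0 := fun h => hcc (by rw [← hq, h]; ring)
  have hb1 : M 1 1 ≠ 0 := fun h => hdet' (by rw [h, ha1]; ring)
  have heq2 : M 1 1 ^ 3 = cc := by
    have h' : (M 1 1 ^ 3 - cc) * 6 = 0 := by
      linear_combination f3 - (M 0 1 * M 2 1 * 6) * ha1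
    exact sub_eq_zero.mp (cancel _ _ h' h6')
  have hb0 : M 1 0 = 0 := by
    have h' : M 1 0 * (M 1 1 ^ 2 * 6) = 0 := by
      linear_combination f4 - (4 * M 0 0 * M 2 1 + 2 * M 0 1 * M 2 0) * ha1
    exact cancel _ _ h' (mul_ne_zero (pow_ne_zero 2 hb1) h6')
  have hc0 : M 2 0 = 0 := by
    have h' : M 2 0 * (M 0 0 ^ 2 * 6) = 0 := by
      linear_combination f5 - (6 * M 1 0 ^ 2) * hb0
    exact cancel _ _ h' (mul_ne_zero (pow_ne_zero 2 ha0) h6')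
  have hc1 : M 2 1 = 0 := by
    have h' : M 2 1 * (M 0 0 ^ 2 * 2) = 0 := by
      linear_combination f6 - (4 * M 0 0 * M 2 0) * ha1 - (6 * M 1 0 * M 1 1) * hb0
    exact cancel _ _ h' (mul_ne_zero (pow_ne_zero 2 ha0) h2)
  refine ⟨?_, by linear_combination hq - heq2, heq2⟩
  intro i j hij
  fin_cases i <;> fin_cases j <;> first | exact absurd rfl hij | assumption

set_option maxHeartbeats 4000000 in
/-- Over a field `k` with `6` invertible, the stabilizer up to scalar `S` of the cuspidal
cubic `X₀²X₂ + X₁³` under the substitution action of `GL₃(k)` consists exactly of the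
invertible diagonal matrices `diag(a,b,c)` with `a²c = b³`, and the quotient of `S` by
the subgroup `Z` of scalar matrices is isomorphic to `kˣ`. -/
theorem stmt11 (k : Type*) [Field k] (h6 : IsUnit (6 : k))
    (S : Subgroup (GL (Fin 3) k))
    (hS : ∀ g : GL (Fin 3) k, g ∈ S ↔ ∃ c : kˣ,
        aeval (fun i => ∑ j : Fin 3, C ((g : Matrix (Fin 3) (Fin 3) k) i j) * X j)
            (X 0 ^ 2 * X 2 + X 1 ^ 3 : MvPolynomial (Fin 3) k)
          = (c : k) • (X 0 ^ 2 * X 2 + X 1 ^ 3 : MvPolynomial (Fin 3) k))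
    (Z : Subgroup (GL (Fin 3) k))
    (hZ : ∀ g : GL (Fin 3) k, g ∈ Z ↔ ∃ c : kˣ,
        (g : Matrix (Fin 3) (Fin 3) k) = (c : k) • (1 : Matrix (Fin 3) (Fin 3) k))
    [(Z.subgroupOf S).Normal] :
    (∀ g : GL (Fin 3) k, g ∈ S ↔
        ((∀ i j, i ≠ j → (g : Matrix (Fin 3) (Fin 3) k) i j = 0) ∧
          ((g : Matrix (Fin 3) (Fin 3) k) 0 0) ^ 2 * ((g : Matrix (Fin 3) (Fin 3) k) 2 2)
            = ((g : Matrix (Fin 3) (Fin 3) k) 1 1) ^ 3)) ∧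
    Nonempty ((S ⧸ Z.subgroupOf S) ≃* kˣ) := by
  have h6' : (6 : k) ≠ 0 := h6.ne_zero
  have h2 : (2 : k) ≠ 0 := fun h => h6' (by rw [show (6:k) = 2*3 by norm_num, h, zero_mul])
  have h3 : (3 : k) ≠ 0 := fun h => h6' (by rw [show (6:k) = 2*3 by norm_num, h, mul_zero])
  have key : ∀ g : GL (Fin 3) k, g ∈ S ↔
      ((∀ i j, i ≠ j → (g : Matrix (Fin 3) (Fin 3) k) i j = 0) ∧
        ((g : Matrix (Fin 3) (Fin 3) k) 0 0) ^ 2 * ((g : Matrix (Fin 3) (Fin 3) k) 2 2)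
          = ((g : Matrix (Fin 3) (Fin 3) k) 1 1) ^ 3) := by
    intro g
    constructor
    · intro hg
      obtain ⟨c, hc⟩ := (hS g).mp hg
      simp only [map_add, _root_.map_mul, map_pow, aeval_X, Fin.sum_univ_three,
        smul_eq_C_mul] at hc
      obtain ⟨hdiag, heq, -⟩ := stmt11_aux h2 h3 (g : Matrix (Fin 3) (Fin 3) k)
        ((g⁻¹ : GL (Fin 3) k) : Matrix (Fin 3) (Fin 3) k) g.mul_inv (c : k) c.ne_zero hc
      exact ⟨hdiag, heq⟩
    · rintro ⟨hdiag, heq⟩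
      apply (hS g).mpr
      have h01 : (g : Matrix (Fin 3) (Fin 3) k) 0 1 = 0 := hdiag 0 1 (by decide)
      have h02 : (g : Matrix (Fin 3) (Fin 3) k) 0 2 = 0 := hdiag 0 2 (by decide)
      have h10 : (g : Matrix (Fin 3) (Fin 3) k) 1 0 = 0 := hdiag 1 0 (by decide)
      have h12 : (g : Matrix (Fin 3) (Fin 3) k) 1 2 = 0 := hdiag 1 2 (by decide)
      have h20 : (g : Matrix (Fin 3) (Fin 3) k) 2 0 = 0 := hdiag 2 0 (by decide)
      have h21 : (g : Matrix (Fin 3) (Fin 3) k) 2 1 = 0 := hdiag 2 1 (by decide)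
      have hdet : IsUnit (g : Matrix (Fin 3) (Fin 3) k).det :=
        (Matrix.isUnit_iff_isUnit_det _).mp g.isUnit
      have hne : (g : Matrix (Fin 3) (Fin 3) k) 0 0 * (g : Matrix (Fin 3) (Fin 3) k) 1 1
          * (g : Matrix (Fin 3) (Fin 3) k) 2 2 ≠ 0 := by
        intro h
        apply hdet.ne_zero
        rw [Matrix.det_fin_three, h01, h02, h10, h12, h20, h21]
        linear_combination h
      have h00 : (g : Matrix (Fin 3) (Fin 3) k) 0 0 ≠ 0 := fun h => hne (by rw [h]; ring)
      have h22 : (g : Matrix (Fin 3) (Fin 3) k) 2 2 ≠ 0 := fun h => hne (by rw [h]; ring)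
      refine ⟨Units.mk0 ((g : Matrix (Fin 3) (Fin 3) k) 0 0 ^ 2
        * (g : Matrix (Fin 3) (Fin 3) k) 2 2) (mul_ne_zero (pow_ne_zero _ h00) h22), ?_⟩
      simp only [map_add, _root_.map_mul, map_pow, aeval_X, Fin.sum_univ_three, smul_eq_C_mul,
        h01, h02, h10, h12, h20, h21, map_zero, zero_mul, add_zero, zero_add, Units.val_mk0]
      have hC : (C ((g : Matrix (Fin 3) (Fin 3) k) 1 1) : MvPolynomial (Fin 3) k) ^ 3
          = C ((g : Matrix (Fin 3) (Fin 3) k) 0 0) ^ 2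
            * C ((g : Matrix (Fin 3) (Fin 3) k) 2 2) := by
        rw [← map_pow, ← map_pow, ← _root_.map_mul, heq]
      linear_combination (X 1 : MvPolynomial (Fin 3) k) ^ 3 * hC
  refine ⟨key, ?_⟩
  -- diagonal entries of elements of S are nonzero
  have hent : ∀ g : GL (Fin 3) k, g ∈ S → ((g : Matrix (Fin 3) (Fin 3) k) 0 0 ≠ 0
      ∧ (g : Matrix (Fin 3) (Fin 3) k) 1 1 ≠ 0 ∧ (g : Matrix (Fin 3) (Fin 3) k) 2 2 ≠ 0) := by
    intro g hg
    obtain ⟨hdiag, heq⟩ := (key g).mp hg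
    have hdet : IsUnit (g : Matrix (Fin 3) (Fin 3) k).det :=
      (Matrix.isUnit_iff_isUnit_det _).mp g.isUnit
    have hne : (g : Matrix (Fin 3) (Fin 3) k) 0 0 * (g : Matrix (Fin 3) (Fin 3) k) 1 1
        * (g : Matrix (Fin 3) (Fin 3) k) 2 2 ≠ 0 := by
      intro h
      apply hdet.ne_zero
      rw [Matrix.det_fin_three, hdiag 0 1 (by decide), hdiag 0 2 (by decide),
        hdiag 1 0 (by decide), hdiag 1 2 (by decide), hdiag 2 0 (by decide),
        hdiag 2 1 (by decide)]
      linear_combination h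
    exact ⟨fun h => hne (by rw [h]; ring), fun h => hne (by rw [h]; ring),
      fun h => hne (by rw [h]; ring)⟩
  let φ : S →* kˣ :=
    { toFun := fun x => Units.mk0
        (((x : GL (Fin 3) k) : Matrix (Fin 3) (Fin 3) k) 1 1
          / ((x : GL (Fin 3) k) : Matrix (Fin 3) (Fin 3) k) 0 0)
        (div_ne_zero (hent _ x.2).2.1 (hent _ x.2).1)
      map_one' := by
        ext
        simp [Matrix.one_apply]
      map_mul' := by
        intro x y
        obtain ⟨hdx, -⟩ := (key _).mp x.2
        obtain ⟨hdy, -⟩ := (key _).mp y.2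
        ext
        simp only [Units.val_mk0, Units.val_mul]
        have hmul : (((x * y : S) : GL (Fin 3) k) : Matrix (Fin 3) (Fin 3) k)
            = ((x : GL (Fin 3) k) : Matrix (Fin 3) (Fin 3) k)
              * ((y : GL (Fin 3) k) : Matrix (Fin 3) (Fin 3) k) := rfl
        have hm0 : (((x * y : S) : GL (Fin 3) k) : Matrix (Fin 3) (Fin 3) k) 0 0
            = ((x : GL (Fin 3) k) : Matrix (Fin 3) (Fin 3) k) 0 0
              * ((y : GL (Fin 3) k) : Matrix (Fin 3) (Fin 3) k) 0 0 := by
          rw [hmul, Matrix.mul_apply, Fin.sum_univ_three, hdx 0 1 (by decide),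
            hdx 0 2 (by decide)]
          ring
        have hm1 : (((x * y : S) : GL (Fin 3) k) : Matrix (Fin 3) (Fin 3) k) 1 1
            = ((x : GL (Fin 3) k) : Matrix (Fin 3) (Fin 3) k) 1 1
              * ((y : GL (Fin 3) k) : Matrix (Fin 3) (Fin 3) k) 1 1 := by
          rw [hmul, Matrix.mul_apply, Fin.sum_univ_three, hdx 1 0 (by decide),
            hdx 1 2 (by decide)]
          ring
        rw [hm1, hm0]
        field_simp }
  have hφsurj : Function.Surjective φ := by
    intro t
    refine ⟨⟨⟨Matrix.diagonal ![1, (t : k), (t : k) ^ 3],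
      Matrix.diagonal ![1, ((t⁻¹ : kˣ) : k), ((t⁻¹ : kˣ) : k) ^ 3], ?_, ?_⟩, ?_⟩, ?_⟩
    · rw [Matrix.diagonal_mul_diagonal]
      ext i j
      fin_cases i <;> fin_cases j <;>
        simp [Matrix.diagonal_apply, Matrix.one_apply, ← mul_pow]
    · rw [Matrix.diagonal_mul_diagonal]
      ext i j
      fin_cases i <;> fin_cases j <;>
        simp [Matrix.diagonal_apply, Matrix.one_apply, ← mul_pow]
    · apply (key _).mpr
      constructor
      · intro i j hij
        exact Matrix.diagonal_apply_ne _ hij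
      · simp [Matrix.diagonal]
    · ext
      simp [Matrix.diagonal, φ]
  have hker : φ.ker = Z.subgroupOf S := by
    ext x
    simp only [MonoidHom.mem_ker, Subgroup.mem_subgroupOf]
    rw [hZ]
    obtain ⟨hdiag, heqx⟩ := (key _).mp x.2
    obtain ⟨h00, h11, h22⟩ := hent _ x.2
    constructor
    · intro h
      have h' : ((x : GL (Fin 3) k) : Matrix (Fin 3) (Fin 3) k) 1 1
          / ((x : GL (Fin 3) k) : Matrix (Fin 3) (Fin 3) k) 0 0 = 1 := by
        have := congrArg Units.val h
        simpa [φ] using this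
      have h11eq : ((x : GL (Fin 3) k) : Matrix (Fin 3) (Fin 3) k) 1 1
          = ((x : GL (Fin 3) k) : Matrix (Fin 3) (Fin 3) k) 0 0 :=
        (div_eq_one_iff_eq h00).mp h'
      have h22eq : ((x : GL (Fin 3) k) : Matrix (Fin 3) (Fin 3) k) 2 2
          = ((x : GL (Fin 3) k) : Matrix (Fin 3) (Fin 3) k) 0 0 := by
        apply mul_left_cancel₀ (pow_ne_zero 2 h00)
        rw [heqx, h11eq]
        ring
      refine ⟨Units.mk0 _ h00, ?_⟩
      ext i j
      by_cases hij : i = j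
      · subst hij
        fin_cases i <;>
          simp [Matrix.one_apply, h11eq, h22eq]
      · rw [hdiag i j hij]
        simp [Matrix.one_apply_ne hij]
    · rintro ⟨u, hu⟩
      have h11u : ((x : GL (Fin 3) k) : Matrix (Fin 3) (Fin 3) k) 1 1 = (u : k) := by
        rw [hu]; simp [Matrix.one_apply]
      have h00u : ((x : GL (Fin 3) k) : Matrix (Fin 3) (Fin 3) k) 0 0 = (u : k) := by
        rw [hu]; simp [Matrix.one_apply]
      ext
      simp [φ, h11u, h00u, div_self u.ne_zero]
  exact ⟨(QuotientGroup.quotientMulEquivOfEq hker.symm).trans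
    (QuotientGroup.quotientKerEquivOfSurjective φ hφsurj)⟩
end

section
/- Let k be a field in which 6 is invertible and let f = X₀X₁X₂ + X₀³ + X₁³ ∈ k[X₀,X₁,X₂] (the nodal cubic). Then the projective stabilizer S_f/Z is isomorphic to the semidirect product μ₃(k) ⋊ C₂, where μ₃(k) = {ζ ∈ kˣ : ζ³ = 1} is the group of cube roots of unity in k, C₂ is the cyclic group of order 2, and the nontrivial element of C₂ acts on μ₃(k) by inversion. -/
open MvPolynomial

/-- The action of the cyclic group of order two (realised as `ℤˣ`) on a commutative
group by inversion: the nontrivial element acts as `x ↦ x⁻¹`. -/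
def invAction (N : Type*) [CommGroup N] : ℤˣ →* MulAut N where
  toFun u :=
    { toFun := fun x => x ^ (u : ℤ)
      invFun := fun x => x ^ (u : ℤ)
      left_inv := fun x => by
        show (x ^ (u : ℤ)) ^ (u : ℤ) = x
        rw [← zpow_mul, ← Units.val_mul, Int.units_mul_self, Units.val_one, zpow_one]
      right_inv := fun x => by
        show (x ^ (u : ℤ)) ^ (u : ℤ) = x
        rw [← zpow_mul, ← Units.val_mul, Int.units_mul_self, Units.val_one, zpow_one]
      map_mul' := fun x y => mul_zpow x y _ }
  map_one' := by ext x; simp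
  map_mul' := fun u v => by
    ext x
    simp [← zpow_mul, mul_comm]

namespace Stmt12Aux

variable {k : Type*} [Field k]

lemma lin_indep (q1 q2 q3 q4 q5 q6 q7 q8 q9 q10 : k)
    (h : C q1 * X 0 ^ 3 + C q2 * X 1 ^ 3 + C q3 * X 2 ^ 3
      + C q4 * (X 0 ^ 2 * X 1) + C q5 * (X 0 ^ 2 * X 2)
      + C q6 * (X 0 * X 1 ^ 2) + C q7 * (X 1 ^ 2 * X 2)
      + C q8 * (X 0 * X 2 ^ 2) + C q9 * (X 1 * X 2 ^ 2)
      + C q10 * (X 0 * X 1 * X 2) = (0 : MvPolynomial (Fin 3) k)) :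
    q1 = 0 ∧ q2 = 0 ∧ q3 = 0 ∧ q4 = 0 ∧ q5 = 0 ∧ q6 = 0 ∧ q7 = 0 ∧ q8 = 0
      ∧ q9 = 0 ∧ q10 = 0 := by
  have h' := congrArg (aeval (fun i : Fin 3 => (Polynomial.X : Polynomial k) ^ (5 ^ (i : ℕ)))) h
  simp only [map_add, map_mul, map_pow, aeval_X, aeval_C, map_zero,
    Polynomial.algebraMap_eq] at h'
  norm_num [← pow_mul, ← pow_add, ← pow_succ'] at h'
  refine ⟨?_, ?_, ?_, ?_, ?_, ?_, ?_, ?_, ?_, ?_⟩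
  · simpa [Polynomial.coeff_X_pow, pow_mul] using congrArg (fun p => Polynomial.coeff p 3) h'
  · simpa [Polynomial.coeff_X_pow, pow_mul] using congrArg (fun p => Polynomial.coeff p 15) h'
  · simpa [Polynomial.coeff_X_pow, pow_mul] using congrArg (fun p => Polynomial.coeff p 75) h'
  · simpa [Polynomial.coeff_X_pow, pow_mul] using congrArg (fun p => Polynomial.coeff p 7) h'
  · simpa [Polynomial.coeff_X_pow, pow_mul] using congrArg (fun p => Polynomial.coeff p 27) h'
  · simpa [Polynomial.coeff_X_pow, pow_mul] using congrArg (fun p => Polynomial.coeff p 11) h'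
  · simpa [Polynomial.coeff_X_pow, pow_mul] using congrArg (fun p => Polynomial.coeff p 35) h'
  · simpa [Polynomial.coeff_X_pow, pow_mul] using congrArg (fun p => Polynomial.coeff p 51) h'
  · simpa [Polynomial.coeff_X_pow, pow_mul] using congrArg (fun p => Polynomial.coeff p 55) h'
  · simpa [Polynomial.coeff_X_pow, pow_mul] using congrArg (fun p => Polynomial.coeff p 31) h'

lemma ten_eqs (m : Matrix (Fin 3) (Fin 3) k) (c : k)
    (h : aeval (fun i => ∑ j : Fin 3, C (m i j) * X j)
        (X 0 * X 1 * X 2 + X 0 ^ 3 + X 1 ^ 3 : MvPolynomial (Fin 3) k)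
      = c • (X 0 * X 1 * X 2 + X 0 ^ 3 + X 1 ^ 3 : MvPolynomial (Fin 3) k)) :
    (m 0 0 * m 1 0 * m 2 0 + m 0 0 ^ 3 + m 1 0 ^ 3 = c)
    ∧ (m 0 1 * m 1 1 * m 2 1 + m 0 1 ^ 3 + m 1 1 ^ 3 = c)
    ∧ (m 0 2 * m 1 2 * m 2 2 + m 0 2 ^ 3 + m 1 2 ^ 3 = 0)
    ∧ (m 0 0 * m 1 0 * m 2 1 + m 0 0 * m 1 1 * m 2 0 + m 0 1 * m 1 0 * m 2 0
        + 3 * m 0 0 ^ 2 * m 0 1 + 3 * m 1 0 ^ 2 * m 1 1 = 0)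
    ∧ (m 0 0 * m 1 0 * m 2 2 + m 0 0 * m 1 2 * m 2 0 + m 0 2 * m 1 0 * m 2 0
        + 3 * m 0 0 ^ 2 * m 0 2 + 3 * m 1 0 ^ 2 * m 1 2 = 0)
    ∧ (m 0 1 * m 1 1 * m 2 0 + m 0 1 * m 1 0 * m 2 1 + m 0 0 * m 1 1 * m 2 1
        + 3 * m 0 1 ^ 2 * m 0 0 + 3 * m 1 1 ^ 2 * m 1 0 = 0)
    ∧ (m 0 1 * m 1 1 * m 2 2 + m 0 1 * m 1 2 * m 2 1 + m 0 2 * m 1 1 * m 2 1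
        + 3 * m 0 1 ^ 2 * m 0 2 + 3 * m 1 1 ^ 2 * m 1 2 = 0)
    ∧ (m 0 2 * m 1 2 * m 2 0 + m 0 2 * m 1 0 * m 2 2 + m 0 0 * m 1 2 * m 2 2
        + 3 * m 0 2 ^ 2 * m 0 0 + 3 * m 1 2 ^ 2 * m 1 0 = 0)
    ∧ (m 0 2 * m 1 2 * m 2 1 + m 0 2 * m 1 1 * m 2 2 + m 0 1 * m 1 2 * m 2 2
        + 3 * m 0 2 ^ 2 * m 0 1 + 3 * m 1 2 ^ 2 * m 1 1 = 0)
    ∧ (m 0 0 * m 1 1 * m 2 2 + m 0 0 * m 1 2 * m 2 1 + m 0 1 * m 1 0 * m 2 2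
        + m 0 1 * m 1 2 * m 2 0 + m 0 2 * m 1 0 * m 2 1 + m 0 2 * m 1 1 * m 2 0
        + 6 * m 0 0 * m 0 1 * m 0 2 + 6 * m 1 0 * m 1 1 * m 1 2 = c) := by
  simp only [map_add, map_mul, map_pow, aeval_X, Fin.sum_univ_three, smul_eq_C_mul] at h
  have key := lin_indep
    (m 0 0 * m 1 0 * m 2 0 + m 0 0 ^ 3 + m 1 0 ^ 3 - c)
    (m 0 1 * m 1 1 * m 2 1 + m 0 1 ^ 3 + m 1 1 ^ 3 - c)
    (m 0 2 * m 1 2 * m 2 2 + m 0 2 ^ 3 + m 1 2 ^ 3)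
    (m 0 0 * m 1 0 * m 2 1 + m 0 0 * m 1 1 * m 2 0 + m 0 1 * m 1 0 * m 2 0
        + 3 * m 0 0 ^ 2 * m 0 1 + 3 * m 1 0 ^ 2 * m 1 1)
    (m 0 0 * m 1 0 * m 2 2 + m 0 0 * m 1 2 * m 2 0 + m 0 2 * m 1 0 * m 2 0
        + 3 * m 0 0 ^ 2 * m 0 2 + 3 * m 1 0 ^ 2 * m 1 2)
    (m 0 1 * m 1 1 * m 2 0 + m 0 1 * m 1 0 * m 2 1 + m 0 0 * m 1 1 * m 2 1
        + 3 * m 0 1 ^ 2 * m 0 0 + 3 * m 1 1 ^ 2 * m 1 0)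
    (m 0 1 * m 1 1 * m 2 2 + m 0 1 * m 1 2 * m 2 1 + m 0 2 * m 1 1 * m 2 1
        + 3 * m 0 1 ^ 2 * m 0 2 + 3 * m 1 1 ^ 2 * m 1 2)
    (m 0 2 * m 1 2 * m 2 0 + m 0 2 * m 1 0 * m 2 2 + m 0 0 * m 1 2 * m 2 2
        + 3 * m 0 2 ^ 2 * m 0 0 + 3 * m 1 2 ^ 2 * m 1 0)
    (m 0 2 * m 1 2 * m 2 1 + m 0 2 * m 1 1 * m 2 2 + m 0 1 * m 1 2 * m 2 2
        + 3 * m 0 2 ^ 2 * m 0 1 + 3 * m 1 2 ^ 2 * m 1 1)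
    (m 0 0 * m 1 1 * m 2 2 + m 0 0 * m 1 2 * m 2 1 + m 0 1 * m 1 0 * m 2 2
        + m 0 1 * m 1 2 * m 2 0 + m 0 2 * m 1 0 * m 2 1 + m 0 2 * m 1 1 * m 2 0
        + 6 * m 0 0 * m 0 1 * m 0 2 + 6 * m 1 0 * m 1 1 * m 1 2 - c)
    (by
      simp only [map_add, map_sub, map_mul, map_pow, map_ofNat]
      linear_combination h)
  obtain ⟨e1, e2, e3, e4, e5, e6, e7, e8, e9, e10⟩ := key
  exact ⟨by linear_combination e1, by linear_combination e2, e3, e4, e5, e6, e7, e8, e9,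
    by linear_combination e10⟩

lemma classify (h3 : (3 : k) ≠ 0) (g : GL (Fin 3) k) (c : kˣ)
    (h : aeval (fun i => ∑ j : Fin 3, C ((g : Matrix (Fin 3) (Fin 3) k) i j) * X j)
        (X 0 * X 1 * X 2 + X 0 ^ 3 + X 1 ^ 3 : MvPolynomial (Fin 3) k)
      = (c : k) • (X 0 * X 1 * X 2 + X 0 ^ 3 + X 1 ^ 3 : MvPolynomial (Fin 3) k)) :
    ∃ ζ a : k, ζ ^ 3 = 1 ∧ a ≠ 0 ∧
      ((g : Matrix (Fin 3) (Fin 3) k) = a • !![1, 0, 0; 0, ζ, 0; 0, 0, ζ ^ 2]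
        ∨ (g : Matrix (Fin 3) (Fin 3) k) = a • !![0, 1, 0; ζ, 0, 0; 0, 0, ζ ^ 2]) := by
  set m : Matrix (Fin 3) (Fin 3) k := (g : Matrix (Fin 3) (Fin 3) k) with hm
  obtain ⟨e1, e2, e3, e4, e5, e6, e7, e8, e9, e10⟩ := ten_eqs m (c : k) h
  have hc : (c : k) ≠ 0 := c.ne_zero
  have hvm : Matrix.vecMul
      ![m 1 2 * m 2 2 + 3 * m 0 2 ^ 2, m 0 2 * m 2 2 + 3 * m 1 2 ^ 2, m 0 2 * m 1 2] m = 0 := by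
    funext j
    fin_cases j <;>
      simp [Matrix.vecMul, dotProduct, Fin.sum_univ_three] <;>
      [linear_combination e8; linear_combination e9; linear_combination 3 * e3]
  have hu : ![m 1 2 * m 2 2 + 3 * m 0 2 ^ 2, m 0 2 * m 2 2 + 3 * m 1 2 ^ 2, m 0 2 * m 1 2]
      = (0 : Fin 3 → k) := by
    rw [← Matrix.vecMul_one
        ![m 1 2 * m 2 2 + 3 * m 0 2 ^ 2, m 0 2 * m 2 2 + 3 * m 1 2 ^ 2, m 0 2 * m 1 2],
      ← g.mul_inv, ← hm, ← Matrix.vecMul_vecMul, hvm, Matrix.zero_vecMul]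
  have hu0 : m 1 2 * m 2 2 + 3 * m 0 2 ^ 2 = 0 := congrFun hu 0
  have hu1 : m 0 2 * m 2 2 + 3 * m 1 2 ^ 2 = 0 := congrFun hu 1
  have hu2 : m 0 2 * m 1 2 = 0 := congrFun hu 2
  have hz : m 0 2 = 0 ∧ m 1 2 = 0 := by
    rcases mul_eq_zero.mp hu2 with h0 | h0
    · refine ⟨h0, ?_⟩
      have : (3 : k) * m 1 2 ^ 2 = 0 := by rw [h0] at hu1; linear_combination hu1
      have := (mul_eq_zero.mp this).resolve_left h3
      exact pow_eq_zero_iff (n := 2) (by norm_num) |>.mp this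
    · refine ⟨?_, h0⟩
      have : (3 : k) * m 0 2 ^ 2 = 0 := by rw [h0] at hu0; linear_combination hu0
      have := (mul_eq_zero.mp this).resolve_left h3
      exact pow_eq_zero_iff (n := 2) (by norm_num) |>.mp this
  obtain ⟨ha2, hb2⟩ := hz
  have hdet : m.det ≠ 0 := by
    have : IsUnit m.det := (Matrix.isUnit_iff_isUnit_det m).mp g.isUnit
    exact this.ne_zero
  have hdet' : m 2 2 * (m 0 0 * m 1 1 - m 0 1 * m 1 0) ≠ 0 := by
    intro H
    apply hdet
    rw [Matrix.det_fin_three, ha2, hb2]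
    linear_combination H
  have hd2 : m 2 2 ≠ 0 := fun H => hdet' (by rw [H]; ring)
  have hQ : m 0 0 * m 1 1 - m 0 1 * m 1 0 ≠ 0 := fun H => hdet' (by rw [H]; ring)
  have hab0 : m 0 0 * m 1 0 = 0 := by
    have : m 0 0 * m 1 0 * m 2 2 = 0 := by
      rw [ha2, hb2] at e5; linear_combination e5
    exact (mul_eq_zero.mp this).resolve_right hd2
  have hab1 : m 0 1 * m 1 1 = 0 := by
    have : m 0 1 * m 1 1 * m 2 2 = 0 := by
      rw [ha2, hb2] at e7; linear_combination e7
    exact (mul_eq_zero.mp this).resolve_right hd2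
  by_cases h00 : m 0 0 = 0
  · have h0110 : m 0 1 * m 1 0 ≠ 0 := by
      intro H; apply hQ; rw [h00, H]; ring
    have h01 : m 0 1 ≠ 0 := fun H => h0110 (by rw [H]; ring)
    have h10 : m 1 0 ≠ 0 := fun H => h0110 (by rw [H]; ring)
    have h11 : m 1 1 = 0 := by
      rcases mul_eq_zero.mp hab1 with H | H
      · exact absurd H h01
      · exact H
    have h20 : m 2 0 = 0 := by
      have : m 0 1 * m 1 0 * m 2 0 = 0 := by
        rw [h00, h11] at e4; linear_combination e4
      exact (mul_eq_zero.mp this).resolve_left h0110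
    have h21 : m 2 1 = 0 := by
      have : m 0 1 * m 1 0 * m 2 1 = 0 := by
        rw [h00, h11] at e6; linear_combination e6
      exact (mul_eq_zero.mp this).resolve_left h0110
    have ec1 : m 1 0 ^ 3 = (c : k) := by
      rw [h00] at e1; linear_combination e1
    have ec2 : m 0 1 ^ 3 = (c : k) := by
      rw [h11] at e2; linear_combination e2
    have ec3 : m 0 1 * m 1 0 * m 2 2 = (c : k) := by
      rw [h00, h11, ha2, hb2] at e10; linear_combination e10
    have h22 : m 0 1 * m 2 2 = m 1 0 ^ 2 := by
      apply mul_left_cancel₀ h10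
      linear_combination ec3 - ec1
    refine ⟨m 1 0 / m 0 1, m 0 1, ?_, h01, Or.inr ?_⟩
    · rw [div_pow, div_eq_one_iff_eq (pow_ne_zero 3 h01), ec1, ec2]
    · funext i j
      fin_cases i <;> fin_cases j <;>
        first
          | (simp [Matrix.smul_apply, Matrix.vecHead, Matrix.vecTail, h00, h11, ha2, hb2,
              h20, h21]; done)
          | (simp only [Matrix.smul_apply, Matrix.cons_val', Matrix.cons_val_zero,
              Matrix.cons_val_one, Matrix.head_cons, Matrix.empty_val',
              Matrix.cons_val_fin_one, Matrix.head_fin_const, smul_eq_mul,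
              Matrix.cons_val_two, Matrix.vecHead, Matrix.vecTail];
             field_simp;
             try (simp; field_simp; try linear_combination h22))
  · have h10 : m 1 0 = 0 := (mul_eq_zero.mp hab0).resolve_left h00
    have h0011 : m 0 0 * m 1 1 ≠ 0 := by
      intro H; apply hQ; rw [h10, H]; ring
    have h11 : m 1 1 ≠ 0 := fun H => h0011 (by rw [H]; ring)
    have h01 : m 0 1 = 0 := by
      rcases mul_eq_zero.mp hab1 with H | H
      · exact H
      · exact absurd H h11
    have h20 : m 2 0 = 0 := by
      have : m 0 0 * m 1 1 * m 2 0 = 0 := by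
        rw [h01, h10] at e4; linear_combination e4
      exact (mul_eq_zero.mp this).resolve_left h0011
    have h21 : m 2 1 = 0 := by
      have : m 0 0 * m 1 1 * m 2 1 = 0 := by
        rw [h01, h10] at e6; linear_combination e6
      exact (mul_eq_zero.mp this).resolve_left h0011
    have ec1 : m 0 0 ^ 3 = (c : k) := by
      rw [h10] at e1; linear_combination e1
    have ec2 : m 1 1 ^ 3 = (c : k) := by
      rw [h01] at e2; linear_combination e2
    have ec3 : m 0 0 * m 1 1 * m 2 2 = (c : k) := by
      rw [h01, h10, ha2, hb2] at e10; linear_combination e10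
    have h22 : m 0 0 * m 2 2 = m 1 1 ^ 2 := by
      apply mul_left_cancel₀ h11
      linear_combination ec3 - ec2
    refine ⟨m 1 1 / m 0 0, m 0 0, ?_, h00, Or.inl ?_⟩
    · rw [div_pow, div_eq_one_iff_eq (pow_ne_zero 3 h00), ec1, ec2]
    · funext i j
      fin_cases i <;> fin_cases j <;>
        first
          | (simp [Matrix.smul_apply, Matrix.vecHead, Matrix.vecTail, h01, h10, ha2, hb2,
              h20, h21]; done)
          | (simp only [Matrix.smul_apply, Matrix.cons_val', Matrix.cons_val_zero,
              Matrix.cons_val_one, Matrix.head_cons, Matrix.empty_val',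
              Matrix.cons_val_fin_one, Matrix.head_fin_const, smul_eq_mul,
              Matrix.cons_val_two, Matrix.vecHead, Matrix.vecTail];
             field_simp;
             try (simp; field_simp; try linear_combination h22))

def Dm (ζ : kˣ) : Matrix (Fin 3) (Fin 3) k := !![1,0,0; 0,(ζ:k),0; 0,0,(ζ:k)^2]

def Wm : Matrix (Fin 3) (Fin 3) k := !![0,1,0; 1,0,0; 0,0,1]

lemma Dm_mul (ζ η : kˣ) : (Dm ζ * Dm η : Matrix (Fin 3) (Fin 3) k) = Dm (ζ * η) := by
  funext i j
  fin_cases i <;> fin_cases j <;>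
    simp [Dm, Matrix.mul_apply, Fin.sum_univ_three, Units.val_mul, Matrix.vecHead,
      Matrix.vecTail, Function.comp] <;> ring

lemma Dm_one : (Dm 1 : Matrix (Fin 3) (Fin 3) k) = 1 := by
  funext i j
  fin_cases i <;> fin_cases j <;>
    simp [Dm, Matrix.one_apply, Matrix.vecHead, Matrix.vecTail, Function.comp]

lemma Wm_mul_Wm : (Wm * Wm : Matrix (Fin 3) (Fin 3) k) = 1 := by
  funext i j
  fin_cases i <;> fin_cases j <;>
    simp [Wm, Matrix.mul_apply, Fin.sum_univ_three, Matrix.one_apply, Matrix.vecHead,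
      Matrix.vecTail, Function.comp]

lemma val_inv_sq (ζ : kˣ) (hζ : (ζ:k)^3 = 1) : ((ζ⁻¹ : kˣ) : k) = (ζ:k)^2 := by
  rw [Units.val_inv_eq_inv_val]
  exact inv_eq_of_mul_eq_one_right (by linear_combination hζ)

lemma WDW (ζ : kˣ) (hζ : (ζ:k)^3 = 1) :
    (Wm * Dm ζ * Wm : Matrix (Fin 3) (Fin 3) k) = (ζ:k) • Dm ζ⁻¹ := by
  funext i j
  fin_cases i <;> fin_cases j <;>
    simp [Dm, Wm, Matrix.mul_apply, Fin.sum_univ_three, val_inv_sq ζ hζ, Matrix.smul_apply,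
      Matrix.vecHead, Matrix.vecTail, Function.comp] <;>
    first
      | rfl
      | linear_combination hζ
      | linear_combination (ζ:k) * hζ
      | linear_combination (ζ:k)^2 * hζ
      | linear_combination (1 + (ζ:k)^2) * hζ
      | linear_combination 2 * hζ
      | linear_combination 3 * hζ
      | linear_combination (2 + (ζ:k)^2) * hζ
      | linear_combination (3 + (ζ:k)^2) * hζ
      | linear_combination (2 + 2*(ζ:k)^2) * hζ
      | linear_combination (-1 : k) * hζ
      | linear_combination (-(ζ:k)) * hζ
      | linear_combination (-(ζ:k)^2) * hζ
      | linear_combination (-1 - (ζ:k)^2) * hζ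
      | linear_combination (-1 - (ζ:k)) * hζ

lemma DW (ζ : kˣ) : (Dm ζ * Wm : Matrix (Fin 3) (Fin 3) k)
    = !![0,1,0; (ζ:k),0,0; 0,0,(ζ:k)^2] := by
  funext i j
  fin_cases i <;> fin_cases j <;>
    simp [Dm, Wm, Matrix.mul_apply, Fin.sum_univ_three, Matrix.vecHead, Matrix.vecTail,
      Function.comp]

def DGL (ζ : kˣ) : GL (Fin 3) k :=
  ⟨Dm ζ, Dm ζ⁻¹, by rw [Dm_mul, mul_inv_cancel, Dm_one], by rw [Dm_mul, inv_mul_cancel, Dm_one]⟩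

def WGL : GL (Fin 3) k := ⟨Wm, Wm, Wm_mul_Wm, Wm_mul_Wm⟩

variable (S : Subgroup (GL (Fin 3) k))
variable (hS : ∀ g : GL (Fin 3) k, g ∈ S ↔ ∃ c : kˣ,
        aeval (fun i => ∑ j : Fin 3, C ((g : Matrix (Fin 3) (Fin 3) k) i j) * X j)
            (X 0 * X 1 * X 2 + X 0 ^ 3 + X 1 ^ 3 : MvPolynomial (Fin 3) k)
          = (c : k) • (X 0 * X 1 * X 2 + X 0 ^ 3 + X 1 ^ 3 : MvPolynomial (Fin 3) k))

include hS in
lemma D_mem (ζ : kˣ) (hζ : (ζ:k)^3 = 1) : DGL ζ ∈ S := by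
  rw [hS]
  refine ⟨1, ?_⟩
  have hC : (C ((ζ:k)) : MvPolynomial (Fin 3) k) ^ 3 = 1 := by
    rw [← map_pow, hζ, map_one]
  show aeval (fun i => ∑ j : Fin 3, C ((Dm ζ : Matrix (Fin 3) (Fin 3) k) i j) * X j) _ = _
  simp only [Fin.sum_univ_three, map_add, map_mul, map_pow, aeval_X, Units.val_one, one_smul]
  simp [Dm, Matrix.vecHead, Matrix.vecTail, Function.comp]
  linear_combination (X 0 * X 1 * X 2 + X 1 ^ 3 : MvPolynomial (Fin 3) k) * hC

include hS in
lemma W_mem : WGL ∈ S := by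
  rw [hS]
  refine ⟨1, ?_⟩
  show aeval (fun i => ∑ j : Fin 3, C ((Wm : Matrix (Fin 3) (Fin 3) k) i j) * X j) _ = _
  simp only [Fin.sum_univ_three, map_add, map_mul, map_pow, aeval_X, Units.val_one, one_smul]
  simp [Wm, Matrix.vecHead, Matrix.vecTail, Function.comp]
  ring

def phi0 : rootsOfUnity 3 k →* S where
  toFun ζ := ⟨DGL ζ.1, D_mem S hS ζ.1 (by
    have h2 := ζ.2
    rw [mem_rootsOfUnity] at h2
    calc ((ζ.1 : kˣ) : k) ^ 3 = ((ζ.1 ^ 3 : kˣ) : k) := by rw [Units.val_pow_eq_pow_val]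
    _ = 1 := by rw [h2, Units.val_one])⟩
  map_one' := Subtype.ext (Units.ext Dm_one)
  map_mul' a b := Subtype.ext (Units.ext (Dm_mul a.1 b.1).symm)

def psi0 : ℤˣ →* S where
  toFun u := if u = 1 then 1 else ⟨WGL, W_mem S hS⟩
  map_one' := if_pos rfl
  map_mul' a b := by
    have hW : (⟨WGL, W_mem S hS⟩ : S) * ⟨WGL, W_mem S hS⟩ = 1 :=
      Subtype.ext (Units.ext Wm_mul_Wm)
    rcases Int.units_eq_one_or a with rfl | rfl <;>
      rcases Int.units_eq_one_or b with rfl | rfl <;>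
      simp [hW, (by decide : ((-1 : ℤˣ) ≠ 1)), Int.units_mul_self]

end Stmt12Aux

open Stmt12Aux in
/-- Over a field `k` with `6` invertible, the projective stabilizer `S/Z` of the nodal
cubic `X₀X₁X₂ + X₀³ + X₁³` is isomorphic to `μ₃(k) ⋊ C₂`, with `C₂` acting on the cube
roots of unity by inversion. -/
theorem stmt12 (k : Type*) [Field k] (h6 : IsUnit (6 : k))
    (S : Subgroup (GL (Fin 3) k))
    (hS : ∀ g : GL (Fin 3) k, g ∈ S ↔ ∃ c : kˣ,
        aeval (fun i => ∑ j : Fin 3, C ((g : Matrix (Fin 3) (Fin 3) k) i j) * X j)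
            (X 0 * X 1 * X 2 + X 0 ^ 3 + X 1 ^ 3 : MvPolynomial (Fin 3) k)
          = (c : k) • (X 0 * X 1 * X 2 + X 0 ^ 3 + X 1 ^ 3 : MvPolynomial (Fin 3) k))
    (Z : Subgroup (GL (Fin 3) k))
    (hZ : ∀ g : GL (Fin 3) k, g ∈ Z ↔ ∃ c : kˣ,
        (g : Matrix (Fin 3) (Fin 3) k) = (c : k) • (1 : Matrix (Fin 3) (Fin 3) k))
    [(Z.subgroupOf S).Normal] :
    Nonempty ((S ⧸ Z.subgroupOf S) ≃*
      (rootsOfUnity 3 k ⋊[invAction (rootsOfUnity 3 k)] ℤˣ)) := by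
  classical
  have h6' : (6 : k) ≠ 0 := h6.ne_zero
  have h3 : (3 : k) ≠ 0 := fun H => h6' (by rw [show (6:k) = 2*3 by norm_num, H, mul_zero])
  set mkq : S →* S ⧸ Z.subgroupOf S := QuotientGroup.mk' (Z.subgroupOf S) with hmkq
  -- scalar multiples become equal in the quotient
  have hscal : ∀ (x y : S) (a : kˣ),
      ((y : GL (Fin 3) k) : Matrix (Fin 3) (Fin 3) k)
        = (a : k) • ((x : GL (Fin 3) k) : Matrix (Fin 3) (Fin 3) k) → mkq x = mkq y := by
    intro x y a hxy
    rw [hmkq, QuotientGroup.mk'_apply, QuotientGroup.mk'_apply, QuotientGroup.eq]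
    rw [Subgroup.mem_subgroupOf]
    rw [hZ]
    refine ⟨a, ?_⟩
    show (((x⁻¹ : S) : GL (Fin 3) k) * ((y : S) : GL (Fin 3) k)
      : GL (Fin 3) k).val = (a : k) • 1
    have : (((x⁻¹ : S) : GL (Fin 3) k)).val
        = (((x : S) : GL (Fin 3) k)⁻¹ : GL (Fin 3) k).val := by norm_cast
    rw [Units.val_mul, this, hxy, Matrix.mul_smul, Units.inv_mul]
  have hW : (⟨WGL, W_mem S hS⟩ : S) * ⟨WGL, W_mem S hS⟩ = 1 :=
    Subtype.ext (Units.ext Wm_mul_Wm)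
  have hWinv : (⟨WGL, W_mem S hS⟩ : S)⁻¹ = ⟨WGL, W_mem S hS⟩ :=
    inv_eq_of_mul_eq_one_right hW
  set φ : rootsOfUnity 3 k →* S ⧸ Z.subgroupOf S := mkq.comp (phi0 S hS) with hφ
  set ψ : ℤˣ →* S ⧸ Z.subgroupOf S := mkq.comp (psi0 S hS) with hψ
  have hψneg : ψ (-1) = mkq ⟨WGL, W_mem S hS⟩ := by
    rw [hψ]
    show mkq (psi0 S hS (-1)) = _
    have : psi0 S hS (-1) = ⟨WGL, W_mem S hS⟩ := by
      simp [psi0, (by decide : ¬((-1 : ℤˣ) = 1))]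
    rw [this]
  have hval3 : ∀ n : rootsOfUnity 3 k, ((n.1 : kˣ) : k) ^ 3 = 1 := by
    intro n
    have h2 := n.2
    rw [mem_rootsOfUnity] at h2
    calc ((n.1 : kˣ) : k) ^ 3 = ((n.1 ^ 3 : kˣ) : k) := by rw [Units.val_pow_eq_pow_val]
    _ = 1 := by rw [h2, Units.val_one]
  have hcompat : ∀ u : ℤˣ,
      φ.comp ((invAction (rootsOfUnity 3 k)) u).toMonoidHom
        = (MulAut.conj (ψ u)).toMonoidHom.comp φ := by
    intro u
    ext n
    rcases Int.units_eq_one_or u with rfl | rfl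
    · simp
    · show φ (n ^ ((-1 : ℤˣ) : ℤ)) = MulAut.conj (ψ (-1)) (φ n)
      rw [MulAut.conj_apply, hψneg]
      have hn : (n : rootsOfUnity 3 k) ^ ((-1 : ℤˣ) : ℤ) = n⁻¹ := by
        norm_num
      rw [hn, hφ]
      show mkq (phi0 S hS n⁻¹) = mkq ⟨WGL, W_mem S hS⟩ * mkq (phi0 S hS n)
        * (mkq ⟨WGL, W_mem S hS⟩)⁻¹
      rw [← map_inv, hWinv, ← map_mul, ← map_mul]
      refine hscal _ _ n.1 ?_
      show ((⟨WGL, W_mem S hS⟩ * phi0 S hS n * ⟨WGL, W_mem S hS⟩ : S) : GL (Fin 3) k).val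
        = (n.1 : k) • ((phi0 S hS n⁻¹ : S) : GL (Fin 3) k).val
      have hlhs : ((⟨WGL, W_mem S hS⟩ * phi0 S hS n * ⟨WGL, W_mem S hS⟩ : S)
          : GL (Fin 3) k).val = Wm * Dm n.1 * Wm := rfl
      have hrhs : ((phi0 S hS n⁻¹ : S) : GL (Fin 3) k).val = Dm n.1⁻¹ := rfl
      rw [hlhs, hrhs, WDW n.1 (hval3 n)]
  set Ψ : (rootsOfUnity 3 k ⋊[invAction (rootsOfUnity 3 k)] ℤˣ) →* S ⧸ Z.subgroupOf S :=
    SemidirectProduct.lift φ ψ hcompat with hΨ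
  have happ : ∀ a : (rootsOfUnity 3 k ⋊[invAction (rootsOfUnity 3 k)] ℤˣ),
      Ψ a = φ a.1 * ψ a.2 := fun a => rfl
  have hinj : Function.Injective Ψ := by
    rw [injective_iff_map_eq_one]
    rintro ⟨n, u⟩ ha
    rw [happ] at ha
    rcases Int.units_eq_one_or u with rfl | rfl
    · rw [map_one, mul_one] at ha
      have hmem := (QuotientGroup.eq_one_iff _).mp ha
      rw [Subgroup.mem_subgroupOf] at hmem
      obtain ⟨cc, hcc⟩ := (hZ _).mp hmem
      have hcc' : (Dm n.1 : Matrix (Fin 3) (Fin 3) k) = (cc : k) • 1 := hcc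
      have h00 := congrFun (congrFun hcc' 0) 0
      have h11 := congrFun (congrFun hcc' 1) 1
      simp [Dm, Matrix.smul_apply, Matrix.one_apply] at h00 h11
      have hn1 : n = 1 := Subtype.ext (Units.ext (by rw [h11, ← h00]; simp))
      rw [hn1]
      rfl
    · exfalso
      have hφapp : φ n = mkq (phi0 S hS n) := rfl
      rw [hψneg, hφapp, ← map_mul] at ha
      have hmem := (QuotientGroup.eq_one_iff _).mp ha
      rw [Subgroup.mem_subgroupOf] at hmem
      obtain ⟨cc, hcc⟩ := (hZ _).mp hmem
      have hcc' : (Dm n.1 * Wm : Matrix (Fin 3) (Fin 3) k) = (cc : k) • 1 := hcc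
      rw [DW] at hcc'
      have h01 := congrFun (congrFun hcc' 0) 1
      simp [Matrix.smul_apply, Matrix.one_apply] at h01
  have hsurj : Function.Surjective Ψ := by
    intro q
    obtain ⟨x, rfl⟩ := QuotientGroup.mk'_surjective (Z.subgroupOf S) q
    obtain ⟨c, heq⟩ := (hS x.1).mp x.2
    obtain ⟨ζ, a, hζ3, ha, hcase⟩ := classify h3 x.1 c heq
    have hζ0 : ζ ≠ 0 := by
      intro H
      rw [H] at hζ3
      norm_num at hζ3
    have hmem3 : Units.mk0 ζ hζ0 ∈ rootsOfUnity 3 k := by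
      rw [mem_rootsOfUnity]
      exact Units.ext (by simpa using hζ3)
    set n : rootsOfUnity 3 k := ⟨Units.mk0 ζ hζ0, hmem3⟩ with hn
    rcases hcase with hmat | hmat
    · refine ⟨SemidirectProduct.inl n, ?_⟩
      rw [SemidirectProduct.lift_inl]
      show mkq (phi0 S hS n) = mkq x
      refine hscal _ _ (Units.mk0 a ha) ?_
      exact hmat
    · refine ⟨⟨n, -1⟩, ?_⟩
      rw [happ, hψneg]
      show φ n * mkq ⟨WGL, W_mem S hS⟩ = mkq x
      rw [hφ]
      show mkq (phi0 S hS n) * mkq ⟨WGL, W_mem S hS⟩ = mkq x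
      rw [← map_mul]
      refine hscal _ _ (Units.mk0 a ha) ?_
      have hlhs : ((phi0 S hS n * ⟨WGL, W_mem S hS⟩ : S) : GL (Fin 3) k).val
          = Dm n.1 * Wm := rfl
      rw [hlhs, DW]
      exact hmat
  exact ⟨(MulEquiv.ofBijective Ψ ⟨hinj, hsurj⟩).symm⟩
end

section
/- Let k be a field in which 6 is invertible and let f = X₀X₁X₂ + X₂³ ∈ k[X₀,X₁,X₂] (a smooth conic together with a non-tangent line). Then the projective stabilizer S_f/Z is isomorphic to the semidirect product kˣ ⋊ C₂, where C₂ is the cyclic group of order 2 and its nontrivial element acts on kˣ by inversion. -/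
open MvPolynomial

section Aux

open SemidirectProduct

variable {k : Type*} [Field k]

def dmat (t : kˣ) : Matrix (Fin 3) (Fin 3) k := !![(t:k),0,0; 0,((t⁻¹:kˣ):k),0; 0,0,1]
def wmat (k : Type*) [Field k] : Matrix (Fin 3) (Fin 3) k := !![0,1,0; 1,0,0; 0,0,1]

lemma dmat_mul (t s : kˣ) : dmat t * dmat s = dmat (t*s) := by
  ext i j
  fin_cases i <;> fin_cases j <;>
    simp [dmat, Matrix.mul_apply, Fin.sum_univ_three, Matrix.vecHead, Matrix.vecTail, mul_comm]

lemma dmat_one : (dmat 1 : Matrix (Fin 3) (Fin 3) k) = 1 := by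
  ext i j
  fin_cases i <;> fin_cases j <;> simp [dmat, Matrix.one_apply, Matrix.vecHead, Matrix.vecTail]

lemma wmat_mul_self : wmat k * wmat k = 1 := by
  ext i j
  fin_cases i <;> fin_cases j <;>
    simp [wmat, Matrix.mul_apply, Fin.sum_univ_three, Matrix.one_apply, Matrix.vecHead, Matrix.vecTail]

lemma wmat_dmat (t : kˣ) : wmat k * dmat t * wmat k = dmat t⁻¹ := by
  ext i j
  fin_cases i <;> fin_cases j <;>
    simp [wmat, dmat, Matrix.mul_apply, Fin.sum_univ_three, Matrix.vecHead, Matrix.vecTail, mul_comm]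

def dgl (t : kˣ) : GL (Fin 3) k :=
  ⟨dmat t, dmat t⁻¹, by rw [dmat_mul, mul_inv_cancel, dmat_one], by rw [dmat_mul, inv_mul_cancel, dmat_one]⟩

def wgl (k : Type*) [Field k] : GL (Fin 3) k := ⟨wmat k, wmat k, wmat_mul_self, wmat_mul_self⟩

def dHom : kˣ →* GL (Fin 3) k where
  toFun := dgl
  map_one' := by apply Units.ext; exact dmat_one
  map_mul' t s := by apply Units.ext; exact (dmat_mul t s).symm

def wHom (k : Type*) [Field k] : ℤˣ →* GL (Fin 3) k where
  toFun u := if u = 1 then 1 else wgl k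
  map_one' := by simp
  map_mul' u v := by
    rcases Int.units_eq_one_or u with hu | hu <;>
      rcases Int.units_eq_one_or v with hv | hv <;>
        subst hu <;> subst hv <;> simp
    apply Units.ext
    exact wmat_mul_self.symm

def theta (k : Type*) [Field k] : (kˣ ⋊[invAction kˣ] ℤˣ) →* GL (Fin 3) k :=
  SemidirectProduct.lift dHom (wHom k) (by
    intro u
    refine MonoidHom.ext fun t => Units.ext ?_
    rcases Int.units_eq_one_or u with hu | hu <;> subst hu
    · simp [invAction, wHom, dHom]
    · show (dgl (t ^ ((-1 : ℤˣ) : ℤ)) : Matrix (Fin 3) (Fin 3) k) = ((wgl k * dgl t * (wgl k)⁻¹ : GL (Fin 3) k) : Matrix (Fin 3) (Fin 3) k)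
      have hw : (wgl k)⁻¹ = wgl k := by
        rw [inv_eq_iff_mul_eq_one]; exact Units.ext wmat_mul_self
      rw [hw, Units.val_mul, Units.val_mul]
      show dmat (t ^ ((-1 : ℤˣ) : ℤ)) = wmat k * dmat t * wmat k
      rw [wmat_dmat]
      norm_num)

lemma theta_apply (t : kˣ) (u : ℤˣ) : theta k ⟨t, u⟩ = dgl t * (wHom k u) := by
  have : (⟨t, u⟩ : kˣ ⋊[invAction kˣ] ℤˣ) = inl t * inr u := by
    ext <;> simp
  rw [this, map_mul, theta]
  simp
  rfl

lemma lin_zero {p q : k}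
    (h : (C p * X 0 + C q * X 1 : MvPolynomial (Fin 3) k) = 0) : p = 0 ∧ q = 0 := by
  constructor
  · have := congrArg (coeff (Finsupp.single 0 1)) h
    simpa [coeff_X', Finsupp.ext_iff, Finsupp.single_apply, Fin.forall_fin_succ] using this
  · have := congrArg (coeff (Finsupp.single 1 1)) h
    simpa [coeff_X', Finsupp.ext_iff, Finsupp.single_apply, Fin.forall_fin_succ] using this

lemma quad_coeffs {c00 c11 c22 c01 c02 c12 d00 d11 d22 d01 d02 d12 : k}
    (h : C c00 * (X 0*X 0) + C c11*(X 1*X 1) + C c22*(X 2*X 2) + C c01*(X 0*X 1)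
        + C c02*(X 0*X 2) + C c12*(X 1*X 2)
      = (C d00 * (X 0*X 0) + C d11*(X 1*X 1) + C d22*(X 2*X 2) + C d01*(X 0*X 1)
        + C d02*(X 0*X 2) + C d12*(X 1*X 2) : MvPolynomial (Fin 3) k)) :
    c00 = d00 ∧ c11 = d11 ∧ c22 = d22 ∧ c01 = d01 ∧ c02 = d02 ∧ c12 = d12 := by
  refine ⟨?_, ?_, ?_, ?_, ?_, ?_⟩
  · have := congrArg (coeff (Finsupp.single 0 2)) h
    simpa [coeff_mul_X', coeff_X', Finsupp.ext_iff, Finsupp.single_apply,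
      Fin.forall_fin_succ] using this
  · have := congrArg (coeff (Finsupp.single 1 2)) h
    simpa [coeff_mul_X', coeff_X', Finsupp.ext_iff, Finsupp.single_apply,
      Fin.forall_fin_succ] using this
  · have := congrArg (coeff (Finsupp.single 2 2)) h
    simpa [coeff_mul_X', coeff_X', Finsupp.ext_iff, Finsupp.single_apply,
      Fin.forall_fin_succ] using this
  · have := congrArg (coeff (Finsupp.single 0 1 + Finsupp.single 1 1)) h
    simpa [coeff_mul_X', coeff_X', Finsupp.ext_iff, Finsupp.single_apply,
      Fin.forall_fin_succ] using this
  · have := congrArg (coeff (Finsupp.single 0 1 + Finsupp.single 2 1)) h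
    simpa [coeff_mul_X', coeff_X', Finsupp.ext_iff, Finsupp.single_apply,
      Fin.forall_fin_succ] using this
  · have := congrArg (coeff (Finsupp.single 1 1 + Finsupp.single 2 1)) h
    simpa [coeff_mul_X', coeff_X', Finsupp.ext_iff, Finsupp.single_apply,
      Fin.forall_fin_succ] using this

lemma mul_linear_expand (a0 a1 a2 b0 b1 b2 : k) :
    (C a0*X 0 + C a1*X 1 + C a2*X 2) * (C b0*X 0 + C b1*X 1 + C b2*X 2)
    = C (a0*b0) * (X 0 * X 0) + C (a1*b1) * (X 1 * X 1) + C (a2*b2) * (X 2 * X 2)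
      + C (a0*b1 + a1*b0) * (X 0 * X 1) + C (a0*b2 + a2*b0) * (X 0 * X 2)
      + (C (a1*b2 + a2*b1) * (X 1 * X 2) : MvPolynomial (Fin 3) k) := by
  simp only [map_mul, map_add]; ring

theorem classify (c : kˣ) (M : Matrix (Fin 3) (Fin 3) k)
    (hc : aeval (fun i => ∑ j : Fin 3, C (M i j) * X j)
            (X 0 * X 1 * X 2 + X 2 ^ 3 : MvPolynomial (Fin 3) k)
          = (c : k) • (X 0 * X 1 * X 2 + X 2 ^ 3 : MvPolynomial (Fin 3) k)) :
    (M 0 1 = 0 ∧ M 0 2 = 0 ∧ M 1 0 = 0 ∧ M 1 2 = 0 ∧ M 2 0 = 0 ∧ M 2 1 = 0 ∧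
      M 0 0 * M 1 1 = M 2 2 ^ 2 ∧ M 2 2 ≠ 0 ∧ M 0 0 ≠ 0) ∨
    (M 0 0 = 0 ∧ M 0 2 = 0 ∧ M 1 1 = 0 ∧ M 1 2 = 0 ∧ M 2 0 = 0 ∧ M 2 1 = 0 ∧
      M 0 1 * M 1 0 = M 2 2 ^ 2 ∧ M 2 2 ≠ 0 ∧ M 0 1 ≠ 0) := by
  have hcne : (c : k) ≠ 0 := c.ne_zero
  simp only [map_add, map_mul, map_pow, aeval_X, Fin.sum_univ_three, smul_eq_C_mul] at hc
  -- set X2 := 0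
  have h0 := congrArg (aeval (fun i : Fin 3 => if i = 2 then (0 : MvPolynomial (Fin 3) k) else X i)) hc
  simp only [map_add, map_mul, map_pow, aeval_X, aeval_C] at h0
  simp only [Fin.reduceEq, reduceIte, MvPolynomial.algebraMap_eq, mul_zero, zero_mul, add_zero,
    zero_add, mul_one, zero_pow, ne_eq, OfNat.ofNat_ne_zero, not_false_eq_true] at h0
  -- factor the restriction to X2 = 0
  set a0 := M 0 0; set a1 := M 0 1; set a2 := M 0 2
  set b0 := M 1 0; set b1 := M 1 1; set b2 := M 1 2
  set p := M 2 0; set q := M 2 1; set r := M 2 2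
  have h0' : (C p * X 0 + C q * X 1) *
      ((C a0 * X 0 + C a1 * X 1) * (C b0 * X 0 + C b1 * X 1)
        + (C p * X 0 + C q * X 1) ^ 2) = (0 : MvPolynomial (Fin 3) k) := by
    linear_combination h0
  rcases mul_eq_zero.mp h0' with h1 | h2
  · -- L2 restricted to X2=0 vanishes : p = q = 0
    obtain ⟨hp, hq⟩ := lin_zero h1
    rw [hp, hq] at hc
    simp only [map_zero, zero_mul, zero_add, add_zero] at hc
    -- r ≠ 0
    have hr : r ≠ 0 := by
      intro h
      rw [h] at hc
      simp only [map_zero, zero_mul, mul_zero, zero_pow, zero_add, add_zero,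
        OfNat.ofNat_ne_zero, ne_eq, not_false_eq_true] at hc
      have := congrArg (coeff (Finsupp.single 0 1 + Finsupp.single 1 1 + Finsupp.single 2 1)) hc
      simp [coeff_C_mul, coeff_mul_X', coeff_X', coeff_X_pow, Finsupp.ext_iff,
        Finsupp.single_apply, Fin.forall_fin_succ] at this
      exact hcne this.symm
    -- cancel X 2
    have hq1 : (X 2 : MvPolynomial (Fin 3) k) *
        (C (r*(a0*b0)) * (X 0*X 0) + C (r*(a1*b1))*(X 1*X 1) + C (r*(a2*b2) + r^3)*(X 2*X 2)
          + C (r*(a0*b1+a1*b0))*(X 0*X 1) + C (r*(a0*b2+a2*b0))*(X 0*X 2)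
          + C (r*(a1*b2+a2*b1))*(X 1*X 2))
        = X 2 * (C 0 * (X 0*X 0) + C 0*(X 1*X 1) + C ((c:k))*(X 2*X 2)
          + C ((c:k))*(X 0*X 1) + C 0*(X 0*X 2) + C 0*(X 1*X 2)) := by
      simp only [map_mul, map_add, map_pow, map_zero]
      linear_combination hc
    obtain ⟨E1, E2, E3, E4, E5, E6⟩ := quad_coeffs (mul_left_cancel₀ (X_ne_zero 2) hq1)
    by_cases ha0 : a0 = 0
    · -- antidiagonal case
      right
      have ha1b0 : r * (a1 * b0) = (c:k) := by rw [← E4, ha0]; ring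
      have ha1 : a1 ≠ 0 := fun h => hcne (by rw [← ha1b0, h]; ring)
      have hb0 : b0 ≠ 0 := fun h => hcne (by rw [← ha1b0, h]; ring)
      have hb1 : b1 = 0 := by
        have := (mul_eq_zero.mp E2).resolve_left hr
        exact (mul_eq_zero.mp this).resolve_left ha1
      have hb2 : b2 = 0 := by
        have h6' := E6
        rw [hb1, mul_zero, add_zero] at h6'
        have := (mul_eq_zero.mp h6').resolve_left hr
        exact (mul_eq_zero.mp this).resolve_left ha1
      have ha2 : a2 = 0 := by
        have h5' := E5
        rw [ha0, zero_mul, zero_add] at h5'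
        have := (mul_eq_zero.mp h5').resolve_left hr
        exact (mul_eq_zero.mp this).resolve_right hb0
      refine ⟨ha0, ha2, hb1, hb2, hp, hq, ?_, hr, ha1⟩
      have hcr : (c : k) = r ^ 3 := by rw [← E3, ha2]; ring
      have h' : r * (a1 * b0) = r * r ^ 2 := by rw [ha1b0, hcr]; ring
      exact mul_left_cancel₀ hr h' 
    · -- diagonal case
      left
      have hb0 : b0 = 0 := by
        have := (mul_eq_zero.mp E1).resolve_left hr
        exact (mul_eq_zero.mp this).resolve_left ha0
      have ha0b1 : r * (a0 * b1) = (c:k) := by rw [← E4, hb0]; ring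
      have hb1 : b1 ≠ 0 := fun h => hcne (by rw [← ha0b1, h]; ring)
      have ha1 : a1 = 0 := by
        have := (mul_eq_zero.mp E2).resolve_left hr
        exact (mul_eq_zero.mp this).resolve_right
          (fun h => hcne (by rw [← ha0b1, h]; ring))
      have hb2 : b2 = 0 := by
        have h5' := E5
        rw [hb0, mul_zero, add_zero] at h5'
        have := (mul_eq_zero.mp h5').resolve_left hr
        exact (mul_eq_zero.mp this).resolve_left ha0
      have ha2 : a2 = 0 := by
        have h6' := E6
        rw [ha1, zero_mul, zero_add] at h6'
        have := (mul_eq_zero.mp h6').resolve_left hr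
        exact (mul_eq_zero.mp this).resolve_right hb1
      refine ⟨ha1, ha2, hb0, hb2, hp, hq, ?_, hr, ha0⟩
      have hcr : (c : k) = r ^ 3 := by rw [← E3, hb2]; ring
      have h' : r * (a0 * b1) = r * r ^ 2 := by rw [ha0b1, hcr]; ring
      exact mul_left_cancel₀ hr h' 
  · -- the plane X2 = 0 would land inside the conic: impossible
    exfalso
    have h2' : C (a0*b0 + p*p) * (X 0*X 0) + C (a1*b1 + q*q)*(X 1*X 1) + C 0*(X 2*X 2)
        + C (a0*b1 + a1*b0 + 2*(p*q))*(X 0*X 1) + C 0*(X 0*X 2) + C 0*(X 1*X 2)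
        = (C 0 * (X 0*X 0) + C 0*(X 1*X 1) + C 0*(X 2*X 2)
          + C 0*(X 0*X 1) + C 0*(X 0*X 2) + C 0*(X 1*X 2) : MvPolynomial (Fin 3) k) := by
      simp only [map_mul, map_add, map_zero, map_ofNat]
      linear_combination h2
    obtain ⟨A, B, -, D, -, -⟩ := quad_coeffs h2'
    have hA' : (C a0 * C b0 + C p * C p : MvPolynomial (Fin 3) k) = 0 := by
      simp only [← map_mul, ← map_add, A, map_zero]
    have hB' : (C a1 * C b1 + C q * C q : MvPolynomial (Fin 3) k) = 0 := by
      simp only [← map_mul, ← map_add, B, map_zero]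
    have hD' : (C a0 * C b1 + C a1 * C b0 + 2*(C p * C q) : MvPolynomial (Fin 3) k) = 0 := by
      simp only [← map_ofNat (f := (C : k →+* MvPolynomial (Fin 3) k)), ← map_mul, ← map_add, D, map_zero]
    set e := a0*b2 + a2*b0 + 2*(p*r) with he
    set f := a1*b2 + a2*b1 + 2*(q*r) with hf
    set g := a2*b2 + r*r with hg
    have hq1 : (X 2 : MvPolynomial (Fin 3) k) *
        ((C p * X 0 + C q * X 1 + C r * X 2) * (C e * X 0 + C f * X 1 + C g * X 2))
        = X 2 * (C ((c:k)) * (X 0 * X 1 + X 2^2)) := by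
      rw [he, hf, hg]
      simp only [map_mul, map_add, map_ofNat]
      linear_combination hc - (C p * X 0 + C q * X 1 + C r * X 2) *
        ((X 0*X 0) * hA' + (X 1*X 1) * hB' + (X 0*X 1) * hD')
    have hq2 := mul_left_cancel₀ (X_ne_zero (2 : Fin 3)) hq1
    have hq3 : C (p*e) * (X 0*X 0) + C (q*f)*(X 1*X 1) + C (r*g)*(X 2*X 2)
        + C (p*f + q*e)*(X 0*X 1) + C (p*g + r*e)*(X 0*X 2) + C (q*g + r*f)*(X 1*X 2)
        = (C 0 * (X 0*X 0) + C 0*(X 1*X 1) + C ((c:k))*(X 2*X 2)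
          + C ((c:k))*(X 0*X 1) + C 0*(X 0*X 2) + C 0*(X 1*X 2) : MvPolynomial (Fin 3) k) := by
      simp only [map_mul, map_add, map_zero]
      linear_combination hq2
    obtain ⟨F1, F2, F3, F4, F5, F6⟩ := quad_coeffs hq3
    -- F1 : p*e = 0, F2 : q*f = 0, F3 : r*g = c, F4 : p*f + q*e = c,
    -- F5 : p*g + r*e = 0, F6 : q*g + r*f = 0
    by_cases hp : p = 0
    · rw [hp, zero_mul, zero_add] at F4
      have hqne : q ≠ 0 := fun h => hcne (by rw [← F4, h]; ring)
      have hfz : f = 0 := (mul_eq_zero.mp F2).resolve_left hqne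
      rw [hfz, mul_zero, add_zero] at F6
      have hgz : g = 0 := (mul_eq_zero.mp F6).resolve_left hqne
      rw [hgz, mul_zero] at F3
      exact hcne F3.symm
    · have hez : e = 0 := (mul_eq_zero.mp F1).resolve_left hp
      rw [hez, mul_zero, add_zero] at F4
      have hfne : f ≠ 0 := fun h => hcne (by rw [← F4, h]; ring)
      have hqz : q = 0 := (mul_eq_zero.mp F2).resolve_right hfne
      have hrz : r = 0 := by
        rw [hqz, zero_mul, zero_add] at F6
        exact (mul_eq_zero.mp F6).resolve_right hfne
      rw [hrz, zero_mul] at F3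
      exact hcne F3.symm


lemma aeval_diag {k : Type*} [Field k] (t : kˣ) (M : Matrix (Fin 3) (Fin 3) k)
    (h00 : M 0 0 = (t:k)) (h01 : M 0 1 = 0) (h02 : M 0 2 = 0)
    (h10 : M 1 0 = 0) (h11 : M 1 1 = ((t⁻¹:kˣ):k)) (h12 : M 1 2 = 0)
    (h20 : M 2 0 = 0) (h21 : M 2 1 = 0) (h22 : M 2 2 = 1) :
    aeval (fun i => ∑ j : Fin 3, C (M i j) * X j)
      (X 0 * X 1 * X 2 + X 2 ^ 3 : MvPolynomial (Fin 3) k)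
      = ((1:kˣ):k) • (X 0 * X 1 * X 2 + X 2 ^ 3 : MvPolynomial (Fin 3) k) := by
  simp only [map_add, map_mul, map_pow, aeval_X, Fin.sum_univ_three,
    h00, h01, h02, h10, h11, h12, h20, h21, h22, map_zero, zero_mul, mul_zero,
    add_zero, zero_add, map_one, one_mul, Units.val_one, one_smul]
  have h1 : (C (t:k) * C ((t⁻¹:kˣ):k) : MvPolynomial (Fin 3) k) = 1 := by
    rw [← map_mul]; norm_num
  linear_combination (X 0 * X 1 * X 2 : MvPolynomial (Fin 3) k) * h1

lemma aeval_anti {k : Type*} [Field k] (M : Matrix (Fin 3) (Fin 3) k)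
    (h00 : M 0 0 = 0) (h01 : M 0 1 = 1) (h02 : M 0 2 = 0)
    (h10 : M 1 0 = 1) (h11 : M 1 1 = 0) (h12 : M 1 2 = 0)
    (h20 : M 2 0 = 0) (h21 : M 2 1 = 0) (h22 : M 2 2 = 1) :
    aeval (fun i => ∑ j : Fin 3, C (M i j) * X j)
      (X 0 * X 1 * X 2 + X 2 ^ 3 : MvPolynomial (Fin 3) k)
      = ((1:kˣ):k) • (X 0 * X 1 * X 2 + X 2 ^ 3 : MvPolynomial (Fin 3) k) := by
  simp only [map_add, map_mul, map_pow, aeval_X, Fin.sum_univ_three,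
    h00, h01, h02, h10, h11, h12, h20, h21, h22, map_zero, zero_mul, mul_zero,
    add_zero, zero_add, map_one, one_mul, Units.val_one, one_smul]
  ring


end Aux

/-- Over a field `k` with `6` invertible, the projective stabilizer `S/Z` of the cubic
`X₀X₁X₂ + X₂³` (a smooth conic together with a non-tangent line) is isomorphic to
`kˣ ⋊ C₂`, with `C₂` acting on `kˣ` by inversion. -/
theorem stmt13 (k : Type*) [Field k] (h6 : IsUnit (6 : k))
    (S : Subgroup (GL (Fin 3) k))
    (hS : ∀ g : GL (Fin 3) k, g ∈ S ↔ ∃ c : kˣ,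
        aeval (fun i => ∑ j : Fin 3, C ((g : Matrix (Fin 3) (Fin 3) k) i j) * X j)
            (X 0 * X 1 * X 2 + X 2 ^ 3 : MvPolynomial (Fin 3) k)
          = (c : k) • (X 0 * X 1 * X 2 + X 2 ^ 3 : MvPolynomial (Fin 3) k))
    (Z : Subgroup (GL (Fin 3) k))
    (hZ : ∀ g : GL (Fin 3) k, g ∈ Z ↔ ∃ c : kˣ,
        (g : Matrix (Fin 3) (Fin 3) k) = (c : k) • (1 : Matrix (Fin 3) (Fin 3) k))
    [(Z.subgroupOf S).Normal] :
    Nonempty ((S ⧸ Z.subgroupOf S) ≃* (kˣ ⋊[invAction kˣ] ℤˣ)) := by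
  classical
  -- the generators lie in S
  have hdS : ∀ t : kˣ, dgl t ∈ S := by
    intro t
    rw [hS]
    exact ⟨1, aeval_diag t _ (by simp [dgl, dmat]) (by simp [dgl, dmat])
      (by simp [dgl, dmat]) (by simp [dgl, dmat, Matrix.vecHead, Matrix.vecTail])
      (by simp [dgl, dmat, Matrix.vecHead, Matrix.vecTail])
      (by simp [dgl, dmat, Matrix.vecHead, Matrix.vecTail])
      (by simp [dgl, dmat, Matrix.vecHead, Matrix.vecTail])
      (by simp [dgl, dmat, Matrix.vecHead, Matrix.vecTail])
      (by simp [dgl, dmat, Matrix.vecHead, Matrix.vecTail])⟩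
  have hwS : wgl k ∈ S := by
    rw [hS]
    exact ⟨1, aeval_anti _ (by simp [wgl, wmat]) (by simp [wgl, wmat])
      (by simp [wgl, wmat]) (by simp [wgl, wmat, Matrix.vecHead, Matrix.vecTail])
      (by simp [wgl, wmat, Matrix.vecHead, Matrix.vecTail])
      (by simp [wgl, wmat, Matrix.vecHead, Matrix.vecTail])
      (by simp [wgl, wmat, Matrix.vecHead, Matrix.vecTail])
      (by simp [wgl, wmat, Matrix.vecHead, Matrix.vecTail])
      (by simp [wgl, wmat, Matrix.vecHead, Matrix.vecTail])⟩
  have hmem : ∀ x : kˣ ⋊[invAction kˣ] ℤˣ, theta k x ∈ S := by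
    intro ⟨t, u⟩
    have : theta k ⟨t, u⟩ = dgl t * (wHom k u) := theta_apply t u
    rw [this]
    refine S.mul_mem (hdS t) ?_
    rcases Int.units_eq_one_or u with hu | hu <;> subst hu
    · simp only [wHom, MonoidHom.coe_mk, OneHom.coe_mk, if_pos rfl]
      exact S.one_mem
    · simp only [wHom, MonoidHom.coe_mk, OneHom.coe_mk, if_neg (by decide : ¬(-1 : ℤˣ) = 1)]
      exact hwS
  set Θ : (kˣ ⋊[invAction kˣ] ℤˣ) →* S := (theta k).codRestrict S hmem with hΘ
  set Φ : (kˣ ⋊[invAction kˣ] ℤˣ) →* (S ⧸ Z.subgroupOf S) :=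
    (QuotientGroup.mk' (Z.subgroupOf S)).comp Θ with hΦ
  have hΦval : ∀ x, ((Θ x : S) : GL (Fin 3) k) = theta k x := fun x => rfl
  have hinj : Function.Injective Φ := by
    rw [injective_iff_map_eq_one]
    rintro ⟨t, u⟩ h
    have h1 : Θ ⟨t, u⟩ ∈ Z.subgroupOf S := (QuotientGroup.eq_one_iff _).mp h
    rw [Subgroup.mem_subgroupOf] at h1
    rw [hZ] at h1
    obtain ⟨d, hd⟩ := h1
    rw [hΦval, theta_apply] at hd
    rcases Int.units_eq_one_or u with hu | hu <;> subst hu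
    · simp only [wHom, MonoidHom.coe_mk, OneHom.coe_mk, if_pos rfl, mul_one] at hd
      have h22 := congrFun (congrFun hd 2) 2
      have h00 := congrFun (congrFun hd 0) 0
      simp [dgl, dmat, Matrix.smul_apply, Matrix.one_apply, Matrix.vecHead, Matrix.vecTail] at h22 h00
      have ht : t = 1 := Units.ext (by rw [h00, ← h22]; simp)
      subst ht
      rfl
    · exfalso
      simp only [wHom, MonoidHom.coe_mk, OneHom.coe_mk,
        if_neg (by decide : ¬(-1 : ℤˣ) = 1)] at hd
      rw [Units.val_mul] at hd
      have h22 := congrFun (congrFun hd 2) 2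
      have h00 := congrFun (congrFun hd 0) 0
      simp [dgl, wgl, dmat, wmat, Matrix.mul_apply, Fin.sum_univ_three,
        Matrix.smul_apply, Matrix.one_apply, Matrix.vecHead, Matrix.vecTail] at h22 h00
      rw [← h00] at h22
      exact one_ne_zero h22
  have hsurj : Function.Surjective Φ := by
    intro y
    obtain ⟨⟨g, hg⟩, rfl⟩ := QuotientGroup.mk'_surjective (Z.subgroupOf S) y
    obtain ⟨c, hc⟩ := (hS g).mp hg
    rcases classify c (g : Matrix (Fin 3) (Fin 3) k) hc with
      ⟨h01, h02, h10, h12, h20, h21, hab, hr, ha⟩ |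
      ⟨h00, h02, h11, h12, h20, h21, hab, hr, ha⟩
    · -- diagonal
      set r : k := (g : Matrix (Fin 3) (Fin 3) k) 2 2
      set t : kˣ := Units.mk0 _ ha * (Units.mk0 r hr)⁻¹ with hth
      refine ⟨SemidirectProduct.inl t, ?_⟩
      rw [hΦ]
      show QuotientGroup.mk' _ (Θ (SemidirectProduct.inl t)) = QuotientGroup.mk' _ ⟨g, hg⟩
      rw [QuotientGroup.mk'_eq_mk']
      refine ⟨(Θ (SemidirectProduct.inl t))⁻¹ * ⟨g, hg⟩, ?_, by group⟩
      rw [Subgroup.mem_subgroupOf]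
      rw [hZ]
      refine ⟨Units.mk0 r hr, ?_⟩
      have htheta : theta k (SemidirectProduct.inl t) = dgl t := by
        rw [theta, SemidirectProduct.lift_inl]
        rfl
      have hM : (g : Matrix (Fin 3) (Fin 3) k) = (theta k (SemidirectProduct.inl t) : Matrix (Fin 3) (Fin 3) k) * (r • 1) := by
        rw [htheta]
        show _ = dmat t * (r • 1)
        rw [Matrix.mul_smul, mul_one]
        ext i j
        fin_cases i <;> fin_cases j <;>
          simp [dmat, hth, h01, h02, h10, h12, h20, h21, Matrix.smul_apply,
            Matrix.vecHead, Matrix.vecTail]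
        · field_simp
        · field_simp
          linear_combination hab
        · rfl
      show ((((Θ (SemidirectProduct.inl t))⁻¹ : S) : GL (Fin 3) k) : Matrix (Fin 3) (Fin 3) k) * (g : Matrix (Fin 3) (Fin 3) k) = _
      rw [hM]
      have : (((Θ (SemidirectProduct.inl t))⁻¹ : S) : GL (Fin 3) k) = (theta k (SemidirectProduct.inl t))⁻¹ := rfl
      rw [this, ← mul_assoc]
      show ((theta k (SemidirectProduct.inl t))⁻¹ : GL (Fin 3) k).val * (theta k (SemidirectProduct.inl t)).val * _ = _
      rw [← Units.val_mul, inv_mul_cancel, Units.val_one, one_mul]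
      simp
    · -- antidiagonal
      set r : k := (g : Matrix (Fin 3) (Fin 3) k) 2 2
      set t : kˣ := Units.mk0 _ ha * (Units.mk0 r hr)⁻¹ with hth
      refine ⟨SemidirectProduct.inl t * SemidirectProduct.inr (-1), ?_⟩
      rw [hΦ]
      show QuotientGroup.mk' _ (Θ _) = QuotientGroup.mk' _ ⟨g, hg⟩
      rw [QuotientGroup.mk'_eq_mk']
      refine ⟨(Θ (SemidirectProduct.inl t * SemidirectProduct.inr (-1)))⁻¹ * ⟨g, hg⟩, ?_, by group⟩
      rw [Subgroup.mem_subgroupOf]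
      rw [hZ]
      refine ⟨Units.mk0 r hr, ?_⟩
      have htheta : theta k (SemidirectProduct.inl t * SemidirectProduct.inr (-1)) = dgl t * wgl k := by
        rw [map_mul, theta]
        simp only [SemidirectProduct.lift_inl, SemidirectProduct.lift_inr]
        congr 1
      have hM : (g : Matrix (Fin 3) (Fin 3) k) = (theta k (SemidirectProduct.inl t * SemidirectProduct.inr (-1)) : Matrix (Fin 3) (Fin 3) k) * (r • 1) := by
        rw [htheta]
        show _ = (dmat t * wmat k) * (r • 1)
        rw [Matrix.mul_smul, mul_one]
        ext i j
        fin_cases i <;> fin_cases j <;>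
          simp [dmat, wmat, hth, h00, h02, h11, h12, h20, h21, Matrix.smul_apply,
            Matrix.mul_apply, Fin.sum_univ_three, Matrix.vecHead, Matrix.vecTail]
        · field_simp
        · field_simp
          linear_combination hab
        · rfl
      show ((((Θ _)⁻¹ : S) : GL (Fin 3) k) : Matrix (Fin 3) (Fin 3) k) * (g : Matrix (Fin 3) (Fin 3) k) = _
      rw [hM]
      have : (((Θ (SemidirectProduct.inl t * SemidirectProduct.inr (-1)))⁻¹ : S) : GL (Fin 3) k) = (theta k (SemidirectProduct.inl t * SemidirectProduct.inr (-1)))⁻¹ := rfl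
      rw [this, ← mul_assoc]
      show ((theta k _)⁻¹ : GL (Fin 3) k).val * (theta k _).val * _ = _
      rw [← Units.val_mul, inv_mul_cancel, Units.val_one, one_mul]
      simp
  exact ⟨(MulEquiv.ofBijective Φ ⟨hinj, hsurj⟩).symm⟩
end

section
/- Let k be a field in which 6 is invertible and let f = X₀²X₁ ∈ k[X₀,X₁,X₂] (a double line and a single line). Then the stabilizer up to scalar S_f = {g ∈ GL₃(k) : ∃ c ∈ kˣ, f·g = c·f} equals the subgroup of invertible matrices g whose entries g₀₁, g₀₂, g₁₀, g₁₂ all vanish (i.e., matrices of the form with first row (a,0,0), second row (0,b,0), and arbitrary invertible third row); moreover the projective stabilizer S_f/Z is isomorphic to the direct product of two copies of the group of affine transformations x ↦ ax + b of the line over k (a ∈ kˣ, b ∈ k). -/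
open MvPolynomial

lemma keyLemma {k : Type*} [Field k] (a p q r b s c : k) (hc : c ≠ 0)
    (h : (C a * X 0 + C p * X 1 + C q * X 2) ^ 2 * (C r * X 0 + C b * X 1 + C s * X 2)
        = C c * (X 0 ^ 2 * X (1 : Fin 3)) ) :
    p = 0 ∧ q = 0 ∧ r = 0 ∧ s = 0 := by
  have h2 := congrArg (aeval (![Polynomial.X, 1, 0] : Fin 3 → Polynomial k)) h
  have h3 := congrArg (aeval (![Polynomial.X, 0, 1] : Fin 3 → Polynomial k)) h
  have h4 := congrArg (aeval (![0, 1, Polynomial.X] : Fin 3 → Polynomial k)) h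
  simp only [map_add, map_mul, map_pow, aeval_X, aeval_C, Polynomial.algebraMap_eq,
    Matrix.cons_val_zero, Matrix.cons_val_one, Matrix.head_cons,
    Matrix.cons_val_two, Matrix.tail_cons, mul_one, mul_zero, add_zero, zero_add] at h2 h3 h4
  have hcc : (Polynomial.C c * Polynomial.X ^ 2 : Polynomial k).coeff 2 = c := by
    simp
  -- a ≠ 0
  have ha : a ≠ 0 := by
    intro ha0
    apply hc
    rw [ha0, Polynomial.C_0, zero_mul, zero_add] at h2
    have hdeg : ((Polynomial.C p) ^ 2 * (Polynomial.C r * Polynomial.X + Polynomial.C b)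
        : Polynomial k).natDegree < 2 := by
      have h1 : ((Polynomial.C p) ^ 2 * (Polynomial.C r * Polynomial.X + Polynomial.C b)
          : Polynomial k).natDegree ≤ 0 + 1 :=
        Polynomial.natDegree_mul_le.trans
          (add_le_add (by simp) Polynomial.natDegree_linear_le)
      omega
    rw [← hcc, ← h2, Polynomial.coeff_eq_zero_of_natDegree_lt hdeg]
  -- from h3 : (C a X + C q)^2 (C r X + C s) = 0
  have hA : (Polynomial.C a * Polynomial.X + Polynomial.C q : Polynomial k) ≠ 0 := by
    intro h0
    have := congrArg (fun P => Polynomial.coeff P 1) h0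
    simp [Polynomial.coeff_X, Polynomial.coeff_C] at this
    exact ha this
  have hrs : (Polynomial.C r * Polynomial.X + Polynomial.C s : Polynomial k) = 0 := by
    rcases mul_eq_zero.mp h3 with h' | h'
    · exact absurd (pow_eq_zero_iff (by norm_num) |>.mp h') hA
    · exact h'
  have hr : r = 0 := by
    have := congrArg (fun P => Polynomial.coeff P 1) hrs
    simpa [Polynomial.coeff_X, Polynomial.coeff_C] using this
  have hs : s = 0 := by
    have := congrArg (fun P => Polynomial.coeff P 0) hrs
    simpa [Polynomial.coeff_X, Polynomial.coeff_C] using this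
  -- b ≠ 0
  have hb : b ≠ 0 := by
    intro hb0
    apply hc
    rw [hb0, hr, Polynomial.C_0, zero_mul, zero_add, mul_zero] at h2
    have : (Polynomial.C c : Polynomial k) = 0 ∨ (Polynomial.X ^ 2 : Polynomial k) = 0 :=
      mul_eq_zero.mp h2.symm
    rcases this with h' | h'
    · exact Polynomial.C_eq_zero.mp h'
    · exact absurd h' (pow_ne_zero _ Polynomial.X_ne_zero)
  -- from h4
  rw [hs] at h4
  rw [Polynomial.C_0, zero_mul, add_zero] at h4
  have h4' : ((Polynomial.C p + Polynomial.C q * Polynomial.X) ^ 2 * Polynomial.C b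
      : Polynomial k) = 0 := by
    rw [h4]; ring
  have hpq : (Polynomial.C p + Polynomial.C q * Polynomial.X : Polynomial k) = 0 := by
    rcases mul_eq_zero.mp h4' with h' | h'
    · exact pow_eq_zero_iff (by norm_num) |>.mp h'
    · exact absurd (Polynomial.C_eq_zero.mp h') hb
  have hp : p = 0 := by
    have := congrArg (fun P => Polynomial.coeff P 0) hpq
    simpa [Polynomial.coeff_X, Polynomial.coeff_C] using this
  have hq : q = 0 := by
    have := congrArg (fun P => Polynomial.coeff P 1) hpq
    simpa [Polynomial.coeff_X, Polynomial.coeff_C] using this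
  exact ⟨hp, hq, hr, hs⟩

section Helpers
variable {k : Type*} [Field k]

noncomputable def affU (m : kˣ) (c : k) : k ≃ᵃ[k] k :=
  (LinearEquiv.smulOfUnit m).toAffineEquiv.trans (AffineEquiv.constVAdd k k c)

lemma affU_apply (m : kˣ) (c x : k) : affU m c x = c + m * x := rfl

lemma affEquiv_mul_apply (e e' : k ≃ᵃ[k] k) (x : k) : (e * e') x = e (e' x) := rfl

lemma affEquiv_one_apply (x : k) : (1 : k ≃ᵃ[k] k) x = x := rfl

lemma affine_decomp (e : k ≃ᵃ[k] k) (x : k) : e x = e.linear 1 * x + e 0 := by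
  have h := e.map_vadd (0 : k) x
  rw [vadd_eq_add, add_zero] at h
  rw [h, vadd_eq_add]
  have h2 : e.linear x = x * e.linear 1 := by
    have h3 := e.linear.map_smul x 1
    rw [smul_eq_mul, mul_one, smul_eq_mul] at h3
    rw [h3]
  rw [h2]; ring

lemma affine_lin_ne (e : k ≃ᵃ[k] k) : (e.linear 1 : k) ≠ 0 := by
  simp [LinearEquiv.map_eq_zero_iff]
end Helpers

/-- Over a field `k` with `6` invertible, the stabilizer up to scalar `S` of the cubic
`X₀²X₁` (a double line and a single line) consists exactly of the invertible matrices
with `g₀₁ = g₀₂ = g₁₀ = g₁₂ = 0`, and the projective stabilizer `S/Z` is isomorphic to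
the direct product of two copies of the group of affine transformations of the line
over `k`. -/
theorem stmt14 (k : Type*) [Field k] (h6 : IsUnit (6 : k))
    (S : Subgroup (GL (Fin 3) k))
    (hS : ∀ g : GL (Fin 3) k, g ∈ S ↔ ∃ c : kˣ,
        aeval (fun i => ∑ j : Fin 3, C ((g : Matrix (Fin 3) (Fin 3) k) i j) * X j)
            (X 0 ^ 2 * X 1 : MvPolynomial (Fin 3) k)
          = (c : k) • (X 0 ^ 2 * X 1 : MvPolynomial (Fin 3) k))
    (Z : Subgroup (GL (Fin 3) k))
    (hZ : ∀ g : GL (Fin 3) k, g ∈ Z ↔ ∃ c : kˣ,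
        (g : Matrix (Fin 3) (Fin 3) k) = (c : k) • (1 : Matrix (Fin 3) (Fin 3) k))
    [(Z.subgroupOf S).Normal] :
    (∀ g : GL (Fin 3) k, g ∈ S ↔
        ((g : Matrix (Fin 3) (Fin 3) k) 0 1 = 0 ∧
         (g : Matrix (Fin 3) (Fin 3) k) 0 2 = 0 ∧
         (g : Matrix (Fin 3) (Fin 3) k) 1 0 = 0 ∧
         (g : Matrix (Fin 3) (Fin 3) k) 1 2 = 0)) ∧
    Nonempty ((S ⧸ Z.subgroupOf S) ≃* ((k ≃ᵃ[k] k) × (k ≃ᵃ[k] k))) := by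
  have main : ∀ g : GL (Fin 3) k, g ∈ S ↔
      ((g : Matrix (Fin 3) (Fin 3) k) 0 1 = 0 ∧
       (g : Matrix (Fin 3) (Fin 3) k) 0 2 = 0 ∧
       (g : Matrix (Fin 3) (Fin 3) k) 1 0 = 0 ∧
       (g : Matrix (Fin 3) (Fin 3) k) 1 2 = 0) := by
      intro g
      constructor
      · intro hg
        obtain ⟨c, hc⟩ := (hS g).mp hg
        simp only [map_mul, map_pow, aeval_X, Fin.sum_univ_three,
          smul_eq_C_mul] at hc
        obtain ⟨hp, hq, hr, hs⟩ := keyLemma _ _ _ _ _ _ _ c.ne_zero hc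
        exact ⟨hp, hq, hr, hs⟩
      · rintro ⟨h01, h02, h10, h12⟩
        have hdet : IsUnit ((g : Matrix (Fin 3) (Fin 3) k).det) :=
          (Matrix.isUnit_iff_isUnit_det _).mp g.isUnit
        rw [Matrix.det_fin_three, h01, h02, h10, h12] at hdet
        simp only [mul_zero, zero_mul, sub_zero, add_zero, zero_sub, neg_zero] at hdet
        have ha : IsUnit ((g : Matrix (Fin 3) (Fin 3) k) 0 0) := isUnit_of_mul_isUnit_left
          (isUnit_of_mul_isUnit_left (by rwa [mul_assoc] at hdet))
        have hb : IsUnit ((g : Matrix (Fin 3) (Fin 3) k) 1 1) :=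
          isUnit_of_mul_isUnit_right (isUnit_of_mul_isUnit_left hdet)
        refine (hS g).mpr ⟨ha.unit ^ 2 * hb.unit, ?_⟩
        simp only [map_mul, map_pow, aeval_X, Fin.sum_univ_three, h01, h02, h10, h12,
          C_0, zero_mul, add_zero, zero_add, smul_eq_C_mul, Units.val_mul,
          Units.val_pow_eq_pow_val, IsUnit.unit_spec, C_mul, C_pow]
        ring
  refine ⟨main, ?_⟩
  have zkey : ∀ g : S, ((g : GL (Fin 3) k) : Matrix (Fin 3) (Fin 3) k) 0 1 = 0 ∧
      ((g : GL (Fin 3) k) : Matrix (Fin 3) (Fin 3) k) 0 2 = 0 ∧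
      ((g : GL (Fin 3) k) : Matrix (Fin 3) (Fin 3) k) 1 0 = 0 ∧
      ((g : GL (Fin 3) k) : Matrix (Fin 3) (Fin 3) k) 1 2 = 0 :=
    fun g => (main g.1).mp g.2
  have key : ∀ g : S, ((g : GL (Fin 3) k) : Matrix (Fin 3) (Fin 3) k) 0 0 ≠ 0 ∧
      ((g : GL (Fin 3) k) : Matrix (Fin 3) (Fin 3) k) 1 1 ≠ 0 ∧
      ((g : GL (Fin 3) k) : Matrix (Fin 3) (Fin 3) k) 2 2 ≠ 0 := by
    intro g
    obtain ⟨h01, h02, h10, h12⟩ := zkey g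
    have hdet := (Matrix.isUnit_iff_isUnit_det _).mp (g : GL (Fin 3) k).isUnit
    rw [Matrix.det_fin_three, h01, h02, h10, h12] at hdet
    simp only [mul_zero, zero_mul, sub_zero, add_zero, zero_sub, neg_zero] at hdet
    have h := isUnit_iff_ne_zero.mp hdet
    refine ⟨?_, ?_, ?_⟩ <;> intro h0 <;> apply h <;> rw [h0] <;> ring
  obtain ⟨Φ, hΦ⟩ : ∃ Φ : S →* ((k ≃ᵃ[k] k) × (k ≃ᵃ[k] k)), ∀ (g : S) (x : k),
      (Φ g).1 x = -(((g : GL (Fin 3) k) : Matrix (Fin 3) (Fin 3) k) 2 0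
            / ((g : GL (Fin 3) k) : Matrix (Fin 3) (Fin 3) k) 0 0)
          + (((g : GL (Fin 3) k) : Matrix (Fin 3) (Fin 3) k) 2 2
            / ((g : GL (Fin 3) k) : Matrix (Fin 3) (Fin 3) k) 0 0) * x ∧
      (Φ g).2 x = -(((g : GL (Fin 3) k) : Matrix (Fin 3) (Fin 3) k) 2 1
            / ((g : GL (Fin 3) k) : Matrix (Fin 3) (Fin 3) k) 1 1)
          + (((g : GL (Fin 3) k) : Matrix (Fin 3) (Fin 3) k) 2 2
            / ((g : GL (Fin 3) k) : Matrix (Fin 3) (Fin 3) k) 1 1) * x := by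
    refine ⟨MonoidHom.mk' (fun g =>
      (affU (Units.mk0 _ (div_ne_zero (key g).2.2 (key g).1))
        (-(((g : GL (Fin 3) k) : Matrix (Fin 3) (Fin 3) k) 2 0
            / ((g : GL (Fin 3) k) : Matrix (Fin 3) (Fin 3) k) 0 0)),
       affU (Units.mk0 _ (div_ne_zero (key g).2.2 (key g).2.1))
        (-(((g : GL (Fin 3) k) : Matrix (Fin 3) (Fin 3) k) 2 1
            / ((g : GL (Fin 3) k) : Matrix (Fin 3) (Fin 3) k) 1 1)))) ?_,
      fun g x => ⟨rfl, rfl⟩⟩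
    intro g h
    obtain ⟨g01, g02, g10, g12⟩ := zkey g
    obtain ⟨h01, h02, h10, h12⟩ := zkey h
    obtain ⟨ga, gb, gw⟩ := key g
    obtain ⟨ha, hb, hw⟩ := key h
    have hmul : ((↑(g * h) : GL (Fin 3) k) : Matrix (Fin 3) (Fin 3) k)
        = ((g : GL (Fin 3) k) : Matrix (Fin 3) (Fin 3) k)
          * ((h : GL (Fin 3) k) : Matrix (Fin 3) (Fin 3) k) := rfl
    refine Prod.ext (AffineEquiv.ext fun x => ?_) (AffineEquiv.ext fun x => ?_) <;>
    · simp only [Prod.fst_mul, Prod.snd_mul, affEquiv_mul_apply, affU_apply, Units.val_mk0, hmul,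
        Matrix.mul_apply, Fin.sum_univ_three, g01, g02, g10, g12, h01, h02, h10, h12,
        zero_mul, mul_zero, add_zero, zero_add]
      field_simp
      ring
  have hker : Z.subgroupOf S = Φ.ker := by
    ext g
    obtain ⟨g01, g02, g10, g12⟩ := zkey g
    obtain ⟨ga, gb, gw⟩ := key g
    rw [Subgroup.mem_subgroupOf, MonoidHom.mem_ker, hZ]
    constructor
    · rintro ⟨u, hc⟩
      have e00 : ((g : GL (Fin 3) k) : Matrix (Fin 3) (Fin 3) k) 0 0 = (u : k) := by
        rw [hc]; simp [Matrix.one_apply]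
      have e11 : ((g : GL (Fin 3) k) : Matrix (Fin 3) (Fin 3) k) 1 1 = (u : k) := by
        rw [hc]; simp [Matrix.one_apply]
      have e22 : ((g : GL (Fin 3) k) : Matrix (Fin 3) (Fin 3) k) 2 2 = (u : k) := by
        rw [hc]; simp [Matrix.one_apply]
      have e20 : ((g : GL (Fin 3) k) : Matrix (Fin 3) (Fin 3) k) 2 0 = 0 := by
        rw [hc]; simp [Matrix.one_apply]
      have e21 : ((g : GL (Fin 3) k) : Matrix (Fin 3) (Fin 3) k) 2 1 = 0 := by
        rw [hc]; simp [Matrix.one_apply]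
      refine Prod.ext (AffineEquiv.ext fun x => ?_) (AffineEquiv.ext fun x => ?_)
      · simp only [Prod.fst_one, affEquiv_one_apply]
        rw [(hΦ g x).1, e20, e22, e00]
        simp [div_self (Units.ne_zero u)]
      · simp only [Prod.snd_one, affEquiv_one_apply]
        rw [(hΦ g x).2, e21, e22, e11]
        simp [div_self (Units.ne_zero u)]
    · intro hg1
      have h1 := fun x => (hΦ g x).1.symm.trans (congrArg (fun e => (e.1 : k ≃ᵃ[k] k) x) hg1)
      have h2 := fun x => (hΦ g x).2.symm.trans (congrArg (fun e => (e.2 : k ≃ᵃ[k] k) x) hg1)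
      simp only [affEquiv_one_apply, Prod.fst_one, Prod.snd_one] at h1 h2
      have k10 := h1 0; have k11 := h1 1
      have k20 := h2 0; have k21 := h2 1
      simp only [mul_zero, add_zero, mul_one] at k10 k11 k20 k21
      -- k10 : -(g20/g00) = 0 ; k11 : -(g20/g00) + g22/g00 = 1
      have e20 : ((g : GL (Fin 3) k) : Matrix (Fin 3) (Fin 3) k) 2 0 = 0 := by
        field_simp at k10; simpa using k10
      have e21 : ((g : GL (Fin 3) k) : Matrix (Fin 3) (Fin 3) k) 2 1 = 0 := by
        field_simp at k20; simpa using k20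
      rw [k10, zero_add] at k11
      rw [k20, zero_add] at k21
      have e2200 : ((g : GL (Fin 3) k) : Matrix (Fin 3) (Fin 3) k) 2 2
          = ((g : GL (Fin 3) k) : Matrix (Fin 3) (Fin 3) k) 0 0 := by
        field_simp at k11; exact k11
      have e2211 : ((g : GL (Fin 3) k) : Matrix (Fin 3) (Fin 3) k) 2 2
          = ((g : GL (Fin 3) k) : Matrix (Fin 3) (Fin 3) k) 1 1 := by
        field_simp at k21; exact k21
      refine ⟨Units.mk0 _ gw, ?_⟩
      ext i j
      fin_cases i <;> fin_cases j <;>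
        simp [Matrix.one_apply, g01, g02, g10, g12, e20, e21, ← e2200, ← e2211,
          Units.val_mk0]
  have hsurj : Function.Surjective Φ := by
    rintro ⟨e₁, e₂⟩
    have hm₁ := affine_lin_ne e₁
    have hm₂ := affine_lin_ne e₂
    set m₁ := (e₁.linear 1 : k) with hm₁def
    set m₂ := (e₂.linear 1 : k) with hm₂def
    set N : Matrix (Fin 3) (Fin 3) k :=
      Matrix.of ![![m₁⁻¹, 0, 0], ![0, m₂⁻¹, 0], ![-(m₁⁻¹ * e₁ 0), -(m₂⁻¹ * e₂ 0), 1]] with hN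
    have hNdet : N.det ≠ 0 := by
      rw [Matrix.det_fin_three]
      simp [hN]
      exact ⟨hm₁, hm₂⟩
    have hNu : IsUnit N := (Matrix.isUnit_iff_isUnit_det N).mpr (isUnit_iff_ne_zero.mpr hNdet)
    have hcoe : ((hNu.unit : GL (Fin 3) k) : Matrix (Fin 3) (Fin 3) k) = N := hNu.unit_spec
    have hgS : hNu.unit ∈ S := by
      rw [main]
      rw [hcoe]
      refine ⟨?_, ?_, ?_, ?_⟩ <;> simp [hN]
    refine ⟨⟨hNu.unit, hgS⟩, ?_⟩
    refine Prod.ext (AffineEquiv.ext fun x => ?_) (AffineEquiv.ext fun x => ?_)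
    · rw [(hΦ ⟨hNu.unit, hgS⟩ x).1]
      show _ = e₁ x
      rw [affine_decomp e₁ x]
      simp only [hcoe, hN]
      simp only [Matrix.of_apply, Matrix.cons_val', Matrix.cons_val_zero, Matrix.cons_val_one,
        Matrix.head_cons, Matrix.empty_val', Matrix.cons_val_fin_one, Matrix.head_fin_const,
        Matrix.cons_val_two, Matrix.tail_cons]
      field_simp
      ring
    · rw [(hΦ ⟨hNu.unit, hgS⟩ x).2]
      show _ = e₂ x
      rw [affine_decomp e₂ x]
      simp only [hcoe, hN]
      simp only [Matrix.of_apply, Matrix.cons_val', Matrix.cons_val_zero, Matrix.cons_val_one,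
        Matrix.head_cons, Matrix.empty_val', Matrix.cons_val_fin_one, Matrix.head_fin_const,
        Matrix.cons_val_two, Matrix.tail_cons]
      field_simp
      ring
  exact ⟨(QuotientGroup.quotientMulEquivOfEq hker).trans
    (QuotientGroup.quotientKerEquivOfSurjective Φ hsurj)⟩
end

section
/- Let k be a field in which 6 is invertible and let f = X₁²X₂ + X₀²X₁ ∈ k[X₀,X₁,X₂] (a smooth conic together with a tangent line). Then the projective stabilizer S_f/Z is isomorphic to the group of affine transformations x ↦ ax + b of the line over k (a ∈ kˣ, b ∈ k), i.e., to the semidirect product k ⋊ kˣ with kˣ acting on k by multiplication. -/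
open MvPolynomial

set_option maxHeartbeats 2000000


private lemma stmt15_triple (a b c a' b' c' : ℕ) :
    (Finsupp.single (0 : Fin 3) a + Finsupp.single 1 b + Finsupp.single 2 c =
      Finsupp.single (0 : Fin 3) a' + Finsupp.single 1 b' + Finsupp.single 2 c') ↔
      (a = a' ∧ b = b' ∧ c = c') := by
  constructor
  · intro h
    have h0 := congrArg (fun f => f 0) h
    have h1 := congrArg (fun f => f 1) h
    have h2 := congrArg (fun f => f 2) h
    simp [Finsupp.single_apply] at h0 h1 h2
    exact ⟨h0, h1, h2⟩
  · rintro ⟨rfl, rfl, rfl⟩; rfl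

private lemma stmt15_coeff {R : Type*} [CommSemiring R] (x : R) (a b c a' b' c' : ℕ) :
    coeff (Finsupp.single (0 : Fin 3) a' + Finsupp.single 1 b' + Finsupp.single 2 c')
      (C x * (X 0 ^ a * X 1 ^ b * X 2 ^ c) : MvPolynomial (Fin 3) R)
      = if a = a' ∧ b = b' ∧ c = c' then x else 0 := by
  have : (C x * (X 0 ^ a * X 1 ^ b * X 2 ^ c) : MvPolynomial (Fin 3) R)
      = monomial (Finsupp.single 0 a + Finsupp.single 1 b + Finsupp.single 2 c) x := by
    simp [X_pow_eq_monomial, monomial_mul, C_mul_monomial]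
  rw [this, coeff_monomial]
  simp only [stmt15_triple]

private lemma stmt15_classify {k : Type*} [Field k] (M : Matrix (Fin 3) (Fin 3) k)
    (hdet : M.det ≠ 0) (c : k) (hc : c ≠ 0)
    (hg : aeval (fun i => ∑ j : Fin 3, C (M i j) * X j)
            (X 1 ^ 2 * X 2 + X 0 ^ 2 * X 1 : MvPolynomial (Fin 3) k)
          = c • (X 1 ^ 2 * X 2 + X 0 ^ 2 * X 1 : MvPolynomial (Fin 3) k)) :
    M 1 0 = 0 ∧ M 1 2 = 0 ∧ M 0 2 = 0 ∧ M 1 1 ≠ 0 ∧ M 0 0 ≠ 0 ∧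
    M 1 1 * M 2 0 = -(2 * (M 0 0 * M 0 1)) ∧ M 1 1 * M 2 1 = -(M 0 1 ^ 2) ∧
    M 1 1 * M 2 2 = M 0 0 ^ 2 ∧ M 0 0 ^ 2 * M 1 1 = c := by
  rw [smul_eq_C_mul] at hg
  simp only [map_add, map_mul, map_pow, aeval_X, Fin.sum_univ_three] at hg
  have key : (C (M 1 0 ^ 2 * M 2 0 + M 0 0 ^ 2 * M 1 0) * (X 0 ^ 3 * X 1 ^ 0 * X 2 ^ 0) +
        C (2 * M 1 0 * M 1 1 * M 2 0 + M 1 0 ^ 2 * M 2 1 + 2 * M 0 0 * M 0 1 * M 1 0 + M 0 0 ^ 2 * M 1 1) * (X 0 ^ 2 * X 1 ^ 1 * X 2 ^ 0) +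
        C (2 * M 1 0 * M 1 2 * M 2 0 + M 1 0 ^ 2 * M 2 2 + 2 * M 0 0 * M 0 2 * M 1 0 + M 0 0 ^ 2 * M 1 2) * (X 0 ^ 2 * X 1 ^ 0 * X 2 ^ 1) +
        C (M 1 1 ^ 2 * M 2 0 + 2 * M 1 0 * M 1 1 * M 2 1 + M 0 1 ^ 2 * M 1 0 + 2 * M 0 0 * M 0 1 * M 1 1) * (X 0 ^ 1 * X 1 ^ 2 * X 2 ^ 0) +
        C (2 * M 1 1 * M 1 2 * M 2 0 + 2 * M 1 0 * M 1 2 * M 2 1 + 2 * M 1 0 * M 1 1 * M 2 2 + 2 * M 0 1 * M 0 2 * M 1 0 + 2 * M 0 0 * M 0 2 * M 1 1 + 2 * M 0 0 * M 0 1 * M 1 2) * (X 0 ^ 1 * X 1 ^ 1 * X 2 ^ 1) +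
        C (M 1 2 ^ 2 * M 2 0 + 2 * M 1 0 * M 1 2 * M 2 2 + M 0 2 ^ 2 * M 1 0 + 2 * M 0 0 * M 0 2 * M 1 2) * (X 0 ^ 1 * X 1 ^ 0 * X 2 ^ 2) +
        C (M 1 1 ^ 2 * M 2 1 + M 0 1 ^ 2 * M 1 1) * (X 0 ^ 0 * X 1 ^ 3 * X 2 ^ 0) +
        C (2 * M 1 1 * M 1 2 * M 2 1 + M 1 1 ^ 2 * M 2 2 + 2 * M 0 1 * M 0 2 * M 1 1 + M 0 1 ^ 2 * M 1 2) * (X 0 ^ 0 * X 1 ^ 2 * X 2 ^ 1) +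
        C (M 1 2 ^ 2 * M 2 1 + 2 * M 1 1 * M 1 2 * M 2 2 + M 0 2 ^ 2 * M 1 1 + 2 * M 0 1 * M 0 2 * M 1 2) * (X 0 ^ 0 * X 1 ^ 1 * X 2 ^ 2) +
        C (M 1 2 ^ 2 * M 2 2 + M 0 2 ^ 2 * M 1 2) * (X 0 ^ 0 * X 1 ^ 0 * X 2 ^ 3))
      = (C c * (X 0 ^ 0 * X 1 ^ 2 * X 2 ^ 1) + C c * (X 0 ^ 2 * X 1 ^ 1 * X 2 ^ 0) : MvPolynomial (Fin 3) k) := by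
    simp only [map_add, map_mul, map_pow, map_ofNat]
    linear_combination hg
  have E300 := congrArg (coeff (Finsupp.single (0 : Fin 3) 3 + Finsupp.single (1 : Fin 3) 0 + Finsupp.single (2 : Fin 3) 0)) key
  simp only [coeff_add, stmt15_coeff] at E300
  norm_num at E300
  have E210 := congrArg (coeff (Finsupp.single (0 : Fin 3) 2 + Finsupp.single (1 : Fin 3) 1 + Finsupp.single (2 : Fin 3) 0)) key
  simp only [coeff_add, stmt15_coeff] at E210
  norm_num at E210
  have E201 := congrArg (coeff (Finsupp.single (0 : Fin 3) 2 + Finsupp.single (1 : Fin 3) 0 + Finsupp.single (2 : Fin 3) 1)) key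
  simp only [coeff_add, stmt15_coeff] at E201
  norm_num at E201
  have E120 := congrArg (coeff (Finsupp.single (0 : Fin 3) 1 + Finsupp.single (1 : Fin 3) 2 + Finsupp.single (2 : Fin 3) 0)) key
  simp only [coeff_add, stmt15_coeff] at E120
  norm_num at E120
  have E111 := congrArg (coeff (Finsupp.single (0 : Fin 3) 1 + Finsupp.single (1 : Fin 3) 1 + Finsupp.single (2 : Fin 3) 1)) key
  simp only [coeff_add, stmt15_coeff] at E111
  norm_num at E111
  have E102 := congrArg (coeff (Finsupp.single (0 : Fin 3) 1 + Finsupp.single (1 : Fin 3) 0 + Finsupp.single (2 : Fin 3) 2)) key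
  simp only [coeff_add, stmt15_coeff] at E102
  norm_num at E102
  have E030 := congrArg (coeff (Finsupp.single (0 : Fin 3) 0 + Finsupp.single (1 : Fin 3) 3 + Finsupp.single (2 : Fin 3) 0)) key
  simp only [coeff_add, stmt15_coeff] at E030
  norm_num at E030
  have E021 := congrArg (coeff (Finsupp.single (0 : Fin 3) 0 + Finsupp.single (1 : Fin 3) 2 + Finsupp.single (2 : Fin 3) 1)) key
  simp only [coeff_add, stmt15_coeff] at E021
  norm_num at E021
  have E012 := congrArg (coeff (Finsupp.single (0 : Fin 3) 0 + Finsupp.single (1 : Fin 3) 1 + Finsupp.single (2 : Fin 3) 2)) key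
  simp only [coeff_add, stmt15_coeff] at E012
  norm_num at E012
  have E003 := congrArg (coeff (Finsupp.single (0 : Fin 3) 0 + Finsupp.single (1 : Fin 3) 0 + Finsupp.single (2 : Fin 3) 3)) key
  simp only [coeff_add, stmt15_coeff] at E003
  norm_num at E003
  clear key hg E111
  have step1 : M 1 0 = 0 ∧ M 1 2 = 0 := by
    by_contra hcon
    rw [not_and_or] at hcon
    have habc : (M 1 0 * M 2 0 + M 0 0 ^ 2 = 0) ∧
        (M 1 0 * M 2 2 + M 1 2 * M 2 0 + 2 * (M 0 0 * M 0 2) = 0) ∧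
        (M 1 2 * M 2 2 + M 0 2 ^ 2 = 0) := by
      rcases em (M 1 0 = 0) with h0 | h0
      · have h2 : M 1 2 ≠ 0 := by
          rcases hcon with h | h
          · exact absurd h0 h
          · exact h
        have hB : M 1 2 * M 2 2 + M 0 2 ^ 2 = 0 := by
          have h' : M 1 2 * (M 1 2 * M 2 2 + M 0 2 ^ 2) = 0 := by linear_combination E003
          exact (mul_eq_zero.mp h').resolve_left h2
        have hC : M 1 0 * M 2 2 + M 1 2 * M 2 0 + 2 * (M 0 0 * M 0 2) = 0 := by
          have h' : M 1 2 * (M 1 0 * M 2 2 + M 1 2 * M 2 0 + 2 * (M 0 0 * M 0 2)) = 0 := by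
            linear_combination E102 - (M 1 2 * M 2 2 + M 0 2 ^ 2) * h0
          exact (mul_eq_zero.mp h').resolve_left h2
        have hA : M 1 0 * M 2 0 + M 0 0 ^ 2 = 0 := by
          have h' : M 1 2 * (M 1 0 * M 2 0 + M 0 0 ^ 2) = 0 := by
            linear_combination E201 - (M 1 0 * M 2 2 + M 1 2 * M 2 0 + 2 * (M 0 0 * M 0 2)) * h0
          exact (mul_eq_zero.mp h').resolve_left h2
        exact ⟨hA, hC, hB⟩
      · have hA : M 1 0 * M 2 0 + M 0 0 ^ 2 = 0 := by
          have h' : M 1 0 * (M 1 0 * M 2 0 + M 0 0 ^ 2) = 0 := by linear_combination E300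
          exact (mul_eq_zero.mp h').resolve_left h0
        have hC : M 1 0 * M 2 2 + M 1 2 * M 2 0 + 2 * (M 0 0 * M 0 2) = 0 := by
          have h' : M 1 0 * (M 1 0 * M 2 2 + M 1 2 * M 2 0 + 2 * (M 0 0 * M 0 2)) = 0 := by
            linear_combination E201 - M 1 2 * hA
          exact (mul_eq_zero.mp h').resolve_left h0
        have hB : M 1 2 * M 2 2 + M 0 2 ^ 2 = 0 := by
          have h' : M 1 0 * (M 1 2 * M 2 2 + M 0 2 ^ 2) = 0 := by
            linear_combination E102 - M 1 2 * hC
          exact (mul_eq_zero.mp h').resolve_left h0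
        exact ⟨hA, hC, hB⟩
    obtain ⟨hA, hC, hB⟩ := habc
    have hu : M 1 2 * M 0 0 - M 1 0 * M 0 2 = 0 := by
      have h' : (M 1 2 * M 0 0 - M 1 0 * M 0 2) ^ 2 = 0 := by
        linear_combination M 1 2 ^ 2 * hA + M 1 0 ^ 2 * hB - M 1 0 * M 1 2 * hC
      exact sq_eq_zero_iff.mp h'
    have hv : M 1 0 * M 2 2 - M 1 2 * M 2 0 = 0 := by
      have h' : (M 1 0 * M 2 2 - M 1 2 * M 2 0) ^ 2 = 0 := by
        linear_combination (M 1 0 * M 2 2 + M 1 2 * M 2 0 + 2 * (M 0 0 * M 0 2) - 4 * (M 0 0 * M 0 2)) * hC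
          + (4 * M 0 2 ^ 2 - 4 * (M 1 2 * M 2 2 + M 0 2 ^ 2)) * hA + 4 * M 0 0 ^ 2 * hB
      exact sq_eq_zero_iff.mp h'
    rcases hcon with h0 | h2
    · apply hdet
      have h' : M 1 0 * M.det = 0 := by
        rw [Matrix.det_fin_three]
        linear_combination (M 1 1 * M 2 0 - M 1 0 * M 2 1) * hu + (M 1 1 * M 0 0 - M 0 1 * M 1 0) * hv
      exact (mul_eq_zero.mp h').resolve_left h0
    · apply hdet
      have h' : M 1 2 * M.det = 0 := by
        rw [Matrix.det_fin_three]
        linear_combination (M 1 1 * M 2 2 - M 1 2 * M 2 1) * hu + (M 1 1 * M 0 2 - M 0 1 * M 1 2) * hv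
      exact (mul_eq_zero.mp h').resolve_left h2
  obtain ⟨hq0, hq2⟩ := step1
  have hc1 : M 0 0 ^ 2 * M 1 1 = c := by
    linear_combination E210 - (2 * (M 1 1 * M 2 0) + M 1 0 * M 2 1 + 2 * (M 0 0 * M 0 1)) * hq0
  have hq1 : M 1 1 ≠ 0 := fun h => hc (by linear_combination M 0 0 ^ 2 * h - hc1)
  have hp0 : M 0 0 ≠ 0 := fun h => hc (by linear_combination M 0 0 * M 1 1 * h - hc1)
  have hp2 : M 0 2 = 0 := by
    have h' : M 1 1 * M 0 2 ^ 2 = 0 := by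
      linear_combination E012 - (M 1 2 * M 2 1 + 2 * (M 1 1 * M 2 2) + 2 * (M 0 1 * M 0 2)) * hq2
    exact sq_eq_zero_iff.mp ((mul_eq_zero.mp h').resolve_left hq1)
  have hr0 : M 1 1 * M 2 0 = -(2 * (M 0 0 * M 0 1)) := by
    have h' : M 1 1 * (M 1 1 * M 2 0 + 2 * (M 0 0 * M 0 1)) = 0 := by
      linear_combination E120 - (2 * (M 1 1 * M 2 1) + M 0 1 ^ 2) * hq0
    linear_combination (mul_eq_zero.mp h').resolve_left hq1
  have hr1 : M 1 1 * M 2 1 = -(M 0 1 ^ 2) := by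
    have h' : M 1 1 * (M 1 1 * M 2 1 + M 0 1 ^ 2) = 0 := by linear_combination E030
    linear_combination (mul_eq_zero.mp h').resolve_left hq1
  have hr2 : M 1 1 * M 2 2 = M 0 0 ^ 2 := by
    have h' : M 1 1 * (M 1 1 * M 2 2 - M 0 0 ^ 2) = 0 := by
      linear_combination E021 - hc1 - (2 * (M 1 1 * M 2 1) + M 0 1 ^ 2) * hq2 - 2 * (M 0 1 * M 1 1) * hp2
    linear_combination (mul_eq_zero.mp h').resolve_left hq1
  exact ⟨hq0, hq2, hp2, hq1, hp0, hr0, hr1, hr2, hc1⟩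

section stmt15aux

open MvPolynomial

variable {k : Type*} [Field k]

/-- The affine transformation `x ↦ b + a x` of the line. -/
noncomputable def stmt15Aff (a : kˣ) (b : k) : k ≃ᵃ[k] k :=
  (LinearEquiv.smulOfUnit a).toAffineEquiv.trans (AffineEquiv.constVAdd k k b)

lemma stmt15Aff_apply (a : kˣ) (b : k) (x : k) : stmt15Aff a b x = b + (a : k) * x := by
  simp [stmt15Aff, LinearEquiv.smulOfUnit, Units.smul_def]

lemma stmt15Aff_surj (e : k ≃ᵃ[k] k) :
    ∃ (a : kˣ) (b : k), e = stmt15Aff a b := by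
  have h1 : ∀ x : k, e x = e.linear x + e 0 := by
    intro x
    have := e.map_vadd 0 x
    simpa [vadd_eq_add, add_comm] using this
  have h2 : ∀ x : k, e.linear x = x * e.linear 1 := by
    intro x
    have := e.linear.map_smul x 1
    simpa [smul_eq_mul] using this
  have ha : (e.linear 1 : k) ≠ 0 := by
    intro h
    have : (e.linear : k →ₗ[k] k) 1 = (e.linear : k →ₗ[k] k) 0 := by simp [h]
    exact one_ne_zero (e.linear.injective (by simpa using this))
  refine ⟨Units.mk0 _ ha, e 0, ?_⟩
  ext x
  rw [stmt15Aff_apply, h1 x, h2 x, Units.val_mk0]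
  ring

end stmt15aux

/-- Over a field `k` with `6` invertible, the projective stabilizer `S/Z` of the cubic
`X₁²X₂ + X₀²X₁` (a smooth conic together with a tangent line) is isomorphic to the group
of affine transformations `x ↦ ax + b` of the line over `k`. -/
theorem stmt15 (k : Type*) [Field k] (h6 : IsUnit (6 : k))
    (S : Subgroup (GL (Fin 3) k))
    (hS : ∀ g : GL (Fin 3) k, g ∈ S ↔ ∃ c : kˣ,
        aeval (fun i => ∑ j : Fin 3, C ((g : Matrix (Fin 3) (Fin 3) k) i j) * X j)
            (X 1 ^ 2 * X 2 + X 0 ^ 2 * X 1 : MvPolynomial (Fin 3) k)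
          = (c : k) • (X 1 ^ 2 * X 2 + X 0 ^ 2 * X 1 : MvPolynomial (Fin 3) k))
    (Z : Subgroup (GL (Fin 3) k))
    (hZ : ∀ g : GL (Fin 3) k, g ∈ Z ↔ ∃ c : kˣ,
        (g : Matrix (Fin 3) (Fin 3) k) = (c : k) • (1 : Matrix (Fin 3) (Fin 3) k))
    [(Z.subgroupOf S).Normal] :
    Nonempty ((S ⧸ Z.subgroupOf S) ≃* (k ≃ᵃ[k] k)) := by
  classical
  have hdetne : ∀ u : GL (Fin 3) k, ((u : Matrix (Fin 3) (Fin 3) k)).det ≠ 0 := fun u =>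
    ((Matrix.isUnit_iff_isUnit_det _).mp u.isUnit).ne_zero
  have cls : ∀ g : S, ∀ M : Matrix (Fin 3) (Fin 3) k,
      M = ((g : GL (Fin 3) k) : Matrix (Fin 3) (Fin 3) k) →
      M 1 0 = 0 ∧ M 1 2 = 0 ∧ M 0 2 = 0 ∧ M 1 1 ≠ 0 ∧ M 0 0 ≠ 0 ∧
      M 1 1 * M 2 0 = -(2 * (M 0 0 * M 0 1)) ∧ M 1 1 * M 2 1 = -(M 0 1 ^ 2) ∧
      M 1 1 * M 2 2 = M 0 0 ^ 2 ∧ ∃ c : k, c ≠ 0 ∧ M 0 0 ^ 2 * M 1 1 = c := by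
    rintro g M rfl
    obtain ⟨c, hc⟩ := (hS g).mp g.2
    obtain ⟨a1, a2, a3, a4, a5, a6, a7, a8, a9⟩ :=
      stmt15_classify ((g : GL (Fin 3) k) : Matrix (Fin 3) (Fin 3) k) (hdetne _) (c : k)
        c.ne_zero hc
    exact ⟨a1, a2, a3, a4, a5, a6, a7, a8, (c : k), c.ne_zero, a9⟩
  let Mof : S → Matrix (Fin 3) (Fin 3) k := fun g => ((g : GL (Fin 3) k) : Matrix (Fin 3) (Fin 3) k)
  have hMof : ∀ g : S, Mof g = ((g : GL (Fin 3) k) : Matrix (Fin 3) (Fin 3) k) := fun _ => rfl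
  let Φ : S →* (k ≃ᵃ[k] k) :=
  { toFun := fun g => stmt15Aff
      (Units.mk0 (Mof g 0 0 / Mof g 1 1)
        (div_ne_zero (cls g _ (hMof g)).2.2.2.2.1 (cls g _ (hMof g)).2.2.2.1))
      (Mof g 0 1 / Mof g 1 1)
    map_one' := by
      ext x
      rw [stmt15Aff_apply, Units.val_mk0]
      have h0 : Mof (1 : S) = (1 : Matrix (Fin 3) (Fin 3) k) := by
        rw [hMof]; norm_num
      rw [h0]
      norm_num [Matrix.one_apply]
    map_mul' := by
      intro g g'
      obtain ⟨hg10, hg12, hg02, hgq, hgp, -, -, -, -⟩ := cls g _ (hMof g)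
      obtain ⟨hg10', hg12', hg02', hgq', hgp', -, -, -, -⟩ := cls g' _ (hMof g')
      have hprod : Mof (g * g') = Mof g * Mof g' := by
        rw [hMof, hMof, hMof]; push_cast; rfl
      ext x
      rw [AffineEquiv.coe_mul, Function.comp_apply]
      rw [stmt15Aff_apply, stmt15Aff_apply, stmt15Aff_apply, Units.val_mk0, Units.val_mk0,
        Units.val_mk0, hprod]
      simp only [Matrix.mul_apply, Fin.sum_univ_three]
      rw [hg10', hg10, hg02, hg12]
      field_simp
      ring }
  have hΦ : ∀ (g : S) (x : k),
      Φ g x = Mof g 0 1 / Mof g 1 1 + (Mof g 0 0 / Mof g 1 1) * x := by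
    intro g x
    show stmt15Aff _ _ x = _
    rw [stmt15Aff_apply, Units.val_mk0]
  have hsurj : Function.Surjective Φ := by
    intro e
    obtain ⟨a, b, rfl⟩ := stmt15Aff_surj e
    set A : Matrix (Fin 3) (Fin 3) k :=
      !![(a : k), b, 0; 0, 1, 0; -(2 * ((a : k) * b)), -(b ^ 2), (a : k) ^ 2] with hA
    have hdetA : A.det ≠ 0 := by
      rw [hA, Matrix.det_fin_three]
      simp [Matrix.cons_val_two, Matrix.vecHead, Matrix.vecTail]
    set gU : GL (Fin 3) k := Matrix.GeneralLinearGroup.mkOfDetNeZero A hdetA with hgU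
    have hgUA : (gU : Matrix (Fin 3) (Fin 3) k) = A := rfl
    have hmem : gU ∈ S := by
      rw [hS]
      refine ⟨Units.mk0 ((a : k) ^ 2) (pow_ne_zero 2 a.ne_zero), ?_⟩
      rw [hgUA, smul_eq_C_mul, Units.val_mk0, hA]
      simp only [map_add, map_mul, map_pow, aeval_X]
      simp only [Fin.sum_univ_three]
      norm_num [Matrix.cons_val_zero, Matrix.cons_val_one, Matrix.head_cons, Matrix.cons_val_two, Matrix.vecHead, Matrix.vecTail]
      simp only [map_neg, map_mul, map_pow, map_ofNat, map_one]
      ring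
    refine ⟨⟨gU, hmem⟩, ?_⟩
    refine AffineEquiv.ext fun x => (hΦ ⟨gU, hmem⟩ x).trans ?_
    have h00 : Mof ⟨gU, hmem⟩ = A := hgUA
    rw [h00, hA, stmt15Aff_apply]
    norm_num [Matrix.cons_val_zero, Matrix.cons_val_one, Matrix.head_cons]
  have hker : Z.subgroupOf S = Φ.ker := by
    ext g
    rw [Subgroup.mem_subgroupOf, MonoidHom.mem_ker, hZ]
    constructor
    · rintro ⟨c, hc⟩
      have hM : Mof g = (c : k) • (1 : Matrix (Fin 3) (Fin 3) k) := hc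
      ext x
      rw [hΦ, hM]
      simp only [Matrix.smul_apply, Matrix.one_apply, smul_eq_mul]
      norm_num [c.ne_zero]
    · intro h
      obtain ⟨hg10, hg12, hg02, hgq, hgp, hr0, hr1, hr2, -⟩ := cls g _ (hMof g)
      have h0 := DFunLike.congr_fun h (0 : k)
      have h1 := DFunLike.congr_fun h (1 : k)
      rw [hΦ] at h0
      rw [hΦ] at h1
      simp only [AffineEquiv.coe_one, id_eq, mul_zero, add_zero, mul_one] at h0 h1
      have hb : Mof g 0 1 = 0 := by
        rcases div_eq_zero_iff.mp h0 with h | h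
        · exact h
        · exact absurd h hgq
      have ha : Mof g 0 0 = Mof g 1 1 := by
        rw [hb] at h1
        rw [zero_div, zero_add] at h1
        field_simp at h1
        exact h1
      refine ⟨Units.mk0 (Mof g 1 1) hgq, ?_⟩
      have h20 : Mof g 2 0 = 0 := mul_left_cancel₀ hgq (by rw [hr0, hb]; ring)
      have h21 : Mof g 2 1 = 0 := mul_left_cancel₀ hgq (by rw [hr1, hb]; ring)
      have h22 : Mof g 2 2 = Mof g 1 1 := mul_left_cancel₀ hgq (by rw [hr2, ha]; ring)
      show Mof g = _
      ext i j
      fin_cases i <;> fin_cases j <;>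
        simp only [Matrix.smul_apply, Matrix.one_apply, smul_eq_mul, Units.val_mk0] <;>
        norm_num
      · exact ha
      · exact hb
      · exact hg02
      · exact hg10
      · exact hg12
      · exact h20
      · exact h21
      · exact h22
  exact ⟨(QuotientGroup.quotientMulEquivOfEq hker).trans
    (QuotientGroup.quotientKerEquivOfSurjective Φ hsurj)⟩
end
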